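/- arXiv:2101.03390 — 8 statements merged into one kernel-verified Lean document; each statement's English description precedes it below -/
import Mathlib

section
/- For every natural number p and every real polynomial q of degree at most p, the bubble-weighted inverse inequality ∫_{-1}^{1} (1 - x^2) (q'(x))^2 dx ≤ p(p+1) ∫_{-1}^{1} (q(x))^2 dx holds, where q' denotes the derivative of q. -/
open Polynomial Finset

namespace BubbleAux

/-- `U n = (X^2-1)^n`. -/
noncomputable def U (n : ℕ) : Polynomial ℝ := (X ^ 2 - 1) ^ n

/-- (unnormalized) Legendre polynomial via Rodrigues. -/
noncomputable def V (n : ℕ) : Polynomial ℝ := derivative^[n] (U n)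

lemma step (n k : ℕ) :
    (X ^ 2 - 1) * derivative^[k + 1] (U n)
      = C (2 * (n : ℝ) - 2 * k) * (X * derivative^[k] (U n))
        + C ((k : ℝ) * (2 * n - k + 1)) * derivative^[k - 1] (U n) := by
  have hd : derivative (X ^ 2 - 1 : Polynomial ℝ) = 2 * X := by
    simp [derivative_X_pow, map_ofNat]
    norm_num
  induction k with
  | zero =>
    simp only [Nat.cast_zero, zero_add, Function.iterate_one, Function.iterate_zero, id_eq]
    have h := derivative_pow (X ^ 2 - 1 : Polynomial ℝ) n
    rcases n with _ | m
    · simp [U]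
    · simp only [U]
      rw [h, hd]
      push_cast
      try simp only [Nat.add_sub_cancel]
      simp only [map_add, map_mul, map_sub, map_one, map_zero, map_ofNat, C_1]
      ring
  | succ k ih =>
    have h := congrArg derivative ih
    simp only [derivative_mul, derivative_add, derivative_mul, derivative_C,
      derivative_X, ← Function.iterate_succ_apply' derivative, Nat.succ_eq_add_one] at h
    have hk : C ((k : ℝ) * (2 * n - k + 1)) * derivative^[k - 1 + 1] (U n)
        = C ((k : ℝ) * (2 * n - k + 1)) * derivative^[k] (U n) := by
      rcases k with _ | k
      · simp
      · norm_num
    rw [hk, hd] at h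
    simp only [Nat.add_sub_cancel]
    push_cast
    simp only [map_add, map_mul, map_sub, map_one, map_zero, map_ofNat, C_1] at h ⊢
    linear_combination h

/-- The Legendre differential equation / eigenfunction identity. -/
lemma eigen (n : ℕ) :
    derivative ((1 - X ^ 2) * derivative (V n)) = C (-((n : ℝ) * (n + 1))) * V n := by
  rcases n with _ | m
  · simp [V, U]
  · set n := m + 1 with hn
    have h := step n n
    have hVd : derivative (V n) = derivative^[n + 1] (U n) := by
      rw [V, ← Function.iterate_succ_apply' derivative]
    have hco : (2 * (n : ℝ) - 2 * n) = 0 := by ring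
    rw [hco, map_zero, zero_mul, zero_add] at h
    have h2 : (1 - X ^ 2 : Polynomial ℝ) * derivative (V n)
        = C (-((n : ℝ) * (2 * n - n + 1))) * derivative^[n - 1] (U n) := by
      rw [hVd]
      have hw : (1 - X ^ 2 : Polynomial ℝ) = -(X ^ 2 - 1) := by ring
      rw [hw, neg_mul, h, map_neg, neg_mul]
    rw [h2, derivative_C_mul, ← Function.iterate_succ_apply' derivative]
    have hnn : (n - 1).succ = n := by omega
    rw [hnn]
    simp only [V]
    congr 1
    congr 1
    ring

lemma natDegree_U (n : ℕ) : (U n).natDegree = n + n := by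
  rw [U, natDegree_pow]
  have h2 : (X ^ 2 - 1 : Polynomial ℝ).natDegree = 2 := by
    simpa using natDegree_X_pow_sub_C (n := 2) (r := (1 : ℝ))
  rw [h2]; omega

lemma coeff_V (n : ℕ) : (V n).coeff n = ((n + n).descFactorial n : ℝ) := by
  have hU : (U n).coeff (n + n) = 1 := by
    have hm : (U n).Monic := by
      apply Monic.pow
      simpa using monic_X_pow_sub_C (1 : ℝ) (n := 2) (by norm_num)
    rw [← natDegree_U]; exact hm.coeff_natDegree
  rw [V, coeff_iterate_derivative, hU]
  simp [nsmul_eq_mul]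

lemma coeff_V_ne_zero (n : ℕ) : (V n).coeff n ≠ 0 := by
  rw [coeff_V]
  have h : (n + n).descFactorial n ≠ 0 := by
    rw [Ne, Nat.descFactorial_eq_zero_iff_lt]; omega
  exact_mod_cast h

lemma natDegree_V_le (n : ℕ) : (V n).natDegree ≤ n := by
  have h := natDegree_iterate_derivative (U n) n
  rw [natDegree_U] at h
  rw [V]
  omega

lemma coeff_V_eq_zero {n m : ℕ} (h : n < m) : (V n).coeff m = 0 :=
  coeff_eq_zero_of_natDegree_lt (lt_of_le_of_lt (natDegree_V_le n) h)

/-- Every polynomial of degree ≤ p is a linear combination of `V 0, …, V p`. -/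
lemma repr : ∀ (p : ℕ) (q : Polynomial ℝ), q.natDegree ≤ p →
    ∃ c : ℕ → ℝ, q = ∑ k ∈ Finset.range (p + 1), C (c k) * V k := by
  intro p
  induction p with
  | zero =>
    intro q hq
    refine ⟨fun _ => q.coeff 0, ?_⟩
    have h : q = C (q.coeff 0) := (Polynomial.eq_C_of_natDegree_le_zero hq)
    simp [V, U, ← h]
  | succ p ih =>
    intro q hq
    set a : ℝ := q.coeff (p + 1) / (V (p + 1)).coeff (p + 1) with ha
    set r : Polynomial ℝ := q - C a * V (p + 1) with hr
    have hrd : r.natDegree ≤ p := by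
      rw [natDegree_le_iff_coeff_eq_zero]
      intro m hm
      rcases eq_or_lt_of_le (Nat.succ_le_of_lt hm) with h | h
      · rw [hr]
        simp only [coeff_sub, coeff_C_mul, ← h]
        rw [ha, div_mul_cancel₀ _ (coeff_V_ne_zero (p + 1))]
        ring
      · rw [hr]
        simp only [coeff_sub, coeff_C_mul]
        rw [coeff_eq_zero_of_natDegree_lt (lt_of_le_of_lt hq h),
          coeff_V_eq_zero h]
        ring
    obtain ⟨c, hc⟩ := ih r hrd
    refine ⟨fun k => if k = p + 1 then a else c k, ?_⟩
    rw [Finset.sum_range_succ]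
    have hsum : ∑ k ∈ Finset.range (p + 1), C (if k = p + 1 then a else c k) * V k
        = ∑ k ∈ Finset.range (p + 1), C (c k) * V k := by
      apply Finset.sum_congr rfl
      intro k hk
      have hne : k ≠ p + 1 := by
        have := Finset.mem_range.mp hk; omega
      rw [if_neg hne]
    have hlast : C (if p + 1 = p + 1 then a else c (p + 1)) * V (p + 1) = C a * V (p + 1) := by
      rw [if_pos rfl]
    rw [hsum, hlast, ← hc, hr]
    ring

/-- Integral of a polynomial over `(-1,1)`. -/
noncomputable def J (f : Polynomial ℝ) : ℝ := ∫ x in (-1 : ℝ)..1, f.eval x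

lemma integrable (f : Polynomial ℝ) :
    IntervalIntegrable (fun x => f.eval x) MeasureTheory.volume (-1 : ℝ) 1 :=
  (f.continuous_aeval).intervalIntegrable _ _

lemma J_add (f g : Polynomial ℝ) : J (f + g) = J f + J g := by
  unfold J
  simp only [eval_add]
  exact intervalIntegral.integral_add (integrable f) (integrable g)

lemma J_C_mul (a : ℝ) (f : Polynomial ℝ) : J (C a * f) = a * J f := by
  unfold J
  simp only [eval_mul, eval_C]
  exact intervalIntegral.integral_const_mul a _

lemma J_sum {s : Finset ℕ} (f : ℕ → Polynomial ℝ) :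
    J (∑ k ∈ s, f k) = ∑ k ∈ s, J (f k) := by
  unfold J
  simp only [eval_finset_sum]
  exact intervalIntegral.integral_finset_sum (fun k _ => integrable (f k))

lemma J_sq_nonneg (f : Polynomial ℝ) : 0 ≤ J (f * f) := by
  unfold J
  apply intervalIntegral.integral_nonneg (by norm_num : (-1 : ℝ) ≤ 1)
  intro x _
  simp only [eval_mul]
  exact mul_self_nonneg _

lemma ftc (f : Polynomial ℝ) : J (derivative f) = f.eval 1 - f.eval (-1) := by
  unfold J
  exact intervalIntegral.integral_eq_sub_of_hasDerivAt
    (fun x _ => f.hasDerivAt x) (integrable _)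

lemma ibp (f g : Polynomial ℝ) :
    J (derivative f * g) = (f * g).eval 1 - (f * g).eval (-1) - J (f * derivative g) := by
  have h := ftc (f * g)
  rw [derivative_mul, J_add] at h
  linarith

/-- Integration by parts with the bubble weight: no boundary terms. -/
lemma self_adj (f g : Polynomial ℝ) :
    J (derivative ((1 - X ^ 2) * derivative f) * g)
      = - J ((1 - X ^ 2) * derivative f * derivative g) := by
  have h := ibp ((1 - X ^ 2) * derivative f) g
  have h1 : (((1 - X ^ 2) * derivative f) * g).eval 1 = 0 := by simp
  have h2 : (((1 - X ^ 2) * derivative f) * g).eval (-1) = 0 := by simp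
  rw [h1, h2] at h
  linarith

lemma sym (f g : Polynomial ℝ) :
    J (derivative ((1 - X ^ 2) * derivative f) * g)
      = J (derivative ((1 - X ^ 2) * derivative g) * f) := by
  rw [self_adj, self_adj]
  congr 1
  ring

/-- Orthogonality of the Legendre polynomials. -/
lemma orth {j k : ℕ} (h : j ≠ k) : J (V j * V k) = 0 := by
  have hs := sym (V j) (V k)
  rw [eigen, eigen] at hs
  have hjk : J (C (-((k : ℝ) * (k + 1))) * V k * V j)
      = J (C (-((k : ℝ) * (k + 1))) * (V j * V k)) := by
    congr 1; ring
  rw [hjk, mul_assoc, J_C_mul, J_C_mul] at hs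
  have hne : -((j : ℝ) * (j + 1)) ≠ -((k : ℝ) * (k + 1)) := by
    rcases Nat.lt_or_ge j k with hlt | hge
    · have hjk2 : (j : ℝ) < k := by exact_mod_cast hlt
      have hj : (0 : ℝ) ≤ j := Nat.cast_nonneg j
      nlinarith
    · have hlt : k < j := by omega
      have hjk2 : (k : ℝ) < j := by exact_mod_cast hlt
      have hk : (0 : ℝ) ≤ k := Nat.cast_nonneg k
      nlinarith
  by_contra hJ
  exact hne (mul_right_cancel₀ hJ hs)

end BubbleAux

open BubbleAux Polynomial Finset in
/-- Bubble-weighted inverse inequality on the reference interval (-1,1):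
for any polynomial `q` of degree at most `p`,
`∫_{-1}^{1} (1 - x^2) (q'(x))^2 dx ≤ p(p+1) ∫_{-1}^{1} (q(x))^2 dx`. -/
theorem bubble_weighted_inverse_inequality (p : ℕ) (q : Polynomial ℝ)
    (hq : q.natDegree ≤ p) :
    ∫ x in (-1 : ℝ)..1, (1 - x ^ 2) * (q.derivative.eval x) ^ 2 ≤
      (p : ℝ) * (p + 1) * ∫ x in (-1 : ℝ)..1, (q.eval x) ^ 2 := by
  obtain ⟨c, hc⟩ := repr p q hq
  -- rewrite both integrals in terms of J
  have hLHS : (∫ x in (-1 : ℝ)..1, (1 - x ^ 2) * (q.derivative.eval x) ^ 2)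
      = J ((1 - X ^ 2) * derivative q * derivative q) := by
    unfold J
    apply intervalIntegral.integral_congr
    intro x _
    simp only [eval_mul, eval_sub, eval_pow, eval_one, eval_X]
    ring
  have hRHS : (∫ x in (-1 : ℝ)..1, (q.eval x) ^ 2) = J (q * q) := by
    unfold J
    apply intervalIntegral.integral_congr
    intro x _
    simp [eval_mul, sq]
  rw [hLHS, hRHS]
  -- J (V k * q) = c k * J (V k * V k)
  have hVq : ∀ k ∈ Finset.range (p + 1), J (V k * q) = c k * J (V k * V k) := by
    intro k hk
    have hexp : V k * q = ∑ j ∈ Finset.range (p + 1), C (c j) * (V k * V j) := by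
      rw [hc, Finset.mul_sum]
      apply Finset.sum_congr rfl
      intro j _
      ring
    rw [hexp, J_sum]
    rw [Finset.sum_eq_single k]
    · rw [J_C_mul]
    · intro j _ hj
      rw [J_C_mul]
      have hcomm : V k * V j = V j * V k := by ring
      rw [hcomm, orth hj, mul_zero]
    · intro hkk
      exact absurd hk hkk
  -- eigen expansion of derivative ((1-X^2) * derivative q)
  have hL : derivative ((1 - X ^ 2) * derivative q)
      = ∑ k ∈ Finset.range (p + 1), C (c k * (-((k : ℝ) * (k + 1)))) * V k := by
    rw [hc]
    rw [derivative_sum, Finset.mul_sum, derivative_sum]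
    apply Finset.sum_congr rfl
    intro k _
    rw [derivative_C_mul]
    have hcomm : (1 - X ^ 2 : Polynomial ℝ) * (C (c k) * derivative (V k))
        = C (c k) * ((1 - X ^ 2) * derivative (V k)) := by ring
    rw [hcomm, derivative_C_mul, eigen]
    rw [← mul_assoc, ← C_mul]
  -- the weighted Dirichlet integral
  have hB : J ((1 - X ^ 2) * derivative q * derivative q)
      = ∑ k ∈ Finset.range (p + 1), (c k) ^ 2 * ((k : ℝ) * (k + 1)) * J (V k * V k) := by
    have h0 := self_adj q q
    have h1 : J (derivative ((1 - X ^ 2) * derivative q) * q)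
        = ∑ k ∈ Finset.range (p + 1), (c k * (-((k : ℝ) * (k + 1)))) * (c k * J (V k * V k)) := by
      rw [hL, Finset.sum_mul, J_sum]
      apply Finset.sum_congr rfl
      intro k hk
      rw [mul_assoc, J_C_mul, hVq k hk]
    rw [h1] at h0
    have h2 := h0.symm
    rw [neg_eq_iff_eq_neg] at h2
    rw [h2, ← Finset.sum_neg_distrib]
    apply Finset.sum_congr rfl
    intro k _
    ring
  -- the L² norm
  have hN : J (q * q) = ∑ k ∈ Finset.range (p + 1), (c k) ^ 2 * J (V k * V k) := by
    have hexp : q * q = ∑ k ∈ Finset.range (p + 1), C (c k) * (V k * q) := by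
      have h1 : q * q = (∑ k ∈ Finset.range (p + 1), C (c k) * V k) * q := by rw [← hc]
      rw [h1, Finset.sum_mul]
      apply Finset.sum_congr rfl
      intro k _
      ring
    rw [hexp, J_sum]
    apply Finset.sum_congr rfl
    intro k hk
    rw [J_C_mul, hVq k hk]
    ring
  rw [hB, hN, Finset.mul_sum]
  apply Finset.sum_le_sum
  intro k hk
  have hk' : k ≤ p := by have := Finset.mem_range.mp hk; omega
  have h1 : ((k : ℝ) * (k + 1)) ≤ (p : ℝ) * (p + 1) := by
    have hkp : (k : ℝ) ≤ p := by exact_mod_cast hk'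
    nlinarith [Nat.cast_nonneg (α := ℝ) k]
  have h2 : 0 ≤ (c k) ^ 2 * J (V k * V k) :=
    mul_nonneg (sq_nonneg _) (J_sq_nonneg _)
  calc (c k) ^ 2 * ((k : ℝ) * (k + 1)) * J (V k * V k)
      = ((k : ℝ) * (k + 1)) * ((c k) ^ 2 * J (V k * V k)) := by ring
    _ ≤ ((p : ℝ) * (p + 1)) * ((c k) ^ 2 * J (V k * V k)) :=
        mul_le_mul_of_nonneg_right h1 h2
    _ = (p : ℝ) * (p + 1) * ((c k) ^ 2 * J (V k * V k)) := by ring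
end

section
/- Let a < b be real numbers, p a natural number, and q a real polynomial of degree at most p. Then the scaled bubble-weighted inverse inequality ∫_{a}^{b} (x - a)(b - x) (q'(x))^2 dx ≤ p(p+1) ∫_{a}^{b} (q(x))^2 dx holds, with a constant independent of the interval length b - a. -/
open Polynomial MeasureTheory intervalIntegral Finset

namespace BubbleAux

lemma pii (a b : ℝ) (P : ℝ[X]) : IntervalIntegrable (fun x => P.eval x) volume a b :=
  P.continuous.intervalIntegrable a b

/-- integral of a polynomial over a..b, as a linear map -/
noncomputable def IL (a b : ℝ) : ℝ[X] →ₗ[ℝ] ℝ where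
  toFun P := ∫ x in a..b, P.eval x
  map_add' P Q := by
    simp only [eval_add]
    exact integral_add (pii a b P) (pii a b Q)
  map_smul' c P := by
    simp only [eval_smul, smul_eq_mul, RingHom.id_apply]
    simpa [smul_eq_mul] using intervalIntegral.integral_smul c (fun x => P.eval x)

lemma IL_apply (a b : ℝ) (P : ℝ[X]) : IL a b P = ∫ x in a..b, P.eval x := rfl

lemma IL_deriv (a b : ℝ) (P : ℝ[X]) : IL a b (derivative P) = P.eval b - P.eval a := by
  have hdd : deriv (fun x => P.eval x) = fun x => (derivative P).eval x := by
    funext x; simp [Polynomial.deriv]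
  rw [IL_apply, show (fun x => (derivative P).eval x) = deriv (fun x => P.eval x) from hdd.symm]
  exact integral_deriv_eq_sub (fun x _ => P.differentiableAt) (by rw [hdd]; exact pii a b _)

/-- the bilinear form -/
noncomputable def B (a b : ℝ) (q r : ℝ[X]) : ℝ := IL a b (q * r)

lemma B_comm (a b : ℝ) (q r : ℝ[X]) : B a b q r = B a b r q := by rw [B, B, mul_comm]

lemma B_sub_left (a b : ℝ) (q₁ q₂ r : ℝ[X]) :
    B a b (q₁ - q₂) r = B a b q₁ r - B a b q₂ r := by
  rw [B, B, B, sub_mul, map_sub]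

lemma B_smul_left (a b : ℝ) (c : ℝ) (q r : ℝ[X]) : B a b (c • q) r = c * B a b q r := by
  rw [B, B, smul_mul_assoc, _root_.map_smul, smul_eq_mul]

lemma B_sum_left {ι : Type*} (a b : ℝ) (s : Finset ι) (f : ι → ℝ[X]) (r : ℝ[X]) :
    B a b (∑ i ∈ s, f i) r = ∑ i ∈ s, B a b (f i) r := by
  rw [B, Finset.sum_mul, map_sum]; rfl

lemma B_nonneg (a b : ℝ) (hab : a ≤ b) (q : ℝ[X]) : 0 ≤ B a b q q := by
  rw [B, IL_apply]
  exact intervalIntegral.integral_nonneg hab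
    (fun u _ => by simp only [eval_mul]; exact mul_self_nonneg _)

lemma B_pos (a b : ℝ) (hab : a < b) (q : ℝ[X]) (hq : q ≠ 0) : 0 < B a b q q := by
  obtain ⟨x₀, hx₀, hx₀r⟩ :=
    (Set.infinite_coe_iff.mp (Set.Ioo.infinite hab)).exists_notMem_finset q.roots.toFinset
  have hne : q.eval x₀ ≠ 0 := fun h =>
    hx₀r (Multiset.mem_toFinset.mpr ((Polynomial.mem_roots hq).mpr h))
  have : ∀ᶠ x in nhds x₀, q.eval x ≠ 0 := q.continuous.continuousAt.eventually_ne hne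
  obtain ⟨ε, hε, hball⟩ := Metric.eventually_nhds_iff.mp this
  set c := max a (x₀ - ε/2) with hc
  set d := min b (x₀ + ε/2) with hd
  have hx1 : a < x₀ := hx₀.1
  have hx2 : x₀ < b := hx₀.2
  have hcd : c < d :=
    max_lt (lt_min hab (by linarith)) (lt_min (by linarith) (by linarith))
  have hac : a ≤ c := le_max_left _ _
  have hdb : d ≤ b := min_le_left _ _
  have hmidpos : 0 < ∫ x in c..d, (q * q).eval x := by
    apply intervalIntegral_pos_of_pos_on (pii c d _) _ hcd
    intro x hx
    have hxball : dist x x₀ < ε := by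
      rw [Real.dist_eq, abs_lt]
      have h1 : x₀ - ε/2 ≤ c := le_max_right _ _
      have h2 : d ≤ x₀ + ε/2 := min_le_right _ _
      constructor <;> [linarith [hx.1]; linarith [hx.2]]
    simp only [eval_mul]
    exact mul_self_pos.mpr (hball hxball)
  have hsplit : ∫ x in a..b, (q * q).eval x =
      (∫ x in a..c, (q * q).eval x) + (∫ x in c..d, (q * q).eval x)
        + (∫ x in d..b, (q * q).eval x) := by
    rw [integral_add_adjacent_intervals (pii a c _) (pii c d _),
      integral_add_adjacent_intervals (pii a d _) (pii d b _)]
  have h1 : 0 ≤ ∫ x in a..c, (q * q).eval x :=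
    intervalIntegral.integral_nonneg hac
      (fun u _ => by simp only [eval_mul]; exact mul_self_nonneg _)
  have h2 : 0 ≤ ∫ x in d..b, (q * q).eval x :=
    intervalIntegral.integral_nonneg hdb
      (fun u _ => by simp only [eval_mul]; exact mul_self_nonneg _)
  rw [B, IL_apply]
  calc (0:ℝ) < _ := hmidpos
    _ ≤ _ := by rw [hsplit]; linarith

/-! ### The operator T -/

noncomputable def w (a b : ℝ) : ℝ[X] := (X - C a) * (C b - X)

noncomputable def T (a b : ℝ) (q : ℝ[X]) : ℝ[X] := -derivative (w a b * derivative q)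

lemma w_eval (a b x : ℝ) : (w a b).eval x = (x - a) * (b - x) := by simp [w]

lemma w_natDegree_le (a b : ℝ) : (w a b).natDegree ≤ 2 := by
  rw [w]
  refine natDegree_mul_le.trans ?_
  have h1 : (X - C a).natDegree ≤ 1 := by simp [natDegree_X_sub_C]
  have h2 : (C b - X).natDegree ≤ 1 := by
    rw [show (C b - X : ℝ[X]) = -(X - C b) by ring, natDegree_neg]
    simp [natDegree_X_sub_C]
  omega

lemma T_natDegree_le (a b : ℝ) (q : ℝ[X]) : (T a b q).natDegree ≤ q.natDegree := by
  by_cases hd : derivative q = 0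
  · simp [T, hd]
  · have hq1 : 1 ≤ q.natDegree := by
      by_contra h
      push_neg at h
      interval_cases hn : q.natDegree
      · exact hd (derivative_of_natDegree_zero hn)
    have h1 : (w a b * derivative q).natDegree ≤ q.natDegree + 1 := by
      refine natDegree_mul_le.trans ?_
      have := w_natDegree_le a b
      have := natDegree_derivative_le q
      omega
    rw [T, natDegree_neg]
    have := natDegree_derivative_le (w a b * derivative q)
    omega

lemma T_coeff_top (a b : ℝ) (q : ℝ[X]) (k : ℕ) (hk : 1 ≤ k) (hq : q.natDegree ≤ k) :
    (T a b q).coeff k = (k * (k + 1) : ℝ) * q.coeff k := by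
  have hw : w a b = -(X^2) + C (a+b) * X - C (a*b) := by
    rw [w]; ring_nf; simp [C_add, C_mul]; ring
  have hsplit : w a b * derivative q =
      -(X^2 * derivative q) + C (a+b) * (X * derivative q) - C (a*b) * derivative q := by
    rw [hw]; ring
  have hq'k : (derivative q).coeff k = 0 := by
    rw [coeff_derivative]
    have : q.coeff (k+1) = 0 := coeff_eq_zero_of_natDegree_lt (by omega)
    simp [this]
  have hq'k1 : (derivative q).coeff (k+1) = 0 := by
    rw [coeff_derivative]
    have : q.coeff (k+2) = 0 := coeff_eq_zero_of_natDegree_lt (by omega)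
    simp [this]
  have hX2 : (X^2 * derivative q : ℝ[X]).coeff (k+1) = (derivative q).coeff (k-1) := by
    rw [show k+1 = (k-1)+2 by omega, coeff_X_pow_mul]
  have hq'km : (derivative q).coeff (k-1) = q.coeff k * k := by
    rw [coeff_derivative, show (k-1)+1 = k by omega]
    push_cast [show ((k-1:ℕ):ℝ) = (k:ℝ) - 1 by push_cast [Nat.cast_sub hk]; ring]
    ring
  rw [T, coeff_neg, coeff_derivative, hsplit]
  rw [coeff_sub, coeff_add, coeff_neg, hX2, coeff_C_mul, coeff_X_mul, coeff_C_mul,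
    hq'k, hq'k1, hq'km]
  ring

lemma T_of_deriv_zero (a b : ℝ) (q : ℝ[X]) (hd : derivative q = 0) : T a b q = 0 := by
  simp [T, hd]

/-- integration by parts -/
lemma B_T (a b : ℝ) (q r : ℝ[X]) :
    B a b (T a b q) r = IL a b (w a b * derivative q * derivative r) := by
  have h0 : IL a b (derivative ((w a b * derivative q) * r)) = 0 := by
    rw [IL_deriv]
    simp [eval_mul, w_eval]
  rw [derivative_mul, map_add] at h0
  rw [B, T, neg_mul, map_neg]
  linarith [h0]

lemma B_T_symm (a b : ℝ) (q r : ℝ[X]) : B a b (T a b q) r = B a b (T a b r) q := by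
  rw [B_T, B_T, mul_right_comm]

lemma T_sum (a b : ℝ) (s : Finset ℕ) (c : ℕ → ℝ) (f : ℕ → ℝ[X]) :
    T a b (∑ k ∈ s, c k • f k) = ∑ k ∈ s, c k • T a b (f k) := by
  simp only [T, map_sum, _root_.map_smul, Finset.mul_sum, mul_smul_comm, smul_neg]
  rw [← Finset.sum_neg_distrib]


/-! ### Gram–Schmidt orthogonal polynomials -/

noncomputable def GS (a b : ℝ) : ℕ → ℝ[X]
  | k => X^k - ∑ j : Fin k,
      (B a b (X^k) (GS a b j) / B a b (GS a b j) (GS a b j)) • GS a b j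
  termination_by k => k
  decreasing_by exact j.isLt

lemma GS_def (a b : ℝ) (k : ℕ) :
    GS a b k = X^k - ∑ j : Fin k,
      (B a b (X^k) (GS a b j) / B a b (GS a b j) (GS a b j)) • GS a b j := by
  rw [GS]

lemma GS_natDegree_le (a b : ℝ) (k : ℕ) : (GS a b k).natDegree ≤ k := by
  induction k using Nat.strong_induction_on with
  | _ k ih =>
    rw [GS_def]
    refine (natDegree_sub_le _ _).trans (max_le (by simp [natDegree_X_pow]) ?_)
    refine natDegree_sum_le_of_forall_le _ _ (fun j _ => ?_)
    exact (natDegree_smul_le _ _).trans ((ih j j.isLt).trans (le_of_lt j.isLt))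

lemma GS_coeff_self (a b : ℝ) (k : ℕ) : (GS a b k).coeff k = 1 := by
  rw [GS_def, coeff_sub, coeff_X_pow, if_pos rfl, finset_sum_coeff]
  have : ∀ j : Fin k, ((B a b (X^k) (GS a b j) / B a b (GS a b j) (GS a b j))
      • GS a b j).coeff k = 0 := by
    intro j
    rw [coeff_smul, coeff_eq_zero_of_natDegree_lt ((GS_natDegree_le a b j).trans_lt j.isLt),
      smul_zero]
  simp [this]

lemma GS_ne_zero (a b : ℝ) (k : ℕ) : GS a b k ≠ 0 := by
  intro h
  have := GS_coeff_self a b k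
  rw [h] at this
  simp at this

lemma GS_N_ne_zero (a b : ℝ) (hab : a < b) (k : ℕ) :
    B a b (GS a b k) (GS a b k) ≠ 0 :=
  (B_pos a b hab _ (GS_ne_zero a b k)).ne'

lemma GS_zero (a b : ℝ) : GS a b 0 = 1 := by
  rw [GS_def]; simp

lemma GS_span (a b : ℝ) : ∀ n (q : ℝ[X]), q.natDegree ≤ n →
    ∃ c : ℕ → ℝ, q = ∑ k ∈ range (n+1), c k • GS a b k := by
  intro n
  induction n with
  | zero =>
    intro q hq
    refine ⟨fun _ => q.coeff 0, ?_⟩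
    rw [Finset.sum_range_one, GS_zero, smul_eq_C_mul, mul_one]
    exact (Polynomial.eq_C_of_natDegree_le_zero hq)
  | succ n ih =>
    intro q hq
    set r := q - q.coeff (n+1) • GS a b (n+1) with hr
    have hrd : r.natDegree ≤ n := by
      rw [natDegree_le_iff_coeff_eq_zero]
      intro N hN
      rw [hr, coeff_sub, coeff_smul, smul_eq_mul]
      rcases eq_or_lt_of_le (Nat.succ_le_of_lt hN) with hN' | hN'
      · rw [← hN', GS_coeff_self, mul_one, sub_self]
      · rw [coeff_eq_zero_of_natDegree_lt (lt_of_le_of_lt hq hN'),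
          coeff_eq_zero_of_natDegree_lt (lt_of_le_of_lt (GS_natDegree_le a b (n+1)) hN'),
          mul_zero, sub_self]
    obtain ⟨c, hc⟩ := ih r hrd
    refine ⟨fun k => if k = n+1 then q.coeff (n+1) else c k, ?_⟩
    rw [Finset.sum_range_succ]
    beta_reduce
    rw [if_pos rfl]
    have hsum : ∑ k ∈ range (n+1), (if k = n+1 then q.coeff (n+1) else c k) • GS a b k
        = ∑ k ∈ range (n+1), c k • GS a b k := by
      refine Finset.sum_congr rfl (fun k hk => ?_)
      rw [if_neg (by have := Finset.mem_range.mp hk; omega)]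
    rw [hsum, ← hc, hr]
    abel

lemma GS_ortho (a b : ℝ) (hab : a < b) :
    ∀ k, ∀ j < k, B a b (GS a b k) (GS a b j) = 0 := by
  intro k
  induction k using Nat.strong_induction_on with
  | _ k ih =>
    intro j hj
    rw [GS_def a b k, B_sub_left, B_sum_left]
    rw [Finset.sum_eq_single (⟨j, hj⟩ : Fin k)]
    · rw [B_smul_left, div_mul_cancel₀ _ (GS_N_ne_zero a b hab j), sub_self]
    · intro i _ hi
      rw [B_smul_left]
      have hiv : (i : ℕ) ≠ j := fun h => hi (Fin.ext h)
      rcases lt_or_gt_of_ne hiv with h | h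
      · rw [B_comm a b (GS a b (i:ℕ)) (GS a b j), ih j hj i h, mul_zero]
      · rw [ih i i.isLt j h, mul_zero]
    · intro h
      exact absurd (Finset.mem_univ _) h

lemma GS_ortho_poly (a b : ℝ) (hab : a < b) (k : ℕ) (q : ℝ[X])
    (hq : q.natDegree < k) : B a b q (GS a b k) = 0 := by
  obtain ⟨c, hc⟩ := GS_span a b (k-1) q (by omega)
  rw [hc, B_sum_left]
  refine Finset.sum_eq_zero (fun j hj => ?_)
  rw [B_smul_left, B_comm, GS_ortho a b hab k j (by have := Finset.mem_range.mp hj; omega),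
    mul_zero]

lemma GS_eigen (a b : ℝ) (hab : a < b) (k : ℕ) :
    T a b (GS a b k) = ((k : ℝ) * (k + 1)) • GS a b k := by
  rcases Nat.eq_zero_or_pos k with hk | hk
  · subst hk
    rw [GS_zero, T_of_deriv_zero a b 1 derivative_one]
    simp
  · set D := T a b (GS a b k) - ((k : ℝ) * (k + 1)) • GS a b k with hD
    have hDdeg : D.natDegree < k := by
      have : D.natDegree ≤ k - 1 := by
        rw [natDegree_le_iff_coeff_eq_zero]
        intro N hN
        have hNk : k ≤ N := by omega
        rw [hD, coeff_sub, coeff_smul, smul_eq_mul]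
        rcases eq_or_lt_of_le hNk with hN' | hN'
        · rw [← hN', T_coeff_top a b _ k hk (GS_natDegree_le a b k), sub_self]
        · rw [coeff_eq_zero_of_natDegree_lt (lt_of_le_of_lt ((T_natDegree_le a b _).trans
            (GS_natDegree_le a b k)) hN'),
            coeff_eq_zero_of_natDegree_lt (lt_of_le_of_lt (GS_natDegree_le a b k) hN'),
            mul_zero, sub_self]
      omega
    have hBDD : B a b D D = 0 := by
      have h1 : B a b (T a b (GS a b k)) D = 0 := by
        rw [B_T_symm]
        exact GS_ortho_poly a b hab k (T a b D) (lt_of_le_of_lt (T_natDegree_le a b D) hDdeg)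
      have h2 : B a b (GS a b k) D = 0 := by
        rw [B_comm]
        exact GS_ortho_poly a b hab k D hDdeg
      rw [hD] at h1 h2 ⊢
      rw [B_sub_left, B_smul_left, h1, h2]  -- careful: h1 h2 have D rewritten
      ring
    have hD0 : D = 0 := by
      by_contra h
      exact (B_pos a b hab D h).ne' hBDD
    rw [hD] at hD0
    exact sub_eq_zero.mp hD0

end BubbleAux

open BubbleAux in
/-- Scaled bubble-weighted inverse inequality on (a,b):
for any polynomial `q` of degree at most `p`,
`∫_{a}^{b} (x-a)(b-x) (q'(x))^2 dx ≤ p(p+1) ∫_{a}^{b} (q(x))^2 dx`,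
with constant independent of the interval length. -/
theorem bubble_weighted_inverse_inequality_scaled (a b : ℝ) (hab : a < b)
    (p : ℕ) (q : Polynomial ℝ) (hq : q.natDegree ≤ p) :
    ∫ x in a..b, (x - a) * (b - x) * (q.derivative.eval x) ^ 2 ≤
      (p : ℝ) * (p + 1) * ∫ x in a..b, (q.eval x) ^ 2 := by
  obtain ⟨c, hc⟩ := GS_span a b p q hq
  have hpair : ∀ k ∈ range (p+1), B a b q (GS a b k)
      = c k * B a b (GS a b k) (GS a b k) := by
    intro k hk
    rw [hc, B_sum_left, Finset.sum_eq_single k]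
    · rw [B_smul_left]
    · intro j _ hjk
      rw [B_smul_left]
      rcases lt_or_gt_of_ne hjk with h | h
      · rw [B_comm a b (GS a b j) (GS a b k), GS_ortho a b hab k j h, mul_zero]
      · rw [GS_ortho a b hab j k h, mul_zero]
    · intro h; exact absurd hk h
  have hRHS : (∫ x in a..b, (q.eval x)^2) = B a b q q := by
    rw [B, IL_apply]
    apply intervalIntegral.integral_congr
    intro x _
    simp only [eval_mul, sq]
  have hBqq : B a b q q
      = ∑ k ∈ range (p+1), c k * (c k * B a b (GS a b k) (GS a b k)) := by
    nth_rewrite 1 [hc]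
    rw [B_sum_left]
    refine Finset.sum_congr rfl (fun k hk => ?_)
    rw [B_smul_left, B_comm a b (GS a b k) q, hpair k hk]
  have hLHS : (∫ x in a..b, (x - a) * (b - x) * (q.derivative.eval x) ^ 2)
      = B a b (T a b q) q := by
    rw [B_T, IL_apply]
    refine (intervalIntegral.integral_congr ?_).symm
    intro x _
    simp only [eval_mul, w_eval]
    ring
  have hTq : T a b q = ∑ k ∈ range (p+1), (c k * ((k:ℝ)*(k+1))) • GS a b k := by
    nth_rewrite 1 [hc]
    rw [T_sum]
    refine Finset.sum_congr rfl (fun k _ => ?_)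
    rw [GS_eigen a b hab k, smul_smul]
  have hBTq : B a b (T a b q) q
      = ∑ k ∈ range (p+1), (c k * ((k:ℝ)*(k+1))) * (c k * B a b (GS a b k) (GS a b k)) := by
    rw [hTq, B_sum_left]
    refine Finset.sum_congr rfl (fun k hk => ?_)
    rw [B_smul_left, B_comm a b (GS a b k) q, hpair k hk]
  rw [hLHS, hRHS, hBqq, hBTq, Finset.mul_sum]
  refine Finset.sum_le_sum (fun k hk => ?_)
  have hkp : (k:ℝ) ≤ p := Nat.cast_le.mpr (by have := Finset.mem_range.mp hk; omega)
  have hk0 : (0:ℝ) ≤ k := Nat.cast_nonneg k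
  have hNk : 0 ≤ B a b (GS a b k) (GS a b k) := B_nonneg a b hab.le _
  have hfac : 0 ≤ c k * (c k * B a b (GS a b k) (GS a b k)) := by
    have h : c k * (c k * B a b (GS a b k) (GS a b k))
        = (c k)^2 * B a b (GS a b k) (GS a b k) := by ring
    rw [h]; positivity
  nlinarith [mul_le_mul_of_nonneg_right (show (k:ℝ)*(k+1) ≤ (p:ℝ)*((p:ℝ)+1) by nlinarith) hfac]
end

section
/- There exists a constant C > 0 such that for every natural number p and every real polynomial q of degree at most p, the L²-inverse (Markov-type) estimate ‖q'‖_{L²(-1,1)} ≤ C (p+1)^2 ‖q‖_{L²(-1,1)} holds, i.e. ∫_{-1}^{1} (q'(x))^2 dx ≤ C^2 (p+1)^4 ∫_{-1}^{1} (q(x))^2 dx. -/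
open Polynomial MeasureTheory intervalIntegral Finset

namespace MarkovL2

noncomputable def W (n : ℕ) : ℝ[X] := ((X : ℝ[X]) ^ 2 - 1) ^ n
noncomputable def R (n : ℕ) : ℝ[X] := derivative^[n] (W n)
noncomputable def ip (u v : ℝ[X]) : ℝ := ∫ x in (-1:ℝ)..1, u.eval x * v.eval x

lemma intble (u v : ℝ[X]) : IntervalIntegrable (fun x => u.eval x * v.eval x) volume (-1:ℝ) 1 :=
  (u.continuous_aeval.mul v.continuous_aeval).intervalIntegrable _ _

lemma ip_comm (u v : ℝ[X]) : ip u v = ip v u := by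
  simp only [ip, mul_comm]

lemma ip_self_nonneg (u : ℝ[X]) : 0 ≤ ip u u := by
  apply intervalIntegral.integral_nonneg (by norm_num)
  intro x _; exact mul_self_nonneg _

/-- Integration by parts for polynomials on `[-1,1]`. -/
lemma ipp (u v : ℝ[X]) :
    ip (derivative u) v
      = u.eval 1 * v.eval 1 - u.eval (-1) * v.eval (-1) - ip u (derivative v) := by
  have h : ∫ x in (-1:ℝ)..1, (derivative (u * v)).eval x
      = (u * v).eval 1 - (u * v).eval (-1) := by
    apply integral_eq_sub_of_hasDerivAt (fun x _ => Polynomial.hasDerivAt _ x)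
    exact ((u*v).derivative.continuous_aeval).intervalIntegrable _ _
  rw [derivative_mul] at h
  have h2 : ∫ x in (-1:ℝ)..1, ((derivative u * v).eval x + (u * derivative v).eval x)
      = ip (derivative u) v + ip u (derivative v) := by
    rw [intervalIntegral.integral_add]
    · simp only [ip, eval_mul]
    · simpa only [eval_mul] using intble (derivative u) v
    · simpa only [eval_mul] using intble u (derivative v)
  simp only [eval_add] at h
  rw [h2] at h
  simp only [eval_mul] at h
  linarith

/-- If `(X - c)^m` divides `f`, then `(X - c)^(m-j)` divides the `j`-th derivative. -/
lemma dvd_iter (c : ℝ) (f : ℝ[X]) (m : ℕ) (hf : (X - C c) ^ m ∣ f) (j : ℕ) :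
    (X - C c) ^ (m - j) ∣ derivative^[j] f := by
  induction j generalizing f m with
  | zero => simpa using hf
  | succ j ih =>
    obtain ⟨g, rfl⟩ := hf
    rw [Function.iterate_succ_apply]
    have : (X - C c) ^ (m - 1) ∣ derivative ((X - C c) ^ m * g) := by
      rw [derivative_mul, derivative_pow]
      apply dvd_add
      · exact Dvd.dvd.mul_right (Dvd.dvd.mul_right (Dvd.dvd.mul_left (dvd_refl _) _) _) _
      · exact Dvd.dvd.mul_right (pow_dvd_pow _ (Nat.sub_le m 1)) _
    obtain ⟨g', hg'⟩ := this
    rw [hg']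
    have := ih ((X - C c) ^ (m-1) * g') (m-1) (Dvd.dvd.mul_right (dvd_refl _) _)
    have hsub : m - 1 - j = m - (j+1) := by omega
    rwa [hsub] at this

lemma W_factor (n : ℕ) : W n = (X - C (1:ℝ)) ^ n * (X - C (-1:ℝ)) ^ n := by
  rw [W, ← mul_pow]
  congr 1
  simp only [map_neg, map_one]
  ring

lemma eval_iter_W_one {n j : ℕ} (hj : j < n) : (derivative^[j] (W n)).eval 1 = 0 := by
  have h1 : (X - C (1:ℝ)) ^ n ∣ W n := by rw [W_factor]; exact Dvd.dvd.mul_right (dvd_refl _) _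
  have h2 := dvd_iter 1 (W n) n h1 j
  have h3 : (X - C (1:ℝ)) ∣ derivative^[j] (W n) :=
    dvd_trans (dvd_pow_self _ (by omega : n - j ≠ 0)) h2
  exact dvd_iff_isRoot.mp h3

lemma eval_iter_W_negone {n j : ℕ} (hj : j < n) : (derivative^[j] (W n)).eval (-1) = 0 := by
  have h1 : (X - C (-1:ℝ)) ^ n ∣ W n := by rw [W_factor]; exact Dvd.dvd.mul_left (dvd_refl _) _
  have h2 := dvd_iter (-1) (W n) n h1 j
  have h3 : (X - C (-1:ℝ)) ∣ derivative^[j] (W n) :=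
    dvd_trans (dvd_pow_self _ (by omega : n - j ≠ 0)) h2
  exact dvd_iff_isRoot.mp h3

/-- Iterated integration by parts against `W n`. -/
lemma shift (n : ℕ) (r : ℝ[X]) :
    ∀ j ≤ n, ip (R n) r = (-1:ℝ)^j * ip (derivative^[n-j] (W n)) (derivative^[j] r) := by
  intro j
  induction j with
  | zero => simp [R]
  | succ j ih =>
    intro hj
    rw [ih (by omega)]
    have hnj : n - j = (n - (j+1)) + 1 := by omega
    have hlt : n - (j+1) < n := by omega
    have : derivative^[n-j] (W n) = derivative (derivative^[n-(j+1)] (W n)) := by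
      rw [hnj, Function.iterate_succ_apply']
    rw [this, ipp, eval_iter_W_one hlt, eval_iter_W_negone hlt]
    rw [Function.iterate_succ_apply']
    ring

lemma orth_lower {n : ℕ} {r : ℝ[X]} (hr : r.natDegree < n) : ip (R n) r = 0 := by
  have := shift n r n le_rfl
  rw [Polynomial.iterate_derivative_eq_zero hr] at this
  simpa [ip] using this


noncomputable def I (n : ℕ) : ℝ := ∫ x in (-1:ℝ)..1, (1 - x^2)^n

lemma I_intble (n : ℕ) : IntervalIntegrable (fun x : ℝ => (1 - x^2)^n) volume (-1:ℝ) 1 := by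
  apply Continuous.intervalIntegrable; continuity

lemma I_pos (n : ℕ) : 0 < I n := by
  apply intervalIntegral_pos_of_pos_on (I_intble n) _ (by norm_num)
  intro x hx
  have h1 : x^2 < 1 := by nlinarith [hx.1, hx.2]
  have : (0:ℝ) < 1 - x^2 := by linarith
  positivity

lemma I_zero : I 0 = 2 := by simp [I]; norm_num

lemma I_rec (n : ℕ) : (2*(n:ℝ)+3) * I (n+1) = (2*(n:ℝ)+2) * I n := by
  have key : ∀ x : ℝ, HasDerivAt (fun x : ℝ => x * (1 - x^2)^(n+1))
      ((2*(n:ℝ)+3) * (1 - x^2)^(n+1) - (2*(n:ℝ)+2) * (1 - x^2)^n) x := by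
    intro x
    have hg : HasDerivAt (fun x : ℝ => 1 - x^2) (-(2*x)) x := by
      simpa using ((hasDerivAt_pow 2 x).const_sub 1)
    have hgp : HasDerivAt (fun x : ℝ => (1 - x^2)^(n+1))
        ((n+1 : ℕ) * (1 - x^2)^n * (-(2*x))) x := by
      simpa using hg.fun_pow (n+1)
    have : HasDerivAt (fun x : ℝ => x * (1 - x^2)^(n+1))
        (1 * (1 - x^2)^(n+1) + id x * ((n+1 : ℕ) * (1 - x^2)^n * (-(2*x)))) x :=
      (hasDerivAt_id x).fun_mul hgp
    convert this using 1
    simp only [id_eq] at this ⊢; rw [pow_succ]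
    push_cast
    ring
  have hint : ∫ x in (-1:ℝ)..1,
      ((2*(n:ℝ)+3) * (1 - x^2)^(n+1) - (2*(n:ℝ)+2) * (1 - x^2)^n)
      = (fun x : ℝ => x * (1 - x^2)^(n+1)) 1 - (fun x : ℝ => x * (1 - x^2)^(n+1)) (-1) := by
    apply integral_eq_sub_of_hasDerivAt (fun x _ => key x)
    apply Continuous.intervalIntegrable; continuity
  simp only at hint
  norm_num at hint
  rw [intervalIntegral.integral_sub ((I_intble (n+1)).const_mul _) ((I_intble n).const_mul _),
      intervalIntegral.integral_const_mul, intervalIntegral.integral_const_mul] at hint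
  have : (2*(n:ℝ)+3) * I (n+1) - (2*(n:ℝ)+2) * I n = 0 := by
    simpa [I] using hint
  linarith


lemma W_monic (n : ℕ) : (W n).Monic := by
  apply Polynomial.Monic.pow
  have : ((X:ℝ[X])^2 - 1) = X^2 - C 1 := by simp
  rw [this]
  exact monic_X_pow_sub_C 1 (by norm_num)

lemma W_natDegree (n : ℕ) : (W n).natDegree = 2*n := by
  rw [W]
  rw [Polynomial.Monic.natDegree_pow]
  · have : ((X:ℝ[X])^2 - 1) = X^2 - C 1 := by simp
    rw [this, natDegree_X_pow_sub_C]; ring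
  · have : ((X:ℝ[X])^2 - 1) = X^2 - C 1 := by simp
    rw [this]; exact monic_X_pow_sub_C 1 (by norm_num)

/-- The top iterated derivative of a monic polynomial of degree `m` is `m!`. -/
lemma iter_deriv_top {f : ℝ[X]} {m : ℕ} (hm : f.natDegree = m) (hf : f.Monic) :
    derivative^[m] f = C (m.factorial : ℝ) := by
  have hd : (derivative^[m] f).natDegree ≤ 0 := by
    have := natDegree_iterate_derivative f m
    omega
  rw [eq_C_of_natDegree_le_zero hd]
  congr 1
  rw [Polynomial.coeff_iterate_derivative]
  simp only [zero_add]
  rw [Nat.descFactorial_self]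
  have : f.coeff m = 1 := by rw [← hm]; exact hf.coeff_natDegree
  rw [this]
  simp

lemma eval_W (n : ℕ) (x : ℝ) : (W n).eval x = (x^2 - 1)^n := by simp [W]

lemma R_self (n : ℕ) : ip (R n) (R n) = ((2*n).factorial : ℝ) * I n := by
  have h := shift n (R n) n le_rfl
  have hWd : derivative^[n] (R n) = derivative^[2*n] (W n) := by
    rw [R, ← Function.iterate_add_apply]
    congr 1; omega
  have htop : derivative^[2*n] (W n) = C (((2*n).factorial:ℝ)) :=
    iter_deriv_top (W_natDegree n) (W_monic n)
  rw [hWd, htop] at h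
  simp only [Nat.sub_self, Function.iterate_zero_apply] at h
  have : ip (W n) (C (((2*n).factorial:ℝ))) = ((2*n).factorial:ℝ) * ∫ x in (-1:ℝ)..1, (x^2-1)^n := by
    simp only [ip, eval_C, eval_W]
    rw [← intervalIntegral.integral_const_mul]
    congr 1; ext x; ring
  rw [this] at h
  have hflip : ∫ x in (-1:ℝ)..1, (x^2-1)^n = (-1:ℝ)^n * I n := by
    rw [I, ← intervalIntegral.integral_const_mul]
    congr 1; ext x
    rw [← mul_pow]
    congr 1; ring
  rw [hflip] at h
  have hsq : (-1:ℝ)^n * (-1:ℝ)^n = 1 := by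
    rw [← pow_add, ← two_mul, pow_mul]; norm_num
  rw [h]
  linear_combination ((2*n).factorial:ℝ) * I n * hsq

lemma eval_iter_pow {c : ℝ} {n j : ℕ} (hj : j < n) :
    (derivative^[j] ((X - C c)^n)).eval c = 0 := by
  have h2 := dvd_iter c ((X - C c)^n) n (dvd_refl _) j
  have h3 : (X - C c) ∣ derivative^[j] ((X - C c)^n) :=
    dvd_trans (dvd_pow_self _ (by omega : n - j ≠ 0)) h2
  exact dvd_iff_isRoot.mp h3

lemma pow_monic (c : ℝ) (n : ℕ) : ((X - C c)^n).Monic := (monic_X_sub_C c).pow n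

lemma pow_natDegree (c : ℝ) (n : ℕ) : ((X - C c)^n).natDegree = n := by
  rw [(monic_X_sub_C c).natDegree_pow, natDegree_X_sub_C, mul_one]

lemma R_eval_one (n : ℕ) : (R n).eval 1 = 2^n * n.factorial := by
  rw [R, W_factor, Polynomial.iterate_derivative_mul]
  rw [eval_finset_sum]
  rw [Finset.sum_eq_single 0]
  · simp only [Nat.choose_zero_right, one_smul, Nat.sub_zero, Function.iterate_zero_apply]
    rw [eval_mul, iter_deriv_top (pow_natDegree 1 n) (pow_monic 1 n)]
    simp only [eval_C]
    rw [eval_pow, eval_sub, eval_X, eval_C]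
    norm_num
    ring
  · intro k hk hk0
    simp only [smul_mul_assoc, eval_smul, smul_eq_mul]
    have hkn : k ≤ n := Nat.lt_succ_iff.mp (Finset.mem_range.mp hk)
    have hlt : n - k < n := by omega
    rw [eval_mul, eval_iter_pow hlt]
    ring
  · intro h; simp at h

lemma R_eval_negone (n : ℕ) : (R n).eval (-1) = (-2)^n * n.factorial := by
  have hW : W n = (X - C (-1:ℝ))^n * (X - C (1:ℝ))^n := by rw [W_factor, mul_comm]
  rw [R, hW, Polynomial.iterate_derivative_mul, eval_finset_sum]
  rw [Finset.sum_eq_single 0]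
  · simp only [Nat.choose_zero_right, one_smul, Nat.sub_zero, Function.iterate_zero_apply]
    rw [eval_mul, iter_deriv_top (pow_natDegree (-1) n) (pow_monic (-1) n)]
    simp only [eval_C]
    rw [eval_pow, eval_sub, eval_X, eval_C]
    norm_num
    ring
  · intro k hk hk0
    simp only [smul_mul_assoc, eval_smul, smul_eq_mul]
    have hkn : k ≤ n := Nat.lt_succ_iff.mp (Finset.mem_range.mp hk)
    have hlt : n - k < n := by omega
    rw [eval_mul, eval_iter_pow hlt]
    ring
  · intro h; simp at h

lemma R_eval_sq (n : ℕ) : ((R n).eval (-1))^2 = ((R n).eval 1)^2 := by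
  rw [R_eval_one, R_eval_negone]
  rw [mul_pow, mul_pow, ← pow_mul, ← pow_mul, mul_comm n 2, pow_mul, pow_mul]
  norm_num

/-- Christoffel ratio: `2 * R_n(1)^2 = (2n+1) * ‖R_n‖²`. -/
lemma ratio (n : ℕ) : 2 * ((R n).eval 1)^2 = (2*(n:ℝ)+1) * ip (R n) (R n) := by
  rw [R_eval_one, R_self]
  induction n with
  | zero => simp [I_zero]
  | succ n ih =>
    have hrec := I_rec n
    have hfac : ((n+1).factorial : ℝ) = (n+1) * n.factorial := by
      rw [Nat.factorial_succ]; push_cast; ring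
    have hfac2 : ((2*(n+1)).factorial : ℝ) = (2*n+2) * ((2*n+1) * (2*n).factorial) := by
      have : 2*(n+1) = (2*n+1) + 1 := by ring
      rw [this, Nat.factorial_succ, Nat.factorial_succ]; push_cast; ring
    push_cast
    push_cast at ih
    rw [hfac, hfac2]
    linear_combination (4*((n:ℝ)+1)^2) * ih - (2*((n:ℝ)+1)*(2*(n:ℝ)+1)*((2*n).factorial:ℝ)) * hrec

lemma R_natDegree_le (n : ℕ) : (R n).natDegree ≤ n := by
  have h := natDegree_iterate_derivative (W n) n
  rw [W_natDegree] at h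
  rw [R]
  omega

lemma R_coeff_ne (n : ℕ) : (R n).coeff n ≠ 0 := by
  rw [R, Polynomial.coeff_iterate_derivative]
  have hW : (W n).coeff (n + n) = 1 := by
    have h2 : n + n = 2*n := by ring
    rw [h2, ← W_natDegree n]
    exact (W_monic n).coeff_natDegree
  rw [hW]
  simp only [nsmul_eq_mul, mul_one]
  have hne : (n+n).descFactorial n ≠ 0 := by
    rw [Ne, Nat.descFactorial_eq_zero_iff_lt]
    omega
  exact_mod_cast hne

lemma span (p : ℕ) : ∀ q : ℝ[X], q.natDegree ≤ p →
    ∃ a : ℕ → ℝ, q = ∑ n ∈ range (p+1), C (a n) * R n := by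
  induction p with
  | zero =>
    intro q hq
    refine ⟨fun _ => q.coeff 0, ?_⟩
    have hR0 : R 0 = 1 := by simp [R, W]
    rw [Finset.sum_range_one, hR0, mul_one]
    exact eq_C_of_natDegree_le_zero hq
  | succ p ih =>
    intro q hq
    set c := q.coeff (p+1) / (R (p+1)).coeff (p+1) with hc
    have h1 : (q - C c * R (p+1)).natDegree ≤ p := by
      rw [natDegree_le_iff_coeff_eq_zero]
      intro N hN
      rw [coeff_sub, coeff_C_mul]
      by_cases hNp : N = p+1
      · subst hNp
        rw [hc, div_mul_cancel₀ _ (R_coeff_ne (p+1))]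
        ring
      · have hqN : q.coeff N = 0 := coeff_eq_zero_of_natDegree_lt (by omega)
        have hRN : (R (p+1)).coeff N = 0 :=
          coeff_eq_zero_of_natDegree_lt (lt_of_le_of_lt (R_natDegree_le (p+1)) (by omega))
        rw [hqN, hRN]; ring
    obtain ⟨a, ha⟩ := ih _ h1
    refine ⟨fun n => if n = p+1 then c else a n, ?_⟩
    have hcongr : ∑ n ∈ range (p+1), C (if n = p+1 then c else a n) * R n
        = ∑ n ∈ range (p+1), C (a n) * R n := by
      apply Finset.sum_congr rfl
      intro n hn
      rw [if_neg (by have := Finset.mem_range.mp hn; omega)]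
    rw [Finset.sum_range_succ, hcongr, ← ha]
    simp only [reduceIte]
    ring

lemma ip_sum_left (s : Finset ℕ) (f : ℕ → ℝ[X]) (v : ℝ[X]) :
    ip (∑ n ∈ s, f n) v = ∑ n ∈ s, ip (f n) v := by
  simp only [ip, eval_finset_sum, Finset.sum_mul]
  rw [intervalIntegral.integral_finset_sum]
  intro i _
  exact intble _ _

lemma ip_C_mul (c : ℝ) (u v : ℝ[X]) : ip (C c * u) v = c * ip u v := by
  simp only [ip, eval_mul, eval_C, mul_assoc]
  rw [← intervalIntegral.integral_const_mul]

lemma ip_R_R {k n : ℕ} (h : k ≠ n) : ip (R k) (R n) = 0 := by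
  rcases lt_or_gt_of_ne h with hlt | hgt
  · rw [ip_comm]
    exact orth_lower (lt_of_le_of_lt (R_natDegree_le k) hlt)
  · exact orth_lower (lt_of_le_of_lt (R_natDegree_le n) hgt)

lemma ip_expand {m : ℕ} (a : ℕ → ℝ) (q : ℝ[X]) (hq : q = ∑ n ∈ range m, C (a n) * R n)
    {k : ℕ} (hk : k ∈ range m) : ip q (R k) = a k * ip (R k) (R k) := by
  rw [hq, ip_sum_left]
  rw [Finset.sum_eq_single k]
  · rw [ip_C_mul]
  · intro n _ hn
    rw [ip_C_mul, ip_R_R hn]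
    ring
  · intro h; exact absurd hk h

lemma parseval {m : ℕ} (a : ℕ → ℝ) (q : ℝ[X]) (hq : q = ∑ n ∈ range m, C (a n) * R n) :
    ip q q = ∑ n ∈ range m, (a n)^2 * ip (R n) (R n) := by
  have h1 : ip q q = ∑ n ∈ range m, a n * ip q (R n) := by
    nth_rewrite 1 [hq]
    rw [ip_sum_left]
    refine Finset.sum_congr rfl fun n _ => ?_
    rw [ip_C_mul, ip_comm]
  rw [h1]
  refine Finset.sum_congr rfl fun n hn => ?_
  rw [ip_expand a q hq hn]
  ring

lemma ip_add_left (u v w : ℝ[X]) : ip (u + v) w = ip u w + ip v w := by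
  simp only [ip, eval_add, add_mul]
  rw [intervalIntegral.integral_add (intble u w) (intble v w)]

/-- Cauchy–Schwarz for the `L²(-1,1)` pairing of polynomials. -/
lemma ip_sq_le (u v : ℝ[X]) : ip u v ^ 2 ≤ ip u u * ip v v := by
  have h : ∀ t : ℝ, 0 ≤ ip u u * (t*t) + (2 * ip u v) * t + ip v v := by
    intro t
    have h0 := ip_self_nonneg (C t * u + v)
    have e1 : ∀ w : ℝ[X], ip (C t * u + v) w = t * ip u w + ip v w := fun w => by
      rw [ip_add_left, ip_C_mul]
    have h2 : ip (C t * u + v) (C t * u + v)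
        = t * (t * ip u u + ip v u) + (t * ip u v + ip v v) := by
      rw [e1, ip_comm u (C t * u + v), e1 u, ip_comm v (C t * u + v), e1 v]
    rw [h2, ip_comm v u] at h0
    nlinarith [h0]
  have hd := discrim_le_zero h
  rw [discrim] at hd
  nlinarith [hd]

noncomputable def N (n : ℕ) : ℝ := ip (R n) (R n)

lemma N_pos (n : ℕ) : 0 < N n := by
  rw [N, R_self]
  have h1 := I_pos n
  have h2 := Nat.factorial_pos (2*n)
  positivity

lemma sum_odd (m : ℕ) : ∑ n ∈ range m, (2*(n:ℝ)+1) = (m:ℝ)^2 := by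
  induction m with
  | zero => simp
  | succ m ih => rw [Finset.sum_range_succ, ih]; push_cast; ring

lemma ratio' (n : ℕ) {x : ℝ} (hx : x = 1 ∨ x = -1) :
    2*((R n).eval x)^2 = (2*(n:ℝ)+1) * N n := by
  rw [N]
  rcases hx with h | h <;> subst h
  · exact ratio n
  · rw [R_eval_sq]; exact ratio n

/-- Christoffel-function bound at the endpoints. -/
lemma pt_bound {p : ℕ} {q : ℝ[X]} (hq : q.natDegree ≤ p) {x : ℝ} (hx : x = 1 ∨ x = -1) :
    (q.eval x)^2 ≤ ((p:ℝ)+1)^2/2 * ip q q := by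
  obtain ⟨a, ha⟩ := span p q hq
  have heval : q.eval x = ∑ n ∈ range (p+1), a n * (R n).eval x := by
    rw [ha, eval_finset_sum]
    exact Finset.sum_congr rfl fun n _ => by rw [eval_mul, eval_C]
  set f : ℕ → ℝ := fun n => a n * Real.sqrt (N n) with hf
  set g : ℕ → ℝ := fun n => (R n).eval x / Real.sqrt (N n) with hg
  have hs : ∀ n, Real.sqrt (N n) ≠ 0 := fun n => by
    have := Real.sqrt_pos.mpr (N_pos n); linarith
  have hfg : ∀ n, f n * g n = a n * (R n).eval x := fun n => by
    simp only [hf, hg]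
    field_simp [hs n]
  have hf2 : ∀ n, f n ^ 2 = a n ^ 2 * N n := fun n => by
    simp only [hf, mul_pow, Real.sq_sqrt (N_pos n).le]
  have hg2 : ∀ n, g n ^ 2 = (2*(n:ℝ)+1)/2 := fun n => by
    simp only [hg, div_pow, Real.sq_sqrt (N_pos n).le]
    have hr := ratio' n hx
    rw [div_eq_div_iff (N_pos n).ne' two_ne_zero]
    linarith
  have hcs := Finset.sum_mul_sq_le_sq_mul_sq (range (p+1)) f g
  have e1 : (∑ n ∈ range (p+1), f n * g n) = q.eval x := by
    rw [heval]; exact Finset.sum_congr rfl fun n _ => hfg n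
  have e2 : (∑ n ∈ range (p+1), f n ^ 2) = ip q q := by
    rw [parseval a q ha]
    exact Finset.sum_congr rfl fun n _ => by rw [hf2 n, N]
  have e3 : (∑ n ∈ range (p+1), g n ^ 2) = ((p:ℝ)+1)^2/2 := by
    rw [Finset.sum_congr rfl fun n _ => hg2 n, ← Finset.sum_div, sum_odd]
    push_cast; ring
  rw [e1, e2, e3] at hcs
  linarith [hcs]

lemma R_zero : R 0 = 1 := by simp [R, W]

lemma ip_zero_left (v : ℝ[X]) : ip 0 v = 0 := by simp [ip]

/-- Bound on the norm of the derivative of `R n`. -/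
lemma deriv_R_bound {n p : ℕ} (hn : n ≤ p) :
    ip (derivative (R n)) (derivative (R n)) ≤ 2*((p:ℝ)+1)^3 * N n := by
  rcases Nat.eq_zero_or_pos n with h0 | hpos
  · subst h0
    rw [R_zero]
    simp only [derivative_one, ip_zero_left]
    have := N_pos 0
    positivity
  · set D := ip (derivative (R n)) (derivative (R n)) with hD
    have hD0 : 0 ≤ D := ip_self_nonneg _
    have horth : ip (R n) (derivative (derivative (R n))) = 0 := by
      apply orth_lower
      have h1 := natDegree_derivative_le (derivative (R n))
      have h2 := natDegree_derivative_le (R n)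
      have h3 := R_natDegree_le n
      omega
    have key : D = (R n).eval 1 * (derivative (R n)).eval 1
        - (R n).eval (-1) * (derivative (R n)).eval (-1) := by
      rw [hD, ipp (R n) (derivative (R n)), horth]
      ring
    have hdeg : (derivative (R n)).natDegree ≤ p := by
      have h2 := natDegree_derivative_le (R n)
      have h3 := R_natDegree_le n
      omega
    have hb : ((derivative (R n)).eval 1)^2 ≤ ((p:ℝ)+1)^2/2 * D :=
      pt_bound hdeg (Or.inl rfl)
    have hd : ((derivative (R n)).eval (-1))^2 ≤ ((p:ℝ)+1)^2/2 * D :=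
      pt_bound hdeg (Or.inr rfl)
    have ha : 2*((R n).eval 1)^2 = (2*(n:ℝ)+1) * N n := ratio' n (Or.inl rfl)
    have hc : 2*((R n).eval (-1))^2 = (2*(n:ℝ)+1) * N n := ratio' n (Or.inr rfl)
    have hN := N_pos n
    have hnp : (n:ℝ) ≤ p := by exact_mod_cast hn
    have hA2 : ((R n).eval 1)^2 = (2*(n:ℝ)+1)*N n/2 := by linarith
    have hA2' : ((R n).eval (-1))^2 = (2*(n:ℝ)+1)*N n/2 := by linarith
    have t1 : ((R n).eval 1)^2 * ((derivative (R n)).eval 1)^2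
        ≤ ((2*(n:ℝ)+1)*N n/2) * (((p:ℝ)+1)^2/2*D) := by
      rw [← hA2]
      exact mul_le_mul_of_nonneg_left hb (sq_nonneg _)
    have t2 : ((R n).eval (-1))^2 * ((derivative (R n)).eval (-1))^2
        ≤ ((2*(n:ℝ)+1)*N n/2) * (((p:ℝ)+1)^2/2*D) := by
      rw [← hA2']
      exact mul_le_mul_of_nonneg_left hd (sq_nonneg _)
    have t3 : D^2 ≤ 2*(((R n).eval 1)^2 * ((derivative (R n)).eval 1)^2)
        + 2*(((R n).eval (-1))^2 * ((derivative (R n)).eval (-1))^2) := by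
      nlinarith [sq_nonneg ((R n).eval 1 * (derivative (R n)).eval 1
          + (R n).eval (-1) * (derivative (R n)).eval (-1)), key]
    have t4 : (2*(n:ℝ)+1)*(N n*((p:ℝ)+1)^2*D) ≤ (2*((p:ℝ)+1))*(N n*((p:ℝ)+1)^2*D) := by
      apply mul_le_mul_of_nonneg_right (by linarith) (by positivity)
    have hDD : D^2 ≤ 2*((p:ℝ)+1)^3 * N n * D := by linarith [t1, t2, t3, t4]
    rcases eq_or_lt_of_le hD0 with h | h
    · rw [← h]; positivity
    · exact le_of_mul_le_mul_right (by nlinarith [hDD]) h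

end MarkovL2

set_option maxHeartbeats 1000000 in
open MarkovL2 Polynomial Finset in
/-- Markov-type $L^2$ inverse estimate on the reference interval: there is a
constant `C > 0` such that for every `p` and every polynomial `q` of degree at
most `p`, `∫_{-1}^{1} (q'(x))^2 dx ≤ C^2 (p+1)^4 ∫_{-1}^{1} (q(x))^2 dx`. -/
theorem markov_L2_inverse_estimate :
    ∃ C : ℝ, 0 < C ∧ ∀ (p : ℕ) (q : Polynomial ℝ), q.natDegree ≤ p →
      ∫ x in (-1 : ℝ)..1, (q.derivative.eval x) ^ 2 ≤
        C ^ 2 * ((p : ℝ) + 1) ^ 4 * ∫ x in (-1 : ℝ)..1, (q.eval x) ^ 2 := by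
  refine ⟨3, by norm_num, ?_⟩
  intro p q hq
  have e1 : (∫ x in (-1:ℝ)..1, (q.derivative.eval x) ^ 2)
      = ip (derivative q) (derivative q) := by
    simp only [ip, ← pow_two]
  have e2 : (∫ x in (-1:ℝ)..1, (q.eval x) ^ 2) = ip q q := by
    simp only [ip, ← pow_two]
  set Q := ip q q with hQdef
  have hQ0 : 0 ≤ Q := ip_self_nonneg q
  have hq' : (derivative q).natDegree ≤ p := by
    have := natDegree_derivative_le q
    omega
  obtain ⟨a, ha⟩ := span p (derivative q) hq'
  have hpar : ip (derivative q) (derivative q) = ∑ n ∈ range (p+1), (a n)^2 * N n := by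
    rw [parseval a _ ha]
    exact Finset.sum_congr rfl fun n _ => by rw [N]
  have hterm : ∀ n ∈ range (p+1), (a n)^2 * N n ≤ 9*((p:ℝ)+1)^3 * Q := by
    intro n hn
    have hnp : n ≤ p := by have := Finset.mem_range.mp hn; omega
    have hnR : (n:ℝ) ≤ (p:ℝ) := by exact_mod_cast hnp
    have hN := N_pos n
    have hexp : ip (derivative q) (R n) = a n * N n := by
      rw [ip_expand a _ ha hn, N]
    have hipp := ipp q (R n)
    have h1 : (q.eval 1)^2 ≤ ((p:ℝ)+1)^2/2 * Q := pt_bound hq (Or.inl rfl)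
    have h2 : (q.eval (-1))^2 ≤ ((p:ℝ)+1)^2/2 * Q := pt_bound hq (Or.inr rfl)
    have h3 : ((R n).eval 1)^2 = (2*(n:ℝ)+1) * N n / 2 := by
      have := ratio' n (Or.inl rfl); linarith
    have h4 : ((R n).eval (-1))^2 = (2*(n:ℝ)+1) * N n / 2 := by
      have := ratio' n (Or.inr rfl); linarith
    have h5 : (ip q (derivative (R n)))^2
        ≤ Q * ip (derivative (R n)) (derivative (R n)) := ip_sq_le _ _
    have h6 : ip (derivative (R n)) (derivative (R n)) ≤ 2*((p:ℝ)+1)^3 * N n :=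
      deriv_R_bound hnp
    have u1 : (q.eval 1)^2 * ((R n).eval 1)^2
        ≤ (((p:ℝ)+1)^2/2 * Q) * (((p:ℝ)+1) * N n) := by
      apply mul_le_mul h1 _ (sq_nonneg _) (by positivity)
      rw [h3]
      nlinarith [hN]
    have u2 : (q.eval (-1))^2 * ((R n).eval (-1))^2
        ≤ (((p:ℝ)+1)^2/2 * Q) * (((p:ℝ)+1) * N n) := by
      apply mul_le_mul h2 _ (sq_nonneg _) (by positivity)
      rw [h4]
      nlinarith [hN]
    have u5 : (ip q (derivative (R n)))^2 ≤ Q * (2*((p:ℝ)+1)^3 * N n) :=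
      le_trans h5 (mul_le_mul_of_nonneg_left h6 hQ0)
    have hsq : (ip (derivative q) (R n))^2
        ≤ 3*((q.eval 1)^2 * ((R n).eval 1)^2)
          + 3*((q.eval (-1))^2 * ((R n).eval (-1))^2)
          + 3*(ip q (derivative (R n)))^2 := by
      rw [hipp]
      nlinarith [sq_nonneg (q.eval 1 * (R n).eval 1 + q.eval (-1) * (R n).eval (-1)),
        sq_nonneg (q.eval 1 * (R n).eval 1 + ip q (derivative (R n))),
        sq_nonneg (q.eval (-1) * (R n).eval (-1) - ip q (derivative (R n)))]
    have hfin : ((a n)^2 * N n) * N n ≤ (9*((p:ℝ)+1)^3 * Q) * N n := by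
      have : (a n * N n)^2 ≤ 9*((p:ℝ)+1)^3 * Q * N n := by
        rw [← hexp]
        calc (ip (derivative q) (R n))^2 ≤ _ := hsq
          _ ≤ 9*((p:ℝ)+1)^3 * Q * N n := by linarith [u1, u2, u5]
      nlinarith [this]
    exact le_of_mul_le_mul_right hfin hN
  have hsum := Finset.sum_le_sum hterm
  rw [Finset.sum_const, Finset.card_range, nsmul_eq_mul] at hsum
  rw [e1, e2, hpar]
  push_cast at hsum ⊢
  linarith [hsum]
end

section
/- There exists a constant C > 0 such that for every natural number p and every continuously differentiable function u : ℝ → ℝ on [-1, 1], if P is a real polynomial of degree at most p satisfying ∫_{-1}^{1} (u(x) - P(x)) r(x) dx = 0 for every real polynomial r of degree at most p (i.e. P is the L²(-1,1)-orthogonal projection of u onto polynomials of degree at most p), then |u(1) - P(1)| ≤ C (p+1)^{-1/2} ‖u'‖_{L²(-1,1)} and |u(-1) - P(-1)| ≤ C (p+1)^{-1/2} ‖u'‖_{L²(-1,1)}. -/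
open Polynomial MeasureTheory intervalIntegral Set

noncomputable def fpol (n : ℕ) : Polynomial ℝ := ((X - C 1) * (X + C 1))^n
noncomputable def Rle (n : ℕ) : Polynomial ℝ := derivative^[n] (fpol n)

lemma polyFTC (q : Polynomial ℝ) :
    ∫ x in (-1:ℝ)..1, (derivative q).eval x = q.eval 1 - q.eval (-1) := by
  refine integral_eq_sub_of_hasDerivAt (fun x _ => q.hasDerivAt x) ?_
  exact ((derivative q).continuous).intervalIntegrable _ _

lemma polyInt (q : Polynomial ℝ) : IntervalIntegrable (fun x => q.eval x) volume (-1:ℝ) 1 :=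
  (q.continuous).intervalIntegrable _ _

lemma polyIBP (s r : Polynomial ℝ) :
    ∫ x in (-1:ℝ)..1, (derivative s).eval x * r.eval x =
      s.eval 1 * r.eval 1 - s.eval (-1) * r.eval (-1)
        - ∫ x in (-1:ℝ)..1, s.eval x * (derivative r).eval x := by
  have h := polyFTC (s * r)
  rw [derivative_mul] at h
  have h2 : ∫ x in (-1:ℝ)..1, ((derivative s * r).eval x + (s * derivative r).eval x)
      = (∫ x in (-1:ℝ)..1, (derivative s).eval x * r.eval x)
        + ∫ x in (-1:ℝ)..1, s.eval x * (derivative r).eval x := by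
    rw [integral_add (polyInt _) (polyInt _)]
    simp [eval_mul]
  simp only [eval_add] at h
  rw [h2] at h
  simp only [eval_mul] at h
  linarith

lemma fac (n : ℕ) : ∀ j, j ≤ n → ∃ g h : Polynomial ℝ,
    derivative^[j] (fpol n) = (X - C 1)^(n-j) * g ∧
    derivative^[j] (fpol n) = (X + C 1)^(n-j) * h ∧
    g.eval 1 = (n.descFactorial j : ℝ) * 2^n ∧
    h.eval (-1) = (n.descFactorial j : ℝ) * (-2)^n := by
  intro j
  induction j with
  | zero =>
    intro _
    refine ⟨(X + C 1)^n, (X - C 1)^n, ?_, ?_, by norm_num, by norm_num⟩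
    · simp [fpol, mul_pow]
    · simp [fpol, mul_pow, mul_comm]
  | succ j ih =>
    intro hj
    obtain ⟨g, h, hg, hh, hg1, hh1⟩ := ih (Nat.le_of_succ_le hj)
    set m := n - (j+1) with hm
    have hnj : n - j = m + 1 := by omega
    have hcast : ((m : ℝ) + 1) = ((n - j : ℕ) : ℝ) := by rw [hnj]; push_cast; ring
    refine ⟨C ((m:ℝ)+1) * g + (X - C 1) * derivative g,
            C ((m:ℝ)+1) * h + (X + C 1) * derivative h, ?_, ?_, ?_, ?_⟩
    · rw [Function.iterate_succ_apply', hg, hnj, derivative_mul, derivative_pow]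
      simp only [derivative_sub, derivative_X, derivative_C, sub_zero, mul_one]
      push_cast
      ring
    · rw [Function.iterate_succ_apply', hh, hnj, derivative_mul, derivative_pow]
      simp only [derivative_add, derivative_X, derivative_C, add_zero, mul_one]
      push_cast
      ring
    · have : (n.descFactorial (j+1) : ℝ) = ((n - j : ℕ) : ℝ) * (n.descFactorial j : ℝ) := by
        rw [Nat.descFactorial_succ]; push_cast; ring
      simp [hg1, this, ← hcast]; ring
    · have : (n.descFactorial (j+1) : ℝ) = ((n - j : ℕ) : ℝ) * (n.descFactorial j : ℝ) := by
        rw [Nat.descFactorial_succ]; push_cast; ring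
      simp [hh1, this, ← hcast]; ring

lemma Rle_eval_one (n : ℕ) : (Rle n).eval 1 = (n.factorial : ℝ) * 2^n := by
  obtain ⟨g, h, hg, _, hg1, _⟩ := fac n n le_rfl
  rw [Rle, hg]
  simp [hg1, Nat.descFactorial_self]

lemma Rle_eval_neg_one (n : ℕ) : (Rle n).eval (-1) = (n.factorial : ℝ) * (-2)^n := by
  obtain ⟨g, h, _, hh, _, hh1⟩ := fac n n le_rfl
  rw [Rle, hh]
  simp [hh1, Nat.descFactorial_self]

lemma fpol_vanish (n j : ℕ) (hj : j < n) :
    (derivative^[j] (fpol n)).eval 1 = 0 ∧ (derivative^[j] (fpol n)).eval (-1) = 0 := by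
  obtain ⟨g, h, hg, hh, _, _⟩ := fac n j hj.le
  have hm : n - j ≠ 0 := by omega
  constructor
  · rw [hg]; simp [zero_pow hm]
  · rw [hh]; simp [zero_pow hm]

lemma Rle_natDegree (n : ℕ) : (Rle n).natDegree ≤ n := by
  have h1 : (fpol n).natDegree ≤ 2 * n := by
    have : ((X - C (1:ℝ)) * (X + C 1)).natDegree ≤ 2 := by
      apply le_trans (natDegree_mul_le)
      have a := natDegree_X_sub_C (1:ℝ)
      have b := natDegree_X_add_C (1:ℝ)
      omega
    calc (fpol n).natDegree ≤ n * ((X - C (1:ℝ)) * (X + C 1)).natDegree := natDegree_pow_le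
    _ ≤ n * 2 := by exact Nat.mul_le_mul_left n this
    _ = 2 * n := by ring
  calc (Rle n).natDegree ≤ (fpol n).natDegree - n := natDegree_iterate_derivative _ _
  _ ≤ 2 * n - n := by omega
  _ = n := by omega

-- iterated IBP: orthogonality
lemma Rle_IBP (n : ℕ) : ∀ m, m ≤ n → ∀ r : Polynomial ℝ,
    ∫ x in (-1:ℝ)..1, (derivative^[m] (fpol n)).eval x * r.eval x
      = (-1)^m * ∫ x in (-1:ℝ)..1, (fpol n).eval x * (derivative^[m] r).eval x := by
  intro m
  induction m with
  | zero => intro _ r; simp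
  | succ m ih =>
    intro hm r
    have hv := fpol_vanish n m (by omega)
    rw [Function.iterate_succ_apply', polyIBP, hv.1, hv.2]
    rw [ih (by omega) (derivative r)]
    rw [Function.iterate_succ_apply derivative m r]
    ring

lemma Rle_orth (n : ℕ) (r : Polynomial ℝ) (hr : r.natDegree < n) :
    ∫ x in (-1:ℝ)..1, (Rle n).eval x * r.eval x = 0 := by
  rw [Rle, Rle_IBP n n le_rfl r, Polynomial.iterate_derivative_eq_zero (by exact_mod_cast hr)]
  simp

noncomputable def In (n : ℕ) : ℝ := ∫ x in (-1:ℝ)..1, ((1 - X^2 : Polynomial ℝ)^n).eval x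

lemma In_zero : In 0 = 2 := by
  simp [In]; norm_num

lemma In_rec (n : ℕ) : (2*(n:ℝ)+3) * In (n+1) = (2*n+2) * In n := by
  have key : derivative (X * (1 - X^2 : Polynomial ℝ)^(n+1))
      = C (2*(n:ℝ)+3) * (1 - X^2)^(n+1) - C (2*(n:ℝ)+2) * (1 - X^2)^n := by
    have hd2 : derivative ((1:Polynomial ℝ) - X^2) = -(2 * X) := by
      simp [derivative_X_pow, map_ofNat]; norm_num
    rw [derivative_mul, derivative_pow, hd2, derivative_X]
    simp only [Nat.add_sub_cancel, map_add, map_mul, map_ofNat, C_eq_natCast, pow_succ]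
    push_cast
    ring
  have h := polyFTC (X * (1 - X^2 : Polynomial ℝ)^(n+1))
  rw [key] at h
  have h2 : ∫ x in (-1:ℝ)..1,
      (C (2*(n:ℝ)+3) * (1 - X^2 : Polynomial ℝ)^(n+1) - C (2*(n:ℝ)+2) * (1 - X^2)^n).eval x
      = (2*(n:ℝ)+3) * In (n+1) - (2*(n:ℝ)+2) * In n := by
    simp only [eval_sub, eval_mul, eval_C]
    rw [intervalIntegral.integral_sub ((polyInt _).const_mul _) ((polyInt _).const_mul _),
      intervalIntegral.integral_const_mul, intervalIntegral.integral_const_mul, In, In]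
  rw [h2] at h
  simp at h
  linarith

lemma In_formula (n : ℕ) :
    (2*(n:ℝ)+1) * ((2*n).factorial : ℝ) * In n = 2 * 4^n * ((n.factorial : ℝ))^2 := by
  induction n with
  | zero => simp [In_zero]
  | succ n ih =>
    have hrec := In_rec n
    have hf1 : ((2*(n+1)).factorial : ℝ) = (2*(n:ℝ)+2) * (2*(n:ℝ)+1) * ((2*n).factorial : ℝ) := by
      have : 2*(n+1) = (2*n+1) + 1 := by ring
      rw [this, Nat.factorial_succ, Nat.factorial_succ]
      push_cast; ring
    have hf2 : (((n+1).factorial : ℕ) : ℝ) = ((n:ℝ)+1) * (n.factorial : ℝ) := by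
      rw [Nat.factorial_succ]; push_cast; ring
    rw [hf1, hf2]
    push_cast
    linear_combination ((2*(n:ℝ)+2)*(2*(n:ℝ)+1)*((2*n).factorial:ℝ)) * hrec
      + (2*(n:ℝ)+2)^2 * ih

lemma fpol_natDegree (n : ℕ) : (fpol n).natDegree = 2*n := by
  have hb : ((X - C (1:ℝ)) * (X + C 1)).natDegree = 2 := by
    rw [natDegree_mul (X_sub_C_ne_zero 1) (X_add_C_ne_zero 1), natDegree_X_sub_C,
      natDegree_X_add_C]
  rw [fpol, natDegree_pow, hb]; ring

lemma fpol_coeff (n : ℕ) : (fpol n).coeff (2*n) = 1 := by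
  have hm : (fpol n).Monic := ((monic_X_sub_C (1:ℝ)).mul (monic_X_add_C 1)).pow n
  have := hm.coeff_natDegree
  rwa [fpol_natDegree] at this

lemma Rle_coeff (n : ℕ) : (Rle n).coeff n = ((2*n).descFactorial n : ℝ) := by
  rw [Rle, coeff_iterate_derivative]
  have h2 : n + n = 2*n := by ring
  rw [h2, fpol_coeff]; simp

lemma fpol_eq (n : ℕ) : fpol n = (-1:Polynomial ℝ)^n * (1 - X^2)^n := by
  rw [fpol, ← mul_pow]; congr 1; rw [C_1]; ring

lemma Rle_mul_Xn (n : ℕ) :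
    ∫ x in (-1:ℝ)..1, (Rle n).eval x * ((X:Polynomial ℝ)^n).eval x
      = (n.factorial : ℝ) * In n := by
  rw [Rle, Rle_IBP n n le_rfl (X^n), iterate_derivative_X_pow_eq_C_mul]
  simp only [Nat.sub_self, pow_zero, mul_one, Nat.descFactorial_self, eval_mul, eval_C,
    fpol_eq, eval_pow, eval_neg, eval_one, eval_sub, eval_X]
  have : ∀ x : ℝ, (-1:ℝ)^n * (1-x^2)^n * (n.factorial:ℝ)
      = ((-1:ℝ)^n * (n.factorial:ℝ)) * ((1 - X^2 : Polynomial ℝ)^n).eval x := by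
    intro x; simp [eval_pow]; ring
  rw [intervalIntegral.integral_congr (g := fun x => ((-1:ℝ)^n * (n.factorial:ℝ)) *
      ((1 - X^2 : Polynomial ℝ)^n).eval x) (fun x _ => this x),
    intervalIntegral.integral_const_mul, ← In]
  rw [← mul_assoc, ← mul_assoc, ← mul_pow]
  norm_num

lemma Rle_sq (n : ℕ) :
    ∫ x in (-1:ℝ)..1, (Rle n).eval x ^ 2
      = ((2*n).descFactorial n : ℝ) * ((n.factorial : ℝ) * In n) := by
  set c : ℝ := ((2*n).descFactorial n : ℝ) with hc
  set S : Polynomial ℝ := Rle n - C c * X^n with hS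
  have hdecomp : ∀ x : ℝ, (Rle n).eval x ^ 2
      = c * ((Rle n).eval x * ((X:Polynomial ℝ)^n).eval x) + (Rle n).eval x * S.eval x := by
    intro x; simp [hS, eval_pow]; ring
  have hSint : ∫ x in (-1:ℝ)..1, (Rle n).eval x * S.eval x = 0 := by
    rcases Nat.eq_zero_or_pos n with h0 | hpos
    · subst h0
      have : S = 0 := by
        simp [hS, hc, Rle, fpol]
      simp [this]
    · apply Rle_orth
      have h1 : S.natDegree ≤ n := by
        apply le_trans (natDegree_sub_le _ _)
        exact max_le (Rle_natDegree n)
          ((natDegree_C_mul_le c ((X:Polynomial ℝ)^n)).trans (natDegree_X_pow_le n))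
      have h2 : S.coeff n = 0 := by
        simp [hS, Rle_coeff, coeff_C_mul, coeff_X_pow, hc]
      have := natDegree_le_pred h1 h2
      omega
  calc ∫ x in (-1:ℝ)..1, (Rle n).eval x ^ 2
      = ∫ x in (-1:ℝ)..1, (c * ((Rle n).eval x * ((X:Polynomial ℝ)^n).eval x)
          + (Rle n).eval x * S.eval x) := by
        exact intervalIntegral.integral_congr (fun x _ => hdecomp x)
    _ = c * (∫ x in (-1:ℝ)..1, (Rle n).eval x * ((X:Polynomial ℝ)^n).eval x)
          + ∫ x in (-1:ℝ)..1, (Rle n).eval x * S.eval x := by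
        rw [intervalIntegral.integral_add, intervalIntegral.integral_const_mul]
        · exact ((polyInt (Rle n)).mul_continuousOn (by fun_prop)).const_mul _
        · exact (polyInt (Rle n)).mul_continuousOn (by fun_prop)
    _ = c * ((n.factorial : ℝ) * In n) := by rw [Rle_mul_Xn, hSint, add_zero]

lemma Rle_normsq (n : ℕ) :
    (2*(n:ℝ)+1) * ∫ x in (-1:ℝ)..1, (Rle n).eval x ^ 2
      = 2 * 4^n * ((n.factorial : ℝ))^2 := by
  rw [Rle_sq]
  have hd : (n.factorial : ℝ) * ((2*n).descFactorial n : ℝ) = ((2*n).factorial : ℝ) := by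
    rw [← Nat.cast_mul, ← Nat.factorial_mul_descFactorial (by omega : n ≤ 2*n)]
    norm_num [show 2*n - n = n by omega]
  have := In_formula n
  linear_combination ((2*(n:ℝ)+1) * In n) * hd + this

lemma contInt {f : ℝ → ℝ} (hf : ContinuousOn f (Icc (-1:ℝ) 1)) :
    IntervalIntegrable f volume (-1:ℝ) 1 := by
  apply ContinuousOn.intervalIntegrable
  rwa [uIcc_of_le (by norm_num : (-1:ℝ) ≤ 1)]

lemma cauchy_schwarz {f g : ℝ → ℝ} (hf : ContinuousOn f (Icc (-1:ℝ) 1))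
    (hg : ContinuousOn g (Icc (-1:ℝ) 1)) :
    (∫ x in (-1:ℝ)..1, f x * g x)^2 ≤
      (∫ x in (-1:ℝ)..1, f x ^2) * (∫ x in (-1:ℝ)..1, g x ^2) := by
  set a := ∫ x in (-1:ℝ)..1, f x ^2 with ha
  set b := ∫ x in (-1:ℝ)..1, f x * g x with hb
  set c := ∫ x in (-1:ℝ)..1, g x ^2 with hc
  have hint1 : IntervalIntegrable (fun x => f x ^ 2) volume (-1:ℝ) 1 :=
    contInt (by fun_prop)
  have hint2 : IntervalIntegrable (fun x => f x * g x) volume (-1:ℝ) 1 :=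
    contInt (hf.mul hg)
  have hint3 : IntervalIntegrable (fun x => g x ^ 2) volume (-1:ℝ) 1 :=
    contInt (by fun_prop)
  have key : ∀ t : ℝ, 0 ≤ a * (t * t) + (2*b) * t + c := by
    intro t
    have expand : ∀ x : ℝ, (t * f x + g x)^2
        = t^2 * f x ^2 + (2*t) * (f x * g x) + g x ^2 := by intro x; ring
    have h1 : ∫ x in (-1:ℝ)..1, (t * f x + g x)^2
        = t^2 * a + (2*t) * b + c := by
      rw [intervalIntegral.integral_congr (g := fun x =>
          t^2 * f x ^2 + (2*t) * (f x * g x) + g x ^2) (fun x _ => expand x)]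
      rw [intervalIntegral.integral_add ((hint1.const_mul _).add (hint2.const_mul _))
        hint3, intervalIntegral.integral_add (hint1.const_mul _) (hint2.const_mul _),
        intervalIntegral.integral_const_mul, intervalIntegral.integral_const_mul]
    have h2 : 0 ≤ ∫ x in (-1:ℝ)..1, (t * f x + g x)^2 :=
      intervalIntegral.integral_nonneg (by norm_num) (fun x _ => sq_nonneg _)
    rw [h1] at h2
    nlinarith [h2]
  have hd := discrim_le_zero key
  rw [discrim] at hd
  nlinarith [hd]

lemma uIBP {u : ℝ → ℝ} (hu : ContDiffOn ℝ 1 u (Icc (-1:ℝ) 1)) (q : Polynomial ℝ) :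
    ∫ x in (-1:ℝ)..1, (derivWithin u (Icc (-1:ℝ) 1) x * q.eval x
        + u x * (derivative q).eval x)
      = u 1 * q.eval 1 - u (-1) * q.eval (-1) := by
  have hu'c : ContinuousOn (derivWithin u (Icc (-1:ℝ) 1)) (Icc (-1:ℝ) 1) :=
    hu.continuousOn_derivWithin (uniqueDiffOn_Icc (by norm_num)) le_rfl
  refine intervalIntegral.integral_eq_sub_of_hasDerivAt_of_le
    (f := fun x => u x * q.eval x)
    (f' := fun x => derivWithin u (Icc (-1:ℝ) 1) x * q.eval x + u x * (derivative q).eval x)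
    (by norm_num) ?_ ?_ ?_
  · exact (hu.continuousOn.mul (q.continuous).continuousOn)
  · intro x hx
    have hmem : Icc (-1:ℝ) 1 ∈ nhds x := Icc_mem_nhds hx.1 hx.2
    have hdu : HasDerivAt u (derivWithin u (Icc (-1:ℝ) 1) x) x :=
      (((hu.differentiableOn one_ne_zero) x (Ioo_subset_Icc_self hx)).hasDerivWithinAt).hasDerivAt hmem
    exact hdu.mul (q.hasDerivAt x)
  · apply contInt
    exact (hu'c.mul (q.continuous).continuousOn).add
      (hu.continuousOn.mul ((derivative q).continuous).continuousOn)

lemma keyId {p : ℕ} {u : ℝ → ℝ} (hu : ContDiffOn ℝ 1 u (Icc (-1:ℝ) 1))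
    {P : Polynomial ℝ}
    (horth : ∀ r : Polynomial ℝ, r.natDegree ≤ p →
      ∫ x in (-1:ℝ)..1, (u x - P.eval x) * r.eval x = 0)
    {q : Polynomial ℝ} (hn1 : (derivative q).natDegree ≤ p)
    (hn2 : ∫ x in (-1:ℝ)..1, (derivative P).eval x * q.eval x = 0) :
    ∫ x in (-1:ℝ)..1, derivWithin u (Icc (-1:ℝ) 1) x * q.eval x
      = (u 1 - P.eval 1) * q.eval 1
        - (u (-1) - P.eval (-1)) * q.eval (-1) := by
  have hu'c : ContinuousOn (derivWithin u (Icc (-1:ℝ) 1)) (Icc (-1:ℝ) 1) :=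
    hu.continuousOn_derivWithin (uniqueDiffOn_Icc (by norm_num)) le_rfl
  have hA := uIBP hu q
  have hB := polyIBP P q
  have hO := horth (derivative q) hn1
  -- split hA
  have hsplit : ∫ x in (-1:ℝ)..1, (derivWithin u (Icc (-1:ℝ) 1) x * q.eval x
      + u x * (derivative q).eval x)
      = (∫ x in (-1:ℝ)..1, derivWithin u (Icc (-1:ℝ) 1) x * q.eval x)
        + ∫ x in (-1:ℝ)..1, u x * (derivative q).eval x := by
    apply intervalIntegral.integral_add
    · exact contInt (hu'c.mul (q.continuous).continuousOn)
    · exact contInt (hu.continuousOn.mul ((derivative q).continuous).continuousOn)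
  have hsplit2 : ∫ x in (-1:ℝ)..1, (u x - P.eval x) * (derivative q).eval x
      = (∫ x in (-1:ℝ)..1, u x * (derivative q).eval x)
        - ∫ x in (-1:ℝ)..1, P.eval x * (derivative q).eval x := by
    have heq : Set.EqOn (fun x => (u x - P.eval x) * (derivative q).eval x)
        (fun x => u x * (derivative q).eval x - P.eval x * (derivative q).eval x)
        (Set.uIcc (-1:ℝ) 1) := fun x _ => by simp; ring
    rw [intervalIntegral.integral_congr heq]
    exact intervalIntegral.integral_sub
      (contInt (hu.continuousOn.mul ((derivative q).continuous).continuousOn))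
      (contInt ((P.continuous.continuousOn).mul ((derivative q).continuous).continuousOn))
  rw [hsplit] at hA
  rw [hsplit2] at hO
  linear_combination hA - hO - hB + hn2

lemma Rle_sq_le (p n : ℕ) (hpn : p ≤ n) :
    ∫ x in (-1:ℝ)..1, (Rle n).eval x ^ 2
      ≤ ((n.factorial : ℝ) * 2^n)^2 * (2/((p:ℝ)+1)) := by
  have h1 := Rle_normsq n
  have hnn : 0 ≤ ∫ x in (-1:ℝ)..1, (Rle n).eval x ^ 2 :=
    intervalIntegral.integral_nonneg (by norm_num) (fun x _ => sq_nonneg _)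
  have hp1 : (0:ℝ) < (p:ℝ)+1 := by positivity
  have hcast : ((p:ℝ)+1) ≤ 2*(n:ℝ)+1 := by
    have : (p:ℝ) ≤ n := by exact_mod_cast hpn
    linarith
  have h4 : ((2:ℝ)^n)^2 = 4^n := by rw [← pow_mul, mul_comm, pow_mul]; norm_num
  rw [show ((n.factorial:ℝ) * 2^n)^2 * (2/((p:ℝ)+1))
    = (2*4^n*((n.factorial:ℝ))^2)/((p:ℝ)+1) by rw [← h4]; ring]
  rw [le_div_iff₀ hp1]
  nlinarith [h1, hnn, hcast, mul_le_mul_of_nonneg_left hcast hnn]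


/-- Boundary hp-approximation estimate for the L²-orthogonal projection on the
reference interval: there is `C > 0` such that for every `p` and every `u`
continuously differentiable on `[-1, 1]`, if `P` is the L²(-1,1)-orthogonal
projection of `u` onto polynomials of degree at most `p`, then
`|u(±1) - P(±1)| ≤ C (p+1)^{-1/2} ‖u'‖_{L²(-1,1)}`. -/
theorem boundary_hp_estimate_L2_projection :
    ∃ C : ℝ, 0 < C ∧ ∀ (p : ℕ) (u : ℝ → ℝ),
      ContDiffOn ℝ 1 u (Set.Icc (-1 : ℝ) 1) →
      ∀ P : Polynomial ℝ, P.natDegree ≤ p →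
      (∀ r : Polynomial ℝ, r.natDegree ≤ p →
        ∫ x in (-1 : ℝ)..1, (u x - P.eval x) * r.eval x = 0) →
      |u 1 - P.eval 1| ≤
          C / Real.sqrt ((p : ℝ) + 1) *
            Real.sqrt
              (∫ x in (-1 : ℝ)..1, (derivWithin u (Set.Icc (-1 : ℝ) 1) x) ^ 2) ∧
        |u (-1) - P.eval (-1)| ≤
          C / Real.sqrt ((p : ℝ) + 1) *
            Real.sqrt
              (∫ x in (-1 : ℝ)..1, (derivWithin u (Set.Icc (-1 : ℝ) 1) x) ^ 2) := by
  refine ⟨Real.sqrt 2, Real.sqrt_pos.mpr (by norm_num), ?_⟩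
  intro p u hu P hP horth
  have hu'c : ContinuousOn (derivWithin u (Icc (-1:ℝ) 1)) (Icc (-1:ℝ) 1) :=
    hu.continuousOn_derivWithin (uniqueDiffOn_Icc (by norm_num)) le_rfl
  set G := ∫ x in (-1:ℝ)..1, (derivWithin u (Set.Icc (-1:ℝ) 1) x)^2 with hG
  have hGnn : 0 ≤ G :=
    intervalIntegral.integral_nonneg (by norm_num) (fun x _ => sq_nonneg _)
  set N := Real.sqrt G with hN
  have hNnn : 0 ≤ N := Real.sqrt_nonneg _
  -- generic Cauchy-Schwarz bound
  have hbound : ∀ n, p ≤ n →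
      |∫ x in (-1:ℝ)..1, derivWithin u (Icc (-1:ℝ) 1) x * (Rle n).eval x|
        ≤ ((n.factorial:ℝ) * 2^n) * (N * Real.sqrt (2/((p:ℝ)+1))) := by
    intro n hn
    have hcs := cauchy_schwarz hu'c ((Rle n).continuous.continuousOn)
    have hR := Rle_sq_le p n hn
    set y := ∫ x in (-1:ℝ)..1, derivWithin u (Icc (-1:ℝ) 1) x * (Rle n).eval x with hy
    have hx2 : y^2 ≤ G * (((n.factorial:ℝ)*2^n)^2 * (2/((p:ℝ)+1))) :=
      le_trans hcs (mul_le_mul_of_nonneg_left hR hGnn)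
    have hz : 0 ≤ ((n.factorial:ℝ) * 2^n) * (N * Real.sqrt (2/((p:ℝ)+1))) := by positivity
    have hzsq : (((n.factorial:ℝ) * 2^n) * (N * Real.sqrt (2/((p:ℝ)+1))))^2
        = G * (((n.factorial:ℝ)*2^n)^2 * (2/((p:ℝ)+1))) := by
      rw [hN, mul_pow, mul_pow, mul_pow, Real.sq_sqrt hGnn, Real.sq_sqrt (by positivity)]
      ring
    nlinarith [sq_abs y, abs_nonneg y, hx2, hz, hzsq]
  have hdegR : ∀ n : ℕ, n ≤ p + 1 → (derivative (Rle n)).natDegree ≤ p := by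
    intro n hn
    have h1 := natDegree_derivative_le (Rle n)
    have h2 := Rle_natDegree n
    omega
  have horthP : ∀ n : ℕ, p ≤ n →
      ∫ x in (-1:ℝ)..1, (derivative P).eval x * (Rle n).eval x = 0 := by
    intro n hn
    rcases Nat.lt_or_ge (derivative P).natDegree n with h | h
    · rw [← Rle_orth n (derivative P) h]
      apply intervalIntegral.integral_congr
      intro x _
      simp [mul_comm]
    · have hd := natDegree_derivative_le P
      have hP0 : P.natDegree = 0 := by omega
      have : derivative P = 0 := by
        conv_lhs => rw [eq_C_of_natDegree_le_zero (le_of_eq hP0)]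
        simp
      simp [this]
  have keyp := keyId hu horth (hdegR p (by omega)) (horthP p le_rfl)
  have keyp1 := keyId hu horth (hdegR (p+1) le_rfl) (horthP (p+1) (by omega))
  rw [Rle_eval_one, Rle_eval_neg_one] at keyp keyp1
  set A := u 1 - P.eval 1 with hA
  set B := u (-1) - P.eval (-1) with hB
  set M := N * Real.sqrt (2/((p:ℝ)+1)) with hM
  have hMnn : 0 ≤ M := by positivity
  set ε : ℝ := (-1)^p with hε
  have hεabs : |ε| = 1 := by rw [hε, abs_pow, abs_neg, abs_one, one_pow]
  have hneg2 : ∀ m:ℕ, ((-2:ℝ))^m = (-1)^m * 2^m := by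
    intro m; rw [show (-2:ℝ) = (-1) * 2 by norm_num, mul_pow]
  have hFp : (0:ℝ) < (p.factorial : ℝ) * 2^p := by positivity
  have hFp1 : (0:ℝ) < ((p+1).factorial : ℝ) * 2^(p+1) := by positivity
  -- identity p : the integral equals F_p * (A - ε B)
  have e1 : A * ((p.factorial:ℝ) * 2^p) - B * ((p.factorial:ℝ) * (-2)^p)
      = ((p.factorial:ℝ) * 2^p) * (A - ε * B) := by
    rw [hneg2, hε]; ring
  have e2 : A * (((p+1).factorial:ℝ) * 2^(p+1)) - B * (((p+1).factorial:ℝ) * (-2)^(p+1))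
      = (((p+1).factorial:ℝ) * 2^(p+1)) * (A + ε * B) := by
    rw [hneg2, hε, pow_succ]; ring
  have h1 : |A - ε * B| ≤ M := by
    have := hbound p le_rfl
    rw [keyp, e1, abs_mul, abs_of_pos hFp] at this
    exact le_of_mul_le_mul_left this hFp
  have h2 : |A + ε * B| ≤ M := by
    have := hbound (p+1) (by omega)
    rw [keyp1, e2, abs_mul, abs_of_pos hFp1] at this
    exact le_of_mul_le_mul_left this hFp1
  obtain ⟨h1a, h1b⟩ := abs_le.mp h1
  obtain ⟨h2a, h2b⟩ := abs_le.mp h2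
  have hAbnd : |A| ≤ M := abs_le.mpr ⟨by linarith, by linarith⟩
  have hεB : |ε * B| ≤ M := abs_le.mpr ⟨by linarith, by linarith⟩
  have hBbnd : |B| ≤ M := by
    rwa [abs_mul, hεabs, one_mul] at hεB
  have hMfinal : M = Real.sqrt 2 / Real.sqrt ((p:ℝ)+1) * N := by
    rw [hM, Real.sqrt_div (by norm_num : (0:ℝ) ≤ 2)]
    ring
  rw [hMfinal] at hAbnd hBbnd
  exact ⟨hAbnd, hBbnd⟩
end

section
/- Let a < b be real numbers with h = b - a, let b : ℝ → ℝ be twice continuously differentiable on [a, b] with M = sup_{t ∈ [a,b]} |b''(t)|, let p be a natural number, let q be a real polynomial of degree at most p, let u : ℝ → ℝ be continuous on [a, b], and let P be the L²(a,b)-orthogonal projection of u onto polynomials of degree at most p, i.e. a polynomial of degree at most p with ∫_{a}^{b} (u - P) r dx = 0 for every polynomial r of degree at most p. Then | ∫_{a}^{b} b(x) q'(x) (u(x) - P(x)) dx | ≤ (M h / 4) √(p(p+1)) · ‖q‖_{L²(a,b)} · ‖u - P‖_{L²(a,b)}. -/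
open Polynomial Finset Set MeasureTheory

noncomputable def Vab (a b : ℝ) : ℝ[X] := (X - C a) * (X - C b)
noncomputable def Rl (a b : ℝ) (n : ℕ) : ℝ[X] := derivative^[n] ((Vab a b)^n)

lemma monic_Vab (a b : ℝ) : (Vab a b).Monic := (monic_X_sub_C a).mul (monic_X_sub_C b)

lemma natDegree_Vab (a b : ℝ) : (Vab a b).natDegree = 2 := by
  rw [Vab, natDegree_mul (X_sub_C_ne_zero a) (X_sub_C_ne_zero b), natDegree_X_sub_C,
    natDegree_X_sub_C]

lemma natDegree_Rl_le (a b : ℝ) (n : ℕ) : (Rl a b n).natDegree ≤ n := by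
  refine (natDegree_iterate_derivative _ _).trans ?_
  rw [natDegree_pow, natDegree_Vab]; omega

lemma coeff_Rl (a b : ℝ) (n : ℕ) : (Rl a b n).coeff n = ((n + n).descFactorial n : ℝ) := by
  rw [Rl, coeff_iterate_derivative]
  have h1 : ((Vab a b)^n).coeff (n + n) = 1 := by
    have := ((monic_Vab a b).pow n).coeff_natDegree
    rwa [natDegree_pow, natDegree_Vab, show n*2 = n+n by ring] at this
  rw [h1]; simp

lemma coeff_Rl_ne (a b : ℝ) (n : ℕ) : (Rl a b n).coeff n ≠ 0 := by
  rw [coeff_Rl]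
  have : (n + n).descFactorial n ≠ 0 := by
    rw [Ne, Nat.descFactorial_eq_zero_iff_lt]; omega
  exact_mod_cast this

lemma DDV (a b : ℝ) : derivative (derivative (Vab a b)) = 2 := by
  have h1 : derivative (Vab a b) = (X - C b) + (X - C a) := by
    simp [Vab, derivative_mul]
  rw [h1]
  simp
  norm_num

lemma ode (a b : ℝ) (n : ℕ) :
    derivative (Vab a b * derivative (Rl a b n)) = ((n * (n + 1) : ℕ) : ℝ[X]) * Rl a b n := by
  cases n with
  | zero => simp [Rl]
  | succ m =>
    set V := Vab a b with hV
    set W := V ^ (m + 1) with hW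
    set R := Rl a b (m + 1) with hR
    have hRdef : R = derivative^[m + 1] W := rfl
    have e2 : derivative^[m] (derivative W) = R := by
      rw [hRdef, ← Function.iterate_succ_apply]
    have e1 : derivative^[m + 1] (derivative W) = derivative R := by
      rw [← Function.iterate_succ_apply derivative (m+1) W, Function.iterate_succ_apply',
        hRdef]
    have e0 : derivative^[m + 2] (derivative W) = derivative (derivative R) := by
      rw [show m + 2 = (m + 1) + 1 by rfl, Function.iterate_succ_apply', e1]
    have r0 : derivative^[m + 2] W = derivative R := by
      rw [show m + 2 = (m + 1) + 1 by rfl, Function.iterate_succ_apply', hRdef]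
    have hVdeg : V.natDegree = 2 := natDegree_Vab a b
    have hVzero : ∀ k ∈ range (m + 3), k ∉ range 3 →
        (m+2).choose k • (derivative^[m + 2 - k] (derivative W) * derivative^[k] V) = 0 := by
      intro k _ hk
      rw [iterate_derivative_eq_zero (x := k) (by rw [hVdeg]; simp at hk; omega), mul_zero,
        smul_zero]
    have hDVzero : ∀ k ∈ range (m + 3), k ∉ range 2 →
        (m+2).choose k • (derivative^[m + 2 - k] W * derivative^[k] (derivative V)) = 0 := by
      intro k _ hk
      have : (derivative V).natDegree ≤ 1 := by
        have := natDegree_derivative_le V; omega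
      rw [iterate_derivative_eq_zero (x := k) (by simp at hk; omega), mul_zero, smul_zero]
    -- base identity
    have base : derivative W * V = ((m + 1 : ℕ) : ℝ[X]) * (W * derivative V) := by
      rw [hW, derivative_pow, C_eq_natCast]
      push_cast
      ring
    have L := congrArg (derivative^[m + 2]) base
    rw [iterate_derivative_mul, iterate_derivative_natCast_mul, iterate_derivative_mul,
      Finset.sum_subset (Finset.range_subset_range.mpr (by omega : 3 ≤ m + 3)) hVzero |>.symm,
      Finset.sum_subset (Finset.range_subset_range.mpr (by omega : 2 ≤ m + 3)) hDVzero |>.symm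
      ] at L
    have hch : (((m+2).choose 2 : ℕ) : ℝ[X]) * 2 = ((m:ℝ[X]) + 2) * ((m:ℝ[X]) + 1) := by
      have h2 : (m+2).choose 2 * 2 = (m+2) * (m+1) := by
        rw [Nat.choose_two_right, show m + 2 - 1 = m + 1 by omega]
        exact Nat.div_mul_cancel (by simpa [mul_comm] using (Nat.even_mul_succ_self (m+1)).two_dvd)
      have h3 := congrArg (fun k : ℕ => (k : ℝ[X])) h2
      push_cast at h3
      exact h3
    simp only [Finset.sum_range_succ, Finset.sum_range_one, Nat.choose_zero_right,
      Nat.choose_one_right, one_smul, Nat.sub_zero, show m + 2 - 1 = m + 1 by omega,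
      show m + 2 - 2 = m by omega, e0, e1, e2, r0, ← hRdef, nsmul_eq_mul] at L
    have hDDV : derivative (derivative V) = 2 := DDV a b
    have hV2 : derivative^[2] V = 2 := by
      simp [Function.iterate_succ_apply', hDDV]
    simp only [Function.iterate_zero_apply, Function.iterate_one, Finset.sum_range_zero, hDDV,
      hV2, zero_add, one_mul] at L
    push_cast at L ⊢
    rw [derivative_mul]
    linear_combination L - R * hch

lemma poly_intInt (a b : ℝ) (S : ℝ[X]) :
    IntervalIntegrable (fun x => S.eval x) volume a b :=
  S.continuous.intervalIntegrable a b

lemma poly_intInt2 (a b : ℝ) (S T : ℝ[X]) :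
    IntervalIntegrable (fun x => S.eval x * T.eval x) volume a b :=
  (S.continuous.mul T.continuous).intervalIntegrable a b

lemma poly_ibp (a b : ℝ) (S T : ℝ[X]) :
    ∫ x in a..b, (derivative S).eval x * T.eval x
      = (S.eval b * T.eval b - S.eval a * T.eval a)
        - ∫ x in a..b, S.eval x * (derivative T).eval x := by
  have key : ∫ x in a..b,
      ((derivative S).eval x * T.eval x + S.eval x * (derivative T).eval x)
      = S.eval b * T.eval b - S.eval a * T.eval a := by
    have hd : ∀ x ∈ Set.uIcc a b, HasDerivAt (fun y => (S*T).eval y)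
        ((derivative S).eval x * T.eval x + S.eval x * (derivative T).eval x) x := by
      intro x _
      have h := (S*T).hasDerivAt x
      rwa [derivative_mul, eval_add, eval_mul, eval_mul] at h
    have h2 := intervalIntegral.integral_eq_sub_of_hasDerivAt hd
      (((derivative S).continuous.mul T.continuous).add
        (S.continuous.mul (derivative T).continuous) |>.intervalIntegrable a b)
    simpa [eval_mul] using h2
  rw [intervalIntegral.integral_add (poly_intInt2 a b _ _) (poly_intInt2 a b _ _)] at key
  linarith

lemma eval_iter_deriv_a (a b : ℝ) (n i : ℕ) (hi : i < n) :
    (derivative^[i] ((Vab a b)^n)).eval a = 0 := by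
  rw [show (Vab a b)^n = (X - C a)^n * (X - C b)^n by rw [Vab, mul_pow],
    iterate_derivative_mul, eval_finset_sum]
  refine Finset.sum_eq_zero fun k hk => ?_
  have hk' : k ≤ i := by simp at hk; omega
  rw [iterate_derivative_X_sub_pow, iterate_derivative_X_sub_pow]
  have h1 : n - (i - k) ≠ 0 := by omega
  simp [zero_pow h1]

lemma eval_iter_deriv_b (a b : ℝ) (n i : ℕ) (hi : i < n) :
    (derivative^[i] ((Vab a b)^n)).eval b = 0 := by
  rw [show (Vab a b)^n = (X - C a)^n * (X - C b)^n by rw [Vab, mul_pow],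
    iterate_derivative_mul, eval_finset_sum]
  refine Finset.sum_eq_zero fun k hk => ?_
  have hk' : k ≤ i := by simp at hk; omega
  rw [iterate_derivative_X_sub_pow, iterate_derivative_X_sub_pow]
  have h1 : n - k ≠ 0 := by omega
  simp [zero_pow h1]

lemma iter_orth (a b : ℝ) (n : ℕ) (g : ℝ[X]) :
    ∀ j, j ≤ n → ∫ x in a..b, (derivative^[n] ((Vab a b)^n)).eval x * g.eval x
      = (-1:ℝ)^j * ∫ x in a..b,
          (derivative^[n-j] ((Vab a b)^n)).eval x * (derivative^[j] g).eval x := by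
  intro j
  induction j with
  | zero => intro _; simp
  | succ j ih =>
    intro hj
    rw [ih (by omega)]
    rw [show n - j = (n - (j+1)) + 1 by omega, Function.iterate_succ_apply', poly_ibp, eval_iter_deriv_a a b n (n-(j+1)) (by omega),
      eval_iter_deriv_b a b n (n-(j+1)) (by omega),
      ← Function.iterate_succ_apply' derivative j g]
    ring

lemma Rl_orth (a b : ℝ) {m n : ℕ} (h : m < n) :
    ∫ x in a..b, (Rl a b n).eval x * (Rl a b m).eval x = 0 := by
  have h2 := iter_orth a b n (Rl a b m) n le_rfl
  rw [Nat.sub_self] at h2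
  simp only [Rl] at h2 ⊢
  rw [h2, iterate_derivative_eq_zero
    (lt_of_le_of_lt (by simpa [Rl] using natDegree_Rl_le a b m) h)]
  simp

lemma Rl_orth' (a b : ℝ) {m n : ℕ} (h : m ≠ n) :
    ∫ x in a..b, (Rl a b n).eval x * (Rl a b m).eval x = 0 := by
  rcases h.lt_or_gt with hlt | hlt
  · exact Rl_orth a b hlt
  · rw [show (fun x => (Rl a b n).eval x * (Rl a b m).eval x)
        = fun x => (Rl a b m).eval x * (Rl a b n).eval x from funext fun x => mul_comm _ _]
    exact Rl_orth a b hlt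

lemma span_Rl (a b : ℝ) : ∀ (d : ℕ) (q : ℝ[X]), q.natDegree ≤ d →
    ∃ c : ℕ → ℝ, q = ∑ n ∈ Finset.range (d+1), C (c n) * Rl a b n := by
  intro d
  induction d with
  | zero =>
    intro q hq
    refine ⟨fun _ => q.coeff 0, ?_⟩
    rw [Finset.sum_range_one, show Rl a b 0 = 1 by simp [Rl], mul_one,
      ← eq_C_of_natDegree_le_zero hq]
  | succ d ih =>
    intro q hq
    set γ : ℝ := q.coeff (d+1) / (Rl a b (d+1)).coeff (d+1) with hγ
    have hcoeff : (q - C γ * Rl a b (d+1)).coeff (d+1) = 0 := by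
      rw [coeff_sub, coeff_C_mul, hγ, div_mul_cancel₀ _ (coeff_Rl_ne a b (d+1)), sub_self]
    have hdeg : (q - C γ * Rl a b (d+1)).natDegree ≤ d := by
      rw [natDegree_le_iff_coeff_eq_zero]
      intro m hm
      rcases eq_or_lt_of_le (Nat.succ_le_of_lt hm) with hm' | hm'
      · rw [← hm']; exact hcoeff
      · rw [coeff_sub, coeff_eq_zero_of_natDegree_lt (lt_of_le_of_lt hq hm'),
          coeff_eq_zero_of_natDegree_lt
            (lt_of_le_of_lt ((natDegree_C_mul_le _ _).trans (natDegree_Rl_le a b (d+1))) hm'),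
          sub_zero]
    obtain ⟨c, hc⟩ := ih _ hdeg
    refine ⟨fun n => if n = d+1 then γ else c n, ?_⟩
    rw [Finset.sum_range_succ]
    have h1 : C (if d+1 = d+1 then γ else c (d+1)) = C γ := by simp
    have h2 : ∑ n ∈ Finset.range (d+1), C (if n = d+1 then γ else c n) * Rl a b n
        = ∑ n ∈ Finset.range (d+1), C (c n) * Rl a b n :=
      Finset.sum_congr rfl fun n hn => by
        have hne : n ≠ d+1 := by simp at hn; omega
        simp [hne]
    show q = (∑ n ∈ Finset.range (d+1), C (if n = d+1 then γ else c n) * Rl a b n)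
      + C (if d+1 = d+1 then γ else c (d+1)) * Rl a b (d+1)
    rw [h1, h2, ← hc]
    ring

lemma sum_integral_expand (a b : ℝ) (s : Finset ℕ) (F G : ℕ → ℝ[X]) :
    ∫ x in a..b, (∑ n ∈ s, (F n).eval x) * (∑ m ∈ s, (G m).eval x)
      = ∑ n ∈ s, ∑ m ∈ s, ∫ x in a..b, (F n).eval x * (G m).eval x := by
  have h1 : (fun x => (∑ n ∈ s, (F n).eval x) * (∑ m ∈ s, (G m).eval x))
      = fun x => ∑ n ∈ s, ∑ m ∈ s, (F n).eval x * (G m).eval x :=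
    funext fun x => by rw [Finset.sum_mul_sum]
  rw [intervalIntegral.integral_congr (fun x _ => congrFun h1 x),
    intervalIntegral.integral_finset_sum (f := fun n x => ∑ m ∈ s, (F n).eval x * (G m).eval x) (fun n _ =>
      ((continuous_finset_sum s fun m _ =>
        (F n).continuous.mul (G m).continuous).intervalIntegrable a b))]
  exact Finset.sum_congr rfl fun n _ =>
    intervalIntegral.integral_finset_sum fun m _ => poly_intInt2 a b _ _

lemma schmidt (a b : ℝ) (hab : a ≤ b) (p : ℕ) (q : ℝ[X]) (hq : q.natDegree ≤ p) :
    ∫ x in a..b, (x - a) * (b - x) * (q.derivative.eval x)^2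
      ≤ ((p : ℝ) * (p+1)) * ∫ x in a..b, (q.eval x)^2 := by
  obtain ⟨c, hc⟩ := span_Rl a b p q hq
  set s := Finset.range (p+1) with hs
  set I : ℕ → ℝ := fun n => ∫ x in a..b, ((Rl a b n).eval x)^2 with hI
  have hInn : ∀ n, 0 ≤ I n := fun n =>
    intervalIntegral.integral_nonneg hab fun x _ => sq_nonneg _
  have hIsq : ∀ n, (∫ x in a..b, (Rl a b n).eval x * (Rl a b n).eval x) = I n := fun n =>
    intervalIntegral.integral_congr fun x _ => (pow_two _).symm
  have hqe : ∀ x : ℝ, q.eval x = ∑ m ∈ s, (C (c m) * Rl a b m).eval x := fun x => by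
    conv_lhs => rw [hc]
    rw [eval_finset_sum]
  have key : ∀ e : ℕ → ℝ,
      (∫ x in a..b, (∑ n ∈ s, (C (e n) * Rl a b n).eval x) * q.eval x)
        = ∑ n ∈ s, e n * c n * I n := by
    intro e
    have e1 : (∫ x in a..b, (∑ n ∈ s, (C (e n) * Rl a b n).eval x) * q.eval x)
        = ∫ x in a..b, (∑ n ∈ s, (C (e n) * Rl a b n).eval x)
            * (∑ m ∈ s, (C (c m) * Rl a b m).eval x) :=
      intervalIntegral.integral_congr fun x _ => by rw [← hqe x]
    rw [e1, sum_integral_expand]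
    refine Finset.sum_congr rfl fun n hn => ?_
    rw [Finset.sum_eq_single n]
    · have h2 : (fun x => (C (e n) * Rl a b n).eval x * (C (c n) * Rl a b n).eval x)
          = fun x => (e n * c n) * ((Rl a b n).eval x * (Rl a b n).eval x) :=
        funext fun x => by simp only [eval_mul, eval_C]; ring
      rw [intervalIntegral.integral_congr (fun x _ => congrFun h2 x),
        intervalIntegral.integral_const_mul, hIsq n]
    · intro m _ hmn
      have h2 : (fun x => (C (e n) * Rl a b n).eval x * (C (c m) * Rl a b m).eval x)
          = fun x => (e n * c m) * ((Rl a b n).eval x * (Rl a b m).eval x) :=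
        funext fun x => by simp only [eval_mul, eval_C]; ring
      rw [intervalIntegral.integral_congr (fun x _ => congrFun h2 x),
        intervalIntegral.integral_const_mul, Rl_orth' a b hmn, mul_zero]
    · intro hnn; exact absurd hn hnn
  have hq2 : (∫ x in a..b, (q.eval x)^2) = ∑ n ∈ s, c n * c n * I n := by
    rw [← key c]
    exact intervalIntegral.integral_congr fun x _ => by rw [pow_two]; rw [hqe x]
  have L1 : (∫ x in a..b, (x - a) * (b - x) * (q.derivative.eval x)^2)
      = - ∫ x in a..b, (Vab a b * derivative q).eval x * (derivative q).eval x := by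
    rw [← intervalIntegral.integral_neg]
    refine intervalIntegral.integral_congr fun x _ => ?_
    simp only [Vab, eval_mul, eval_sub, eval_X, eval_C]
    ring
  have L2 := poly_ibp a b (Vab a b * derivative q) q
  have haz : (Vab a b * derivative q).eval a = 0 := by
    rw [eval_mul, show (Vab a b).eval a = 0 by simp [Vab], zero_mul]
  have hbz : (Vab a b * derivative q).eval b = 0 := by
    rw [eval_mul, show (Vab a b).eval b = 0 by simp [Vab], zero_mul]
  rw [haz, hbz, zero_mul, zero_mul, sub_zero, zero_sub] at L2
  have hD : derivative (Vab a b * derivative q)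
      = ∑ n ∈ s, C (c n * ((n*(n+1) : ℕ) : ℝ)) * Rl a b n := by
    have hDq : derivative q = ∑ n ∈ s, C (c n) * derivative (Rl a b n) := by
      conv_lhs => rw [hc]
      rw [derivative_sum]
      exact Finset.sum_congr rfl fun n _ => derivative_C_mul _ _
    calc derivative (Vab a b * derivative q)
        = derivative (∑ n ∈ s, C (c n) * (Vab a b * derivative (Rl a b n))) := by
          rw [hDq, Finset.mul_sum]
          exact congrArg derivative (Finset.sum_congr rfl fun n _ => by ring)
      _ = ∑ n ∈ s, C (c n * ((n*(n+1) : ℕ) : ℝ)) * Rl a b n := by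
          rw [derivative_sum]
          refine Finset.sum_congr rfl fun n _ => ?_
          rw [derivative_C_mul, ode a b n, C_mul, map_natCast C]
          ring
  have L3 : (∫ x in a..b, (derivative (Vab a b * derivative q)).eval x * q.eval x)
      = ∑ n ∈ s, (c n * ((n*(n+1) : ℕ) : ℝ)) * c n * I n := by
    rw [← key fun n => c n * ((n*(n+1) : ℕ) : ℝ)]
    exact intervalIntegral.integral_congr fun x _ => by rw [hD, eval_finset_sum]
  have main : (∫ x in a..b, (x - a) * (b - x) * (q.derivative.eval x)^2)
      = ∑ n ∈ s, (c n * ((n*(n+1) : ℕ) : ℝ)) * c n * I n := by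
    rw [L1, ← L3]
    linarith [L2]
  rw [main, hq2, Finset.mul_sum]
  refine Finset.sum_le_sum fun n hn => ?_
  have hn' : (n : ℝ) ≤ (p : ℝ) := by
    have : n ≤ p := by rw [hs] at hn; simp at hn; omega
    exact_mod_cast this
  have hnp : ((n*(n+1) : ℕ) : ℝ) ≤ (p : ℝ) * ((p : ℝ)+1) := by
    push_cast
    nlinarith [Nat.cast_nonneg (α := ℝ) n]
  nlinarith [hInn n, mul_nonneg (mul_self_nonneg (c n)) (hInn n)]

lemma cs_integral (a b : ℝ) (hab : a ≤ b) (F G : ℝ → ℝ)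
    (hF : ContinuousOn F (Icc a b)) (hG : ContinuousOn G (Icc a b)) :
    ∫ x in a..b, F x * G x
      ≤ Real.sqrt (∫ x in a..b, (F x)^2) * Real.sqrt (∫ x in a..b, (G x)^2) := by
  have huIcc : uIcc a b = Icc a b := uIcc_of_le hab
  have iF2 : IntervalIntegrable (fun x => (F x)^2) volume a b :=
    (huIcc ▸ (hF.pow 2)).intervalIntegrable
  have iG2 : IntervalIntegrable (fun x => (G x)^2) volume a b :=
    (huIcc ▸ (hG.pow 2)).intervalIntegrable
  have iFG : IntervalIntegrable (fun x => F x * G x) volume a b :=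
    (huIcc ▸ (hF.mul hG)).intervalIntegrable
  set A := ∫ x in a..b, (F x)^2 with hA
  set B := ∫ x in a..b, F x * G x with hB
  set D := ∫ x in a..b, (G x)^2 with hD
  have hA0 : 0 ≤ A := intervalIntegral.integral_nonneg hab fun x _ => sq_nonneg _
  have hD0 : 0 ≤ D := intervalIntegral.integral_nonneg hab fun x _ => sq_nonneg _
  have key : ∀ t : ℝ, 0 ≤ A * (t * t) + (2 * B) * t + D := by
    intro t
    have expand : ∫ x in a..b, (t * F x + G x)^2
        = A * (t * t) + (2 * B) * t + D := by
      have e1 : (fun x => (t * F x + G x)^2)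
          = fun x => (t * t) * (F x)^2 + ((2 * t) * (F x * G x) + (G x)^2) :=
        funext fun x => by ring
      rw [intervalIntegral.integral_congr (fun x _ => congrFun e1 x),
        intervalIntegral.integral_add (iF2.const_mul _) ((iFG.const_mul _).add iG2),
        intervalIntegral.integral_add (iFG.const_mul _) iG2,
        intervalIntegral.integral_const_mul, intervalIntegral.integral_const_mul]
      ring
    rw [← expand]
    exact intervalIntegral.integral_nonneg hab fun x _ => sq_nonneg _
  have hdisc := discrim_le_zero key
  rw [discrim] at hdisc
  have hB2 : B^2 ≤ A * D := by nlinarith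
  calc B ≤ |B| := le_abs_self B
    _ = Real.sqrt (B^2) := (Real.sqrt_sq_eq_abs B).symm
    _ ≤ Real.sqrt (A * D) := Real.sqrt_le_sqrt hB2
    _ = Real.sqrt A * Real.sqrt D := Real.sqrt_mul hA0 D

lemma interp_bound (a b : ℝ) (hab : a < b) (f : ℝ → ℝ)
    (hf : ContDiffOn ℝ 2 f (Set.Icc a b)) (M : ℝ)
    (hM : M = ⨆ t : Set.Icc a b, |iteratedDerivWithin 2 f (Set.Icc a b) t|) :
    0 ≤ M ∧ ∀ x ∈ Set.Icc a b,
      |f x - (f a + (f b - f a)/(b-a) * (x - a))| ≤ M/2 * ((x-a)*(b-x)) := by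
  have hd : UniqueDiffOn ℝ (Set.Icc a b) := uniqueDiffOn_Icc hab
  set g1 := derivWithin f (Set.Icc a b) with hg1
  set g2 := derivWithin g1 (Set.Icc a b) with hg2
  have hfd : DifferentiableOn ℝ f (Set.Icc a b) := hf.differentiableOn (by norm_num)
  have hg1c : ContDiffOn ℝ 1 g1 (Set.Icc a b) := hf.derivWithin hd (by norm_num)
  have hg1d : DifferentiableOn ℝ g1 (Set.Icc a b) := hg1c.differentiableOn (by norm_num)
  have heq : ∀ x ∈ Set.Icc a b, g2 x = iteratedDerivWithin 2 f (Set.Icc a b) x := by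
    intro x hx
    have h1 : iteratedDerivWithin 2 f (Set.Icc a b) x
        = derivWithin (iteratedDerivWithin 1 f (Set.Icc a b)) (Set.Icc a b) x :=
      congrFun iteratedDerivWithin_succ x
    rw [h1]
    exact derivWithin_congr (fun y hy => (congrFun iteratedDerivWithin_one y).symm)
      ((congrFun iteratedDerivWithin_one x).symm)
  have hIcont : ContinuousOn (iteratedDerivWithin 2 f (Set.Icc a b)) (Set.Icc a b) :=
    hf.continuousOn_iteratedDerivWithin (by norm_num) hd
  have hbdd : BddAbove (Set.range fun t : Set.Icc a b =>
      |iteratedDerivWithin 2 f (Set.Icc a b) t|) := by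
    have him := Set.image_eq_range (fun y => |iteratedDerivWithin 2 f (Set.Icc a b) y|)
      (Set.Icc a b)
    rw [← him]
    exact (isCompact_Icc.image_of_continuousOn hIcont.abs).bddAbove
  have hMb : ∀ x ∈ Set.Icc a b, |g2 x| ≤ M := fun x hx => by
    rw [heq x hx, hM]
    exact le_ciSup hbdd ⟨x, hx⟩
  have hM0 : 0 ≤ M :=
    le_trans (abs_nonneg _) (hMb a (Set.left_mem_Icc.mpr hab.le))
  refine ⟨hM0, ?_⟩
  have hIoo : Set.Ioo a b ⊆ Set.Icc a b := Set.Ioo_subset_Icc_self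
  set sl := (f b - f a)/(b-a) with hsl
  have main : ∀ sg : ℝ, sg = 1 ∨ sg = -1 → ∀ x ∈ Set.Icc a b,
      0 ≤ M/2 * ((x-a)*(b-x)) - sg * (f x - (f a + sl * (x - a))) := by
    intro sg hsg
    have hconc : ConcaveOn ℝ (Set.Icc a b)
        (fun x => M/2 * ((x-a)*(b-x)) - sg * (f x - (f a + sl * (x - a)))) := by
      apply concaveOn_of_hasDerivWithinAt2_nonpos (convex_Icc a b)
        (f' := fun x => M/2 * ((a+b) - 2*x) - sg * (g1 x - sl))
        (f'' := fun x => -M - sg * g2 x)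
      · apply ContinuousOn.sub
        · exact (continuous_const.mul ((continuous_id.sub continuous_const).mul
            (continuous_const.sub continuous_id))).continuousOn
        · exact continuousOn_const.mul (hf.continuousOn.sub
            ((continuous_const.add (continuous_const.mul
              (continuous_id.sub continuous_const))).continuousOn))
      · intro x hx
        rw [interior_Icc] at hx ⊢
        have h1 : HasDerivAt (fun x : ℝ => M/2 * ((x-a)*(b-x))) (M/2 * ((a+b) - 2*x)) x := by
          have h := (((hasDerivAt_id x).sub_const a).mul
            ((hasDerivAt_const x b).sub (hasDerivAt_id x))).const_mul (M/2)
          refine h.congr_deriv ?_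
          first
          | (simp only [id_eq, Pi.sub_apply]; ring)
          | ring
        have h2 : HasDerivWithinAt f (g1 x) (Set.Ioo a b) x :=
          ((hfd x (hIoo hx)).hasDerivWithinAt).mono hIoo
        have h3 : HasDerivAt (fun x : ℝ => f a + sl * (x - a)) sl x := by
          have h := (((hasDerivAt_id x).sub_const a).const_mul sl).const_add (f a)
          refine h.congr_deriv ?_
          first
          | (simp only [id_eq]; ring)
          | ring
        exact (h1.hasDerivWithinAt).sub ((h2.sub h3.hasDerivWithinAt).const_mul sg)
      · intro x hx
        rw [interior_Icc] at hx ⊢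
        have h1 : HasDerivAt (fun x : ℝ => M/2 * ((a+b) - 2*x)) (-M) x := by
          have h := ((hasDerivAt_const x (a+b)).sub ((hasDerivAt_id x).const_mul 2)).const_mul (M/2)
          refine h.congr_deriv ?_
          first
          | (simp only [id_eq]; ring)
          | ring
        have h2 : HasDerivWithinAt g1 (g2 x) (Set.Ioo a b) x :=
          ((hg1d x (hIoo hx)).hasDerivWithinAt).mono hIoo
        have h := (h1.hasDerivWithinAt).sub ((h2.sub_const sl).const_mul sg)
        exact h
      · intro x hx
        rw [interior_Icc] at hx
        have h := abs_le.mp (hMb x (hIoo hx))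
        rcases hsg with h' | h' <;> subst h' <;> nlinarith [h.1, h.2]
    have hFa : M/2 * ((a-a)*(b-a)) - sg * (f a - (f a + sl * (a - a))) = 0 := by ring
    have hFb : M/2 * ((b-a)*(b-b)) - sg * (f b - (f a + sl * (b - a))) = 0 := by
      rw [hsl, div_mul_cancel₀ _ (by linarith : b - a ≠ 0)]
      ring
    intro x hx
    obtain ⟨hax, hxb⟩ := hx
    have hba : (0:ℝ) < b - a := by linarith
    set t := (b - x)/(b - a) with ht
    have ht0 : 0 ≤ t := div_nonneg (by linarith) hba.le
    have ht1 : 0 ≤ 1 - t := by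
      rw [sub_nonneg, ht]
      exact div_le_one_of_le₀ (by linarith) hba.le
    have hco : t • a + (1 - t) • b = x := by
      rw [ht, smul_eq_mul, smul_eq_mul]
      field_simp
      ring
    have hc := hconc.2 (Set.left_mem_Icc.mpr hab.le) (Set.right_mem_Icc.mpr hab.le)
      ht0 ht1 (by ring)
    rw [hco] at hc
    simp only [smul_eq_mul] at hc
    rw [hFa, hFb] at hc
    simpa using hc
  intro x hx
  have h1 := main 1 (Or.inl rfl) x hx
  have h2 := main (-1) (Or.inr rfl) x hx
  rw [abs_le]
  constructor <;> nlinarith [h1, h2]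

/-- Improved one-dimensional bound on the convection term `T₂` for a `W^{2,∞}`
coefficient: if `P` is the L²(a,b)-orthogonal projection of `u` onto
polynomials of degree at most `p`, `f` is twice continuously differentiable on
`[a, b]` with `M = sup |f''|`, and `q` has degree at most `p`, then
`|∫_a^b f q' (u - P)| ≤ (M (b-a)/4) √(p(p+1)) ‖q‖_{L²(a,b)} ‖u - P‖_{L²(a,b)}`. -/
theorem improved_T2_bound_one_dimensional
    (a b : ℝ) (hab : a < b) (f : ℝ → ℝ)
    (hf : ContDiffOn ℝ 2 f (Set.Icc a b))
    (M : ℝ)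
    (hM : M = ⨆ t : Set.Icc a b, |iteratedDerivWithin 2 f (Set.Icc a b) t|)
    (p : ℕ) (q : Polynomial ℝ) (hq : q.natDegree ≤ p)
    (u : ℝ → ℝ) (hu : ContinuousOn u (Set.Icc a b))
    (P : Polynomial ℝ) (hP : P.natDegree ≤ p)
    (horth : ∀ r : Polynomial ℝ, r.natDegree ≤ p →
      ∫ x in a..b, (u x - P.eval x) * r.eval x = 0) :
    |∫ x in a..b, f x * q.derivative.eval x * (u x - P.eval x)| ≤
      M * (b - a) / 4 * Real.sqrt ((p : ℝ) * (p + 1)) *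
        Real.sqrt (∫ x in a..b, (q.eval x) ^ 2) *
        Real.sqrt (∫ x in a..b, (u x - P.eval x) ^ 2) := by
  have hab' : a ≤ b := hab.le
  have huIcc : Set.uIcc a b = Set.Icc a b := Set.uIcc_of_le hab'
  obtain ⟨hM0, hbound⟩ := interp_bound a b hab f hf M hM
  set sl := (f b - f a)/(b-a) with hsl
  set L : ℝ[X] := Polynomial.C (f a) + Polynomial.C sl * (Polynomial.X - Polynomial.C a)
    with hL
  have hLev : ∀ x : ℝ, L.eval x = f a + sl * (x - a) := fun x => by simp [hL]
  have hLdeg : L.natDegree ≤ 1 := by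
    refine (Polynomial.natDegree_add_le _ _).trans ?_
    refine max_le (by simp) ((Polynomial.natDegree_mul_le).trans ?_)
    simp [Polynomial.natDegree_X_sub_C]
  have hrdeg : (L * q.derivative).natDegree ≤ p := by
    by_cases h0 : q.natDegree = 0
    · rw [Polynomial.derivative_of_natDegree_zero h0, mul_zero, Polynomial.natDegree_zero]
      exact Nat.zero_le p
    · have h1 : 1 ≤ q.natDegree := Nat.one_le_iff_ne_zero.mpr h0
      have h2 : q.derivative.natDegree ≤ q.natDegree - 1 := Polynomial.natDegree_derivative_le q
      refine (Polynomial.natDegree_mul_le).trans ?_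
      omega
  have hηc : ContinuousOn (fun x => u x - P.eval x) (Set.Icc a b) :=
    hu.sub P.continuous.continuousOn
  have hwc : Continuous fun x : ℝ => (x - a) * (b - x) :=
    (continuous_id.sub continuous_const).mul (continuous_const.sub continuous_id)
  have hFc : ContinuousOn (fun x => Real.sqrt ((x-a)*(b-x)) * |q.derivative.eval x|)
      (Set.Icc a b) :=
    ((Real.continuous_sqrt.comp hwc).mul (q.derivative.continuous.abs)).continuousOn
  have hGc : ContinuousOn (fun x => |u x - P.eval x|) (Set.Icc a b) := hηc.abs
  -- Step 1: subtract the affine interpolant using orthogonality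
  have orth0 : (∫ x in a..b, (f a + sl*(x-a)) * q.derivative.eval x * (u x - P.eval x)) = 0 := by
    rw [← horth (L * q.derivative) hrdeg]
    refine intervalIntegral.integral_congr fun x _ => ?_
    rw [eval_mul, hLev x]
    ring
  have hi1 : IntervalIntegrable
      (fun x => (f x - (f a + sl*(x-a))) * q.derivative.eval x * (u x - P.eval x))
      volume a b := by
    apply ContinuousOn.intervalIntegrable
    rw [huIcc]
    exact ((hf.continuousOn.sub (continuous_const.add (continuous_const.mul
      (continuous_id.sub continuous_const))).continuousOn).mul
      (q.derivative.continuous.continuousOn)).mul hηc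
  have hi2 : IntervalIntegrable
      (fun x => (f a + sl*(x-a)) * q.derivative.eval x * (u x - P.eval x)) volume a b := by
    apply ContinuousOn.intervalIntegrable
    rw [huIcc]
    exact (((continuous_const.add (continuous_const.mul
      (continuous_id.sub continuous_const))).mul
      (q.derivative.continuous)).continuousOn).mul hηc
  have hsplit : (∫ x in a..b, f x * q.derivative.eval x * (u x - P.eval x))
      = ∫ x in a..b, (f x - (f a + sl*(x-a))) * q.derivative.eval x * (u x - P.eval x) := by
    have he : (fun x => f x * q.derivative.eval x * (u x - P.eval x))
        = fun x => (f x - (f a + sl*(x-a))) * q.derivative.eval x * (u x - P.eval x)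
          + (f a + sl*(x-a)) * q.derivative.eval x * (u x - P.eval x) :=
      funext fun x => by ring
    rw [intervalIntegral.integral_congr (fun x _ => congrFun he x),
      intervalIntegral.integral_add hi1 hi2, orth0, add_zero]
  -- Step 2: pointwise bound
  have hpt : ∀ x ∈ Set.Icc a b,
      |(f x - (f a + sl*(x-a))) * q.derivative.eval x * (u x - P.eval x)|
        ≤ M*(b-a)/4 * ((Real.sqrt ((x-a)*(b-x)) * |q.derivative.eval x|) * |u x - P.eval x|) := by
    intro x hx
    obtain ⟨hax, hxb⟩ := hx
    have hw0 : (0:ℝ) ≤ (x-a)*(b-x) := mul_nonneg (by linarith) (by linarith)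
    have h1 := hbound x ⟨hax, hxb⟩
    have hsq : Real.sqrt ((x-a)*(b-x)) ≤ (b-a)/2 := by
      have h2 : (x-a)*(b-x) ≤ ((b-a)/2)^2 := by nlinarith [sq_nonneg (x - (a+b)/2)]
      calc Real.sqrt ((x-a)*(b-x)) ≤ Real.sqrt (((b-a)/2)^2) := Real.sqrt_le_sqrt h2
        _ = (b-a)/2 := Real.sqrt_sq (by linarith)
    have hK0 : 0 ≤ |q.derivative.eval x| * |u x - P.eval x| :=
      mul_nonneg (abs_nonneg _) (abs_nonneg _)
    set S := Real.sqrt ((x-a)*(b-x)) with hS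
    have hws : (x-a)*(b-x) = S * S := (Real.mul_self_sqrt hw0).symm
    have hs0 : 0 ≤ S := Real.sqrt_nonneg _
    have keyS : M/2 * ((x-a)*(b-x)) ≤ M*(b-a)/4 * S := by
      rw [hws]
      nlinarith [mul_nonneg hM0 hs0]
    have c1 : |(f x - (f a + sl*(x-a))) * q.derivative.eval x * (u x - P.eval x)|
        = |f x - (f a + sl*(x-a))| * (|q.derivative.eval x| * |u x - P.eval x|) := by
      rw [abs_mul, abs_mul]; ring
    have c2 : |f x - (f a + sl*(x-a))| * (|q.derivative.eval x| * |u x - P.eval x|)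
        ≤ (M/2 * ((x-a)*(b-x))) * (|q.derivative.eval x| * |u x - P.eval x|) :=
      mul_le_mul_of_nonneg_right h1 hK0
    have c3 : (M/2 * ((x-a)*(b-x))) * (|q.derivative.eval x| * |u x - P.eval x|)
        ≤ (M*(b-a)/4 * S) * (|q.derivative.eval x| * |u x - P.eval x|) :=
      mul_le_mul_of_nonneg_right keyS hK0
    calc |(f x - (f a + sl*(x-a))) * q.derivative.eval x * (u x - P.eval x)|
        = |f x - (f a + sl*(x-a))| * (|q.derivative.eval x| * |u x - P.eval x|) := c1
      _ ≤ (M/2 * ((x-a)*(b-x))) * (|q.derivative.eval x| * |u x - P.eval x|) := c2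
      _ ≤ (M*(b-a)/4 * S) * (|q.derivative.eval x| * |u x - P.eval x|) := c3
      _ = M*(b-a)/4 * ((S * |q.derivative.eval x|) * |u x - P.eval x|) := by
          ring
  -- Step 3: integral bounds
  have hiabs : IntervalIntegrable
      (fun x => |(f x - (f a + sl*(x-a))) * q.derivative.eval x * (u x - P.eval x)|)
      volume a b := hi1.abs
  have hiFG : IntervalIntegrable
      (fun x => M*(b-a)/4 * ((Real.sqrt ((x-a)*(b-x)) * |q.derivative.eval x|)
        * |u x - P.eval x|)) volume a b := by
    apply ContinuousOn.intervalIntegrable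
    rw [huIcc]
    exact continuousOn_const.mul (hFc.mul hGc)
  have habs := intervalIntegral.abs_integral_le_integral_abs (μ := volume) hab'
    (f := fun x => (f x - (f a + sl*(x-a))) * q.derivative.eval x * (u x - P.eval x))
  have hmono := intervalIntegral.integral_mono_on hab' hiabs hiFG hpt
  have hconstmul : (∫ x in a..b, M*(b-a)/4 * ((Real.sqrt ((x-a)*(b-x))
        * |q.derivative.eval x|) * |u x - P.eval x|))
      = M*(b-a)/4 * ∫ x in a..b, (Real.sqrt ((x-a)*(b-x)) * |q.derivative.eval x|)
        * |u x - P.eval x| := intervalIntegral.integral_const_mul _ _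
  have hcs := cs_integral a b hab' _ _ hFc hGc
  have hFsq : (∫ x in a..b, (Real.sqrt ((x-a)*(b-x)) * |q.derivative.eval x|)^2)
      = ∫ x in a..b, (x-a)*(b-x)*(q.derivative.eval x)^2 := by
    refine intervalIntegral.integral_congr fun x hx => ?_
    rw [huIcc] at hx
    obtain ⟨hax, hxb⟩ := hx
    have hw0 : (0:ℝ) ≤ (x-a)*(b-x) := mul_nonneg (by linarith) (by linarith)
    rw [mul_pow, sq_abs, Real.sq_sqrt hw0]
  have hGsq : (∫ x in a..b, (|u x - P.eval x|)^2) = ∫ x in a..b, (u x - P.eval x)^2 :=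
    intervalIntegral.integral_congr fun x _ => sq_abs _
  have hsch := schmidt a b hab' p q hq
  have hC0 : (0:ℝ) ≤ M*(b-a)/4 := by
    have : (0:ℝ) ≤ M*(b-a) := mul_nonneg hM0 (by linarith)
    linarith
  have hq20 : (0:ℝ) ≤ ∫ x in a..b, (q.eval x)^2 :=
    intervalIntegral.integral_nonneg hab' fun x _ => sq_nonneg _
  have hpp0 : (0:ℝ) ≤ (p:ℝ) * ((p:ℝ)+1) := by positivity
  have hsqrtF : Real.sqrt (∫ x in a..b, (Real.sqrt ((x-a)*(b-x)) * |q.derivative.eval x|)^2)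
      ≤ Real.sqrt ((p:ℝ)*((p:ℝ)+1)) * Real.sqrt (∫ x in a..b, (q.eval x)^2) := by
    rw [hFsq, ← Real.sqrt_mul hpp0]
    exact Real.sqrt_le_sqrt hsch
  -- final chain
  rw [hsplit]
  calc |∫ x in a..b, (f x - (f a + sl*(x-a))) * q.derivative.eval x * (u x - P.eval x)|
      ≤ ∫ x in a..b, |(f x - (f a + sl*(x-a))) * q.derivative.eval x * (u x - P.eval x)| := habs
    _ ≤ ∫ x in a..b, M*(b-a)/4 * ((Real.sqrt ((x-a)*(b-x)) * |q.derivative.eval x|)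
        * |u x - P.eval x|) := hmono
    _ = M*(b-a)/4 * ∫ x in a..b, (Real.sqrt ((x-a)*(b-x)) * |q.derivative.eval x|)
        * |u x - P.eval x| := hconstmul
    _ ≤ M*(b-a)/4 * (Real.sqrt (∫ x in a..b, (Real.sqrt ((x-a)*(b-x))
          * |q.derivative.eval x|)^2)
        * Real.sqrt (∫ x in a..b, (|u x - P.eval x|)^2)) :=
      mul_le_mul_of_nonneg_left hcs hC0
    _ ≤ M*(b-a)/4 * ((Real.sqrt ((p:ℝ)*((p:ℝ)+1)) * Real.sqrt (∫ x in a..b, (q.eval x)^2))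
        * Real.sqrt (∫ x in a..b, (|u x - P.eval x|)^2)) := by
      refine mul_le_mul_of_nonneg_left (mul_le_mul_of_nonneg_right hsqrtF ?_) hC0
      exact Real.sqrt_nonneg _
    _ = M * (b - a) / 4 * Real.sqrt ((p : ℝ) * ((p:ℝ) + 1)) *
        Real.sqrt (∫ x in a..b, (q.eval x) ^ 2) *
        Real.sqrt (∫ x in a..b, (u x - P.eval x) ^ 2) := by
      rw [hGsq]
      ring
end

section
/- There exists a constant C > 0 such that the following holds: for all real numbers a < b, every function b : ℝ → ℝ that is Lipschitz continuous on [a, b] with Lipschitz constant L, every natural number p, every real polynomial q of degree at most p, every continuous u : ℝ → ℝ on [a, b], and every polynomial P of degree at most p with ∫_{a}^{b} (u - P) r dx = 0 for every polynomial r of degree at most p, one has | ∫_{a}^{b} b(x) q'(x) (u(x) - P(x)) dx | ≤ C L (p+1)^2 ‖q‖_{L²(a,b)} ‖u - P‖_{L²(a,b)}. -/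
open Polynomial MeasureTheory Finset

noncomputable def Rod (a b : ℝ) (n : ℕ) : Polynomial ℝ :=
  derivative^[n] (((X - C a) * (X - C b)) ^ n)

lemma integral_poly_derivative (a b : ℝ) (P : Polynomial ℝ) :
    ∫ x in a..b, P.derivative.eval x = P.eval b - P.eval a := by
  apply intervalIntegral.integral_deriv_eq_sub' (fun x => P.eval x)
  · funext x; exact (P.hasDerivAt x).deriv
  · intro x _; exact (P.hasDerivAt x).differentiableAt
  · exact (P.derivative.continuous_aeval).continuousOn

lemma poly_intble (a b : ℝ) (P : Polynomial ℝ) :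
    IntervalIntegrable (fun x => P.eval x) volume a b :=
  (P.continuous_aeval).intervalIntegrable a b

lemma poly_ibp_s12 (a b : ℝ) (s t : Polynomial ℝ) :
    ∫ x in a..b, s.derivative.eval x * t.eval x =
      s.eval b * t.eval b - s.eval a * t.eval a
        - ∫ x in a..b, s.eval x * t.derivative.eval x := by
  have h := integral_poly_derivative a b (s * t)
  rw [derivative_mul] at h
  have h2 : ∫ x in a..b, (s.derivative * t + s * t.derivative).eval x
      = (∫ x in a..b, s.derivative.eval x * t.eval x)
        + ∫ x in a..b, s.eval x * t.derivative.eval x := by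
    simp only [eval_add, eval_mul]
    exact intervalIntegral.integral_add
      ((s.derivative.continuous_aeval.mul t.continuous_aeval).intervalIntegrable a b)
      ((s.continuous_aeval.mul t.derivative.continuous_aeval).intervalIntegrable a b)
  rw [h2] at h
  simp only [eval_mul] at h
  linarith

lemma rod_base_vanish (a b : ℝ) (n k : ℕ) (hk : k < n) :
    (derivative^[k] (((X - C a) * (X - C b)) ^ n)).eval a = 0 ∧
    (derivative^[k] (((X - C a) * (X - C b)) ^ n)).eval b = 0 := by
  rw [mul_pow, Polynomial.iterate_derivative_mul]
  constructor <;>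
  · rw [eval_finset_sum]
    apply Finset.sum_eq_zero
    intro i hi
    simp only [Finset.mem_range, Nat.lt_succ_iff] at hi
    rw [Polynomial.iterate_derivative_X_sub_pow, Polynomial.iterate_derivative_X_sub_pow]
    simp only [smul_eq_mul, eval_smul, eval_mul, eval_pow, eval_sub, eval_X, eval_C]
    first
    | (rw [sub_self, zero_pow (by omega : n - (k - i) ≠ 0)]
       simp [smul_eq_mul])
    | (rw [sub_self, zero_pow (by omega : n - i ≠ 0)]
       simp [smul_eq_mul])

lemma ibp_iter (a b : ℝ) (m : ℕ) :
    ∀ A : Polynomial ℝ,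
    (∀ k < m, (derivative^[k] A).eval a = 0 ∧ (derivative^[k] A).eval b = 0) →
    ∀ g : Polynomial ℝ,
    ∫ x in a..b, (derivative^[m] A).eval x * g.eval x
      = (-1 : ℝ) ^ m * ∫ x in a..b, A.eval x * (derivative^[m] g).eval x := by
  induction m with
  | zero => intro A _ g; simp
  | succ m ih =>
    intro A hA g
    rw [Function.iterate_succ_apply,
      ih (derivative A)
        (fun k hk => by
          rw [← Function.iterate_succ_apply]
          exact hA (k + 1) (by omega)) g,
      poly_ibp_s12 a b A (derivative^[m] g)]
    have hA0 := hA 0 (by omega)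
    simp only [Function.iterate_zero_apply] at hA0
    rw [hA0.1, hA0.2]
    rw [show derivative ((⇑derivative)^[m] g) = derivative^[m+1] g from
      (Function.iterate_succ_apply' derivative m g).symm]
    ring

lemma rod_orth (a b : ℝ) (n : ℕ) (g : Polynomial ℝ) (hg : g.natDegree < n) :
    ∫ x in a..b, (Rod a b n).eval x * g.eval x = 0 := by
  rw [Rod, ibp_iter a b n _ (fun k hk => rod_base_vanish a b n k hk) g,
    Polynomial.iterate_derivative_eq_zero hg]
  simp

lemma sb_monic (a b : ℝ) (n : ℕ) : (((X - C a) * (X - C b) : Polynomial ℝ) ^ n).Monic :=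
  ((monic_X_sub_C a).mul (monic_X_sub_C b)).pow n

lemma sb_natDegree (a b : ℝ) (n : ℕ) :
    (((X - C a) * (X - C b) : Polynomial ℝ) ^ n).natDegree = 2 * n := by
  rw [natDegree_pow, natDegree_mul (X_sub_C_ne_zero a) (X_sub_C_ne_zero b)]
  simp [natDegree_X_sub_C]; ring

lemma rod_natDegree_le (a b : ℝ) (n : ℕ) : (Rod a b n).natDegree ≤ n := by
  have h := Polynomial.natDegree_iterate_derivative
    (((X - C a) * (X - C b) : Polynomial ℝ) ^ n) n
  rw [sb_natDegree] at h
  rw [Rod]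
  omega

lemma rod_coeff_self (a b : ℝ) (n : ℕ) :
    (Rod a b n).coeff n = ((2 * n).descFactorial n : ℝ) := by
  rw [Rod, Polynomial.coeff_iterate_derivative]
  have h2 : n + n = 2 * n := by ring
  rw [h2]
  have h3 : (((X - C a) * (X - C b) : Polynomial ℝ) ^ n).coeff (2 * n) = 1 := by
    have := (sb_monic a b n).coeff_natDegree
    rwa [sb_natDegree] at this
  rw [h3]
  simp

lemma rod_coeff_self_ne (a b : ℝ) (n : ℕ) : (Rod a b n).coeff n ≠ 0 := by
  rw [rod_coeff_self]
  have h : (2 * n).descFactorial n ≠ 0 := by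
    rw [Ne, Nat.descFactorial_eq_zero_iff_lt]
    omega
  exact_mod_cast h

lemma rod_expand (a b : ℝ) : ∀ (p : ℕ) (q : Polynomial ℝ), q.natDegree ≤ p →
    ∃ c : ℕ → ℝ, q = ∑ n ∈ Finset.range (p + 1), C (c n) * Rod a b n := by
  intro p
  induction p with
  | zero =>
    intro q hq
    refine ⟨fun _ => q.coeff 0, ?_⟩
    rw [Polynomial.eq_C_of_natDegree_le_zero hq]
    simp [Rod]
  | succ p ih =>
    intro q hq
    set d : ℝ := q.coeff (p + 1) / (Rod a b (p + 1)).coeff (p + 1) with hd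
    have hq' : (q - C d * Rod a b (p + 1)).natDegree ≤ p := by
      rw [Polynomial.natDegree_le_iff_coeff_eq_zero]
      intro m hm
      rw [Polynomial.coeff_sub, Polynomial.coeff_C_mul]
      rcases eq_or_lt_of_le (Nat.succ_le_of_lt hm) with h | h
      · rw [← h, hd, div_mul_cancel₀ _ (rod_coeff_self_ne a b (p + 1))]
        ring
      · rw [Polynomial.coeff_eq_zero_of_natDegree_lt (lt_of_le_of_lt hq h),
          Polynomial.coeff_eq_zero_of_natDegree_lt
            (lt_of_le_of_lt (rod_natDegree_le a b (p + 1)) h)]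
        ring
    obtain ⟨c, hc⟩ := ih _ hq'
    refine ⟨fun n => if n = p + 1 then d else c n, ?_⟩
    rw [Finset.sum_range_succ]
    have : ∑ n ∈ Finset.range (p + 1),
        C (if n = p + 1 then d else c n) * Rod a b n
        = ∑ n ∈ Finset.range (p + 1), C (c n) * Rod a b n := by
      apply Finset.sum_congr rfl
      intro n hn
      rw [Finset.mem_range] at hn
      rw [if_neg (by omega)]
    rw [this, ← hc]
    have h5 : (if p + 1 = p + 1 then d else c (p + 1)) = d := if_pos rfl
    show q = q - C d * Rod a b (p + 1) + C (if p + 1 = p + 1 then d else c (p + 1)) * Rod a b (p + 1)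
    rw [h5]
    ring

noncomputable def Jb (a b : ℝ) (n : ℕ) : ℝ := ∫ x in a..b, ((x - a) * (b - x)) ^ n

lemma jb_eq_poly (a b : ℝ) (n : ℕ) :
    Jb a b n = ∫ x in a..b, (((X - C a) * (C b - X) : Polynomial ℝ) ^ n).eval x := by
  rw [Jb]
  congr 1
  funext x
  simp

lemma jb_rec (a b : ℝ) (m : ℕ) :
    (4 * (m : ℝ) + 6) * Jb a b (m + 1) = ((m : ℝ) + 1) * (b - a) ^ 2 * Jb a b m := by
  set f : Polynomial ℝ := (X - C a) * (C b - X) with hf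
  have key : derivative (f ^ (m + 1) * (C 2 * X - C (a + b)))
      = C (4 * (m : ℝ) + 6) * f ^ (m + 1) - C (((m : ℝ) + 1) * (b - a) ^ 2) * f ^ m := by
    rw [derivative_mul, derivative_pow]
    simp only [hf, derivative_mul, derivative_sub, derivative_X, derivative_C,
      derivative_one, derivative_add, derivative_ofNat, map_sub, map_add,
      C_add, C_mul, C_pow, map_ofNat, C_1, Nat.add_sub_cancel]
    push_cast
    simp only [C_add, C_1]
    ring
  have hFTC := integral_poly_derivative a b (f ^ (m + 1) * (C 2 * X - C (a + b)))
  rw [key] at hFTC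
  have heval : ∀ x : ℝ, (f ^ (m + 1) * (C 2 * X - C (a + b))).eval x
      = ((x - a) * (b - x)) ^ (m + 1) * (2 * x - (a + b)) := by
    intro x; simp [hf]
  have hb0 : (f ^ (m + 1) * (C 2 * X - C (a + b))).eval b = 0 := by
    rw [heval]; simp
  have ha0 : (f ^ (m + 1) * (C 2 * X - C (a + b))).eval a = 0 := by
    rw [heval]; simp
  rw [hb0, ha0, sub_zero] at hFTC
  have hsplit : ∫ x in a..b,
      (C (4 * (m : ℝ) + 6) * f ^ (m + 1) - C (((m : ℝ) + 1) * (b - a) ^ 2) * f ^ m).eval x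
      = (4 * (m : ℝ) + 6) * Jb a b (m + 1) - ((m : ℝ) + 1) * (b - a) ^ 2 * Jb a b m := by
    simp only [eval_sub, eval_mul, eval_C]
    rw [intervalIntegral.integral_sub
      (f := fun x => (4 * (m : ℝ) + 6) * eval x (f ^ (m + 1)))
      (g := fun x => ((m : ℝ) + 1) * (b - a) ^ 2 * eval x (f ^ m))
      ((continuous_const.mul (f ^ (m + 1)).continuous).intervalIntegrable a b)
      ((continuous_const.mul (f ^ m).continuous).intervalIntegrable a b),
      intervalIntegral.integral_const_mul, intervalIntegral.integral_const_mul,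
      jb_eq_poly, jb_eq_poly]
  rw [hsplit] at hFTC
  linarith

lemma jb_closed (a b : ℝ) : ∀ n : ℕ,
    Jb a b n = (n.factorial : ℝ) ^ 2 * (b - a) ^ (2 * n + 1) / ((2 * n + 1).factorial : ℝ) := by
  intro n
  induction n with
  | zero => simp [Jb]
  | succ m ih =>
    have h46 : (4 * (m : ℝ) + 6) ≠ 0 := by positivity
    have hrec := jb_rec a b m
    have hJ : Jb a b (m + 1) = ((m : ℝ) + 1) * (b - a) ^ 2 * Jb a b m / (4 * (m : ℝ) + 6) := by
      field_simp
      linarith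
    rw [hJ, ih]
    have hf1 : (((m + 1).factorial : ℕ) : ℝ) = ((m : ℝ) + 1) * (m.factorial : ℝ) := by
      push_cast [Nat.factorial_succ, Nat.succ_eq_add_one]; ring
    have hf2 : (((2 * (m + 1) + 1).factorial : ℕ) : ℝ)
        = (2 * (m : ℝ) + 3) * ((2 * (m : ℝ) + 2) * ((2 * m + 1).factorial : ℝ)) := by
      have e1 : 2 * (m + 1) + 1 = (2 * m + 2) + 1 := by ring
      rw [e1, Nat.factorial_succ, Nat.factorial_succ]
      push_cast; ring
    rw [hf1, hf2]
    have hfac : ((2 * m + 1).factorial : ℝ) ≠ 0 := by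
      exact_mod_cast (2 * m + 1).factorial_ne_zero
    field_simp
    ring

lemma jb_pos (a b : ℝ) (hab : a < b) (n : ℕ) : 0 < Jb a b n := by
  rw [jb_closed]
  have h1 : (0 : ℝ) < b - a := by linarith
  have h2 : (0 : ℝ) < (n.factorial : ℝ) := by exact_mod_cast n.factorial_pos
  have h3 : (0 : ℝ) < ((2 * n + 1).factorial : ℝ) := by
    exact_mod_cast (2 * n + 1).factorial_pos
  positivity

lemma iter_derivative_rod (a b : ℝ) (n : ℕ) :
    derivative^[n] (Rod a b n) = C (((2 * n).factorial : ℝ)) := by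
  rw [Rod, ← Function.iterate_add_apply]
  have hdeg : (derivative^[n + n] (((X - C a) * (X - C b)) ^ n)).natDegree ≤ 0 := by
    have h := Polynomial.natDegree_iterate_derivative
      (((X - C a) * (X - C b) : Polynomial ℝ) ^ n) (n + n)
    rw [sb_natDegree] at h
    omega
  rw [Polynomial.eq_C_of_natDegree_le_zero hdeg, Polynomial.coeff_iterate_derivative]
  have h3 : (((X - C a) * (X - C b) : Polynomial ℝ) ^ n).coeff (0 + (n + n)) = 1 := by
    have := (sb_monic a b n).coeff_natDegree
    rw [sb_natDegree] at this
    rw [show 0 + (n + n) = 2 * n by ring, this]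
  rw [h3, show n + n = 2 * n from by ring]
  simp [Nat.descFactorial_self]

lemma rod_norm (a b : ℝ) (n : ℕ) :
    ∫ x in a..b, (Rod a b n).eval x * (Rod a b n).eval x
      = ((2 * n).factorial : ℝ) * Jb a b n := by
  have h := ibp_iter a b n (((X - C a) * (X - C b)) ^ n)
    (fun k hk => rod_base_vanish a b n k hk) (Rod a b n)
  rw [show (derivative^[n] (((X - C a) * (X - C b)) ^ n) : Polynomial ℝ) = Rod a b n from rfl]
    at h
  rw [h, iter_derivative_rod]
  have h2 : ∀ x : ℝ, ((((X - C a) * (X - C b)) ^ n : Polynomial ℝ)).eval x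
      * (C (((2 * n).factorial : ℝ)) : Polynomial ℝ).eval x
      = (-1 : ℝ) ^ n * (((2 * n).factorial : ℝ) * ((x - a) * (b - x)) ^ n) := by
    intro x
    simp only [eval_pow, eval_mul, eval_sub, eval_X, eval_C]
    rw [show (x - a) * (x - b) = (-1) * ((x - a) * (b - x)) from by ring, mul_pow]
    ring
  rw [intervalIntegral.integral_congr (fun x _ => h2 x),
    intervalIntegral.integral_const_mul, intervalIntegral.integral_const_mul,
    show (∫ x in a..b, ((x - a) * (b - x)) ^ n) = Jb a b n from rfl]
  have hpm : (-1 : ℝ) ^ n * (-1 : ℝ) ^ n = 1 := by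
    rw [← pow_add]
    exact Even.neg_one_pow ⟨n, rfl⟩
  calc (-1 : ℝ) ^ n * ((-1 : ℝ) ^ n * (((2 * n).factorial : ℝ) * Jb a b n))
      = ((-1 : ℝ) ^ n * (-1 : ℝ) ^ n) * (((2 * n).factorial : ℝ) * Jb a b n) := by ring
    _ = ((2 * n).factorial : ℝ) * Jb a b n := by rw [hpm]; ring

lemma rod_eval_b (a b : ℝ) (n : ℕ) :
    (Rod a b n).eval b = (n.factorial : ℝ) * (b - a) ^ n := by
  rw [Rod, mul_pow, Polynomial.iterate_derivative_mul, eval_finset_sum]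
  rw [Finset.sum_eq_single n]
  · simp [Polynomial.iterate_derivative_X_sub_pow_self, smul_eq_mul, mul_comm]
  · intro i hi hne
    rw [Finset.mem_range] at hi
    have hilt : i < n := by omega
    rw [Polynomial.iterate_derivative_X_sub_pow n i b]
    simp only [eval_smul, eval_mul, eval_pow, eval_sub, eval_X, eval_C, smul_eq_mul]
    rw [sub_self, zero_pow (by omega : n - i ≠ 0)]
    simp
  · intro h
    exact absurd (Finset.mem_range.mpr (by omega)) h

lemma rod_eval_a (a b : ℝ) (n : ℕ) :
    (Rod a b n).eval a = (n.factorial : ℝ) * (a - b) ^ n := by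
  rw [Rod, mul_pow, Polynomial.iterate_derivative_mul, eval_finset_sum]
  rw [Finset.sum_eq_single 0]
  · simp [Polynomial.iterate_derivative_X_sub_pow_self, smul_eq_mul, mul_comm]
  · intro i hi hne
    rw [Finset.mem_range] at hi
    rw [Polynomial.iterate_derivative_X_sub_pow n (n - i) a]
    simp only [eval_smul, eval_mul, eval_pow, eval_sub, eval_X, eval_C, smul_eq_mul]
    rw [sub_self, zero_pow (by omega : n - (n - i) ≠ 0)]
    simp
  · intro h
    exact absurd (Finset.mem_range.mpr (by omega)) h

lemma rod_deriv_eval_b (a b : ℝ) (n : ℕ) :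
    (derivative (Rod a b n)).eval b
      = ((n + 1).factorial : ℝ) * n * (b - a) ^ (n - 1) := by
  rw [Rod, ← Function.iterate_succ_apply' derivative n, mul_pow,
    Polynomial.iterate_derivative_mul, eval_finset_sum]
  rw [Finset.sum_eq_single n]
  · rw [show n + 1 - n = 1 from by omega,
      Polynomial.iterate_derivative_X_sub_pow n 1 a,
      Polynomial.iterate_derivative_X_sub_pow_self n b]
    simp only [eval_smul, eval_mul, eval_pow, eval_sub, eval_X, eval_C, smul_eq_mul,
      Nat.choose_succ_self_right, eval_natCast, Nat.descFactorial_one]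
    push_cast [Nat.factorial_succ, Nat.succ_eq_add_one]
    ring
  · intro i hi hne
    rw [Finset.mem_range] at hi
    rcases Nat.lt_or_ge i n with h | h
    · rw [Polynomial.iterate_derivative_X_sub_pow n i b]
      simp only [eval_smul, eval_mul, eval_pow, eval_sub, eval_X, eval_C, smul_eq_mul]
      rw [sub_self, zero_pow (by omega : n - i ≠ 0)]
      simp
    · have hi1 : i = n + 1 := by omega
      subst hi1
      rw [Polynomial.iterate_derivative_X_sub_pow n (n + 1) b,
        Nat.descFactorial_eq_zero_iff_lt.mpr (by omega)]
      simp
  · intro h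
    exact absurd (Finset.mem_range.mpr (by omega)) h

lemma rod_deriv_eval_a (a b : ℝ) (n : ℕ) :
    (derivative (Rod a b n)).eval a
      = ((n + 1).factorial : ℝ) * n * (a - b) ^ (n - 1) := by
  rw [Rod, ← Function.iterate_succ_apply' derivative n, mul_pow,
    Polynomial.iterate_derivative_mul, eval_finset_sum]
  rw [Finset.sum_eq_single 1]
  · rw [show n + 1 - 1 = n from by omega,
      Polynomial.iterate_derivative_X_sub_pow n 1 b,
      Polynomial.iterate_derivative_X_sub_pow_self n a]
    simp only [eval_smul, eval_mul, eval_pow, eval_sub, eval_X, eval_C, smul_eq_mul,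
      Nat.choose_one_right, eval_natCast, Nat.descFactorial_one]
    push_cast [Nat.factorial_succ, Nat.succ_eq_add_one]
    ring
  · intro i hi hne
    rw [Finset.mem_range] at hi
    rcases Nat.lt_or_ge (n + 1 - i) n with h | h
    · rw [Polynomial.iterate_derivative_X_sub_pow n (n + 1 - i) a]
      simp only [eval_smul, eval_mul, eval_pow, eval_sub, eval_X, eval_C, smul_eq_mul]
      rw [sub_self, zero_pow (by omega : n - (n + 1 - i) ≠ 0)]
      simp
    · have hi0 : i = 0 := by omega
      subst hi0
      rw [show n + 1 - 0 = n + 1 from rfl,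
        Polynomial.iterate_derivative_X_sub_pow n (n + 1) a,
        Nat.descFactorial_eq_zero_iff_lt.mpr (by omega)]
      simp
  · intro h
    exact absurd (Finset.mem_range.mpr (by omega)) h

lemma rod_deriv_norm (a b : ℝ) (n : ℕ) (hn : 1 ≤ n) :
    ∫ x in a..b, (derivative (Rod a b n)).eval x * (derivative (Rod a b n)).eval x
      = 2 * n * (((n + 1).factorial : ℝ) * (n.factorial : ℝ)) * (b - a) ^ (2 * n - 1) := by
  have horth : ∫ x in a..b,
      (Rod a b n).eval x * (derivative (derivative (Rod a b n))).eval x = 0 := by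
    apply rod_orth
    have h1 := Polynomial.natDegree_derivative_le (Rod a b n)
    have h2 := Polynomial.natDegree_derivative_le (derivative (Rod a b n))
    have h3 := rod_natDegree_le a b n
    omega
  have h := poly_ibp_s12 a b (Rod a b n) (derivative (Rod a b n))
  rw [horth, sub_zero, rod_eval_b, rod_eval_a, rod_deriv_eval_b, rod_deriv_eval_a] at h
  have e1 : (b - a) ^ n * (b - a) ^ (n - 1) = (b - a) ^ (2 * n - 1) := by
    rw [← pow_add]
    congr 1
    omega
  have e2 : (a - b) ^ n * (a - b) ^ (n - 1) = -((b - a) ^ (2 * n - 1)) := by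
    rw [← pow_add, show a - b = -(b - a) from by ring]
    have hodd : Odd (n + (n - 1)) := by
      refine ⟨n - 1, by omega⟩
    rw [hodd.neg_pow]
    congr 2
    omega
  rw [h,
    show ((n.factorial : ℝ) * (b - a) ^ n) * (((n + 1).factorial : ℝ) * n * (b - a) ^ (n - 1))
      = ((n.factorial : ℝ) * (((n + 1).factorial : ℝ) * n)) * ((b - a) ^ n * (b - a) ^ (n - 1))
      from by ring,
    show ((n.factorial : ℝ) * (a - b) ^ n) * (((n + 1).factorial : ℝ) * n * (a - b) ^ (n - 1))
      = ((n.factorial : ℝ) * (((n + 1).factorial : ℝ) * n)) * ((a - b) ^ n * (a - b) ^ (n - 1))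
      from by ring,
    e1, e2]
  ring

lemma rod_ratio (a b : ℝ) (hab : a < b) (p n : ℕ) (hnp : n ≤ p) :
    ∫ x in a..b, (derivative (Rod a b n)).eval x * (derivative (Rod a b n)).eval x
      ≤ 4 * ((p : ℝ) + 1) ^ 3 / (b - a) ^ 2
        * ∫ x in a..b, (Rod a b n).eval x * (Rod a b n).eval x := by
  have hba : (0 : ℝ) < b - a := by linarith
  rcases Nat.eq_zero_or_pos n with rfl | hn
  · have h0 : Rod a b 0 = 1 := by simp [Rod]
    rw [h0]
    simp only [derivative_one, eval_zero, zero_mul, eval_one, mul_one,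
      intervalIntegral.integral_zero, intervalIntegral.integral_const, smul_eq_mul]
    have h1 : (0 : ℝ) ≤ 4 * ((p : ℝ) + 1) ^ 3 / (b - a) ^ 2 := by positivity
    nlinarith
  · rw [rod_deriv_norm a b n hn, rod_norm, jb_closed]
    have hfac : ((2 * n + 1).factorial : ℝ)
        = (2 * (n : ℝ) + 1) * ((2 * n).factorial : ℝ) := by
      rw [Nat.factorial_succ]
      push_cast
      ring
    have hpow : (b - a) ^ (2 * n + 1) = (b - a) ^ (2 * n - 1) * (b - a) ^ 2 := by
      rw [← pow_add]
      congr 1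
      omega
    rw [hfac]
    have h2n : (0 : ℝ) < 2 * (n : ℝ) + 1 := by positivity
    have hne : ((2 * n).factorial : ℝ) ≠ 0 := by
      exact_mod_cast (2 * n).factorial_ne_zero
    have hRHS : 4 * ((p : ℝ) + 1) ^ 3 / (b - a) ^ 2
        * (((2 * n).factorial : ℝ) * ((n.factorial : ℝ) ^ 2 * (b - a) ^ (2 * n + 1)
            / ((2 * (n : ℝ) + 1) * ((2 * n).factorial : ℝ))))
        = (4 * ((p : ℝ) + 1) ^ 3 * (n.factorial : ℝ) ^ 2 / (2 * (n : ℝ) + 1))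
            * (b - a) ^ (2 * n - 1) := by
      rw [hpow]
      field_simp
    rw [hRHS]
    apply mul_le_mul_of_nonneg_right _ (pow_nonneg hba.le _)
    rw [le_div_iff₀ h2n]
    have hc : (n : ℝ) ≤ (p : ℝ) := by exact_mod_cast hnp
    have hnn : (0 : ℝ) ≤ (n : ℝ) := Nat.cast_nonneg n
    have h1 : (n : ℝ) + 1 ≤ (p : ℝ) + 1 := by linarith
    have h2 : 2 * (n : ℝ) ≤ 2 * ((p : ℝ) + 1) := by linarith
    have h3 : 2 * (n : ℝ) + 1 ≤ 2 * ((p : ℝ) + 1) := by linarith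
    have h4 : 2 * (n : ℝ) * ((n : ℝ) + 1) ≤ 2 * ((p : ℝ) + 1) * ((p : ℝ) + 1) :=
      mul_le_mul h2 h1 (by positivity) (by positivity)
    have h5 : 2 * (n : ℝ) * ((n : ℝ) + 1) * (2 * (n : ℝ) + 1)
        ≤ 2 * ((p : ℝ) + 1) * ((p : ℝ) + 1) * (2 * ((p : ℝ) + 1)) :=
      mul_le_mul h4 h3 (by positivity) (by positivity)
    have hkey : 2 * (n : ℝ) * (((n : ℝ) + 1) * 1) * (2 * (n : ℝ) + 1)
        ≤ 4 * ((p : ℝ) + 1) ^ 3 := by nlinarith [h5]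
    have hfp : (0 : ℝ) < (n.factorial : ℝ) := by exact_mod_cast n.factorial_pos
    push_cast [Nat.factorial_succ]
    nlinarith [mul_le_mul_of_nonneg_right hkey (sq_nonneg (n.factorial : ℝ))]

lemma integral_cs (a b : ℝ) (hab : a ≤ b) (f g : ℝ → ℝ)
    (hf2 : IntervalIntegrable (fun x => f x * f x) volume a b)
    (hg2 : IntervalIntegrable (fun x => g x * g x) volume a b)
    (hfg : IntervalIntegrable (fun x => f x * g x) volume a b) :
    (∫ x in a..b, f x * g x) ^ 2
      ≤ (∫ x in a..b, f x * f x) * ∫ x in a..b, g x * g x := by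
  set A := ∫ x in a..b, f x * f x with hA
  set B := ∫ x in a..b, f x * g x with hB
  set Cc := ∫ x in a..b, g x * g x with hCc
  have key : ∀ t : ℝ, 0 ≤ A * (t * t) + (2 * B) * t + Cc := by
    intro t
    have expand : ∫ x in a..b,
        (t * t * (f x * f x) + 2 * t * (f x * g x) + g x * g x)
        = A * (t * t) + (2 * B) * t + Cc := by
      rw [intervalIntegral.integral_add (((hf2.const_mul _).add (hfg.const_mul _)))
          hg2,
        intervalIntegral.integral_add (hf2.const_mul _) (hfg.const_mul _),
        intervalIntegral.integral_const_mul, intervalIntegral.integral_const_mul]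
      ring
    rw [← expand]
    apply intervalIntegral.integral_nonneg hab
    intro x _
    have : t * t * (f x * f x) + 2 * t * (f x * g x) + g x * g x
        = (t * f x + g x) * (t * f x + g x) := by ring
    rw [this]
    exact mul_self_nonneg _
  have hd := discrim_le_zero key
  rw [discrim] at hd
  nlinarith [hd]

lemma integral_abs_cs (a b : ℝ) (hab : a ≤ b) (f g : ℝ → ℝ)
    (hf2 : IntervalIntegrable (fun x => f x * f x) volume a b)
    (hg2 : IntervalIntegrable (fun x => g x * g x) volume a b)
    (hfg : IntervalIntegrable (fun x => f x * g x) volume a b) :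
    |∫ x in a..b, f x * g x|
      ≤ Real.sqrt (∫ x in a..b, f x * f x) * Real.sqrt (∫ x in a..b, g x * g x) := by
  have h := integral_cs a b hab f g hf2 hg2 hfg
  have hA : (0 : ℝ) ≤ ∫ x in a..b, f x * f x :=
    intervalIntegral.integral_nonneg hab fun x _ => mul_self_nonneg _
  have hC : (0 : ℝ) ≤ ∫ x in a..b, g x * g x :=
    intervalIntegral.integral_nonneg hab fun x _ => mul_self_nonneg _
  calc |∫ x in a..b, f x * g x| = Real.sqrt ((∫ x in a..b, f x * g x) ^ 2) :=
        (Real.sqrt_sq_eq_abs _).symm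
    _ ≤ Real.sqrt ((∫ x in a..b, f x * f x) * ∫ x in a..b, g x * g x) :=
        Real.sqrt_le_sqrt h
    _ = _ := Real.sqrt_mul hA _

lemma pip_expand (a b : ℝ) (c : ℕ → ℝ) (s : Finset ℕ) (F : ℕ → Polynomial ℝ)
    (t : Polynomial ℝ) :
    ∫ x in a..b, (∑ n ∈ s, C (c n) * F n).eval x * t.eval x
      = ∑ n ∈ s, c n * ∫ x in a..b, (F n).eval x * t.eval x := by
  have h1 : ∀ x : ℝ, (∑ n ∈ s, C (c n) * F n).eval x * t.eval x
      = ∑ n ∈ s, c n * ((F n).eval x * t.eval x) := by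
    intro x
    rw [eval_finset_sum, Finset.sum_mul]
    apply Finset.sum_congr rfl
    intro n _
    simp only [eval_mul, eval_C]
    ring
  rw [intervalIntegral.integral_congr (fun x _ => h1 x),
    intervalIntegral.integral_finset_sum]
  · apply Finset.sum_congr rfl
    intro n _
    rw [intervalIntegral.integral_const_mul]
  · intro n _
    exact (continuous_const.mul ((F n).continuous.mul t.continuous)).intervalIntegrable a b

lemma rod_rod_zero (a b : ℝ) (m n : ℕ) (hmn : m ≠ n) :
    ∫ x in a..b, (Rod a b m).eval x * (Rod a b n).eval x = 0 := by
  rcases Nat.lt_or_ge m n with h | h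
  · have := rod_orth a b n (Rod a b m) (lt_of_le_of_lt (rod_natDegree_le a b m) h)
    rw [← this]
    apply intervalIntegral.integral_congr
    intro x _
    ring
  · have hn : n < m := by omega
    exact rod_orth a b m (Rod a b n) (lt_of_le_of_lt (rod_natDegree_le a b n) hn)

lemma rod_norm_pos (a b : ℝ) (hab : a < b) (n : ℕ) :
    0 < ∫ x in a..b, (Rod a b n).eval x * (Rod a b n).eval x := by
  rw [rod_norm]
  have h1 : (0 : ℝ) < ((2 * n).factorial : ℝ) := by exact_mod_cast (2 * n).factorial_pos
  exact mul_pos h1 (jb_pos a b hab n)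

lemma markov (a b : ℝ) (hab : a < b) (p : ℕ) (q : Polynomial ℝ) (hq : q.natDegree ≤ p) :
    ∫ x in a..b, q.derivative.eval x * q.derivative.eval x
      ≤ 4 * ((p : ℝ) + 1) ^ 4 / (b - a) ^ 2 * ∫ x in a..b, q.eval x * q.eval x := by
  obtain ⟨c, hc⟩ := rod_expand a b p q hq
  have hab' : a ≤ b := hab.le
  set s : Finset ℕ := Finset.range (p + 1) with hs
  set D : ℕ → ℝ := fun n => ∫ x in a..b, (Rod a b n).eval x * (Rod a b n).eval x with hD
  set Nd : ℕ → ℝ := fun n =>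
    ∫ x in a..b, (derivative (Rod a b n)).eval x * (derivative (Rod a b n)).eval x with hNd
  have hDpos : ∀ n, 0 < D n := fun n => rod_norm_pos a b hab n
  have hNdnn : ∀ n, 0 ≤ Nd n := fun n =>
    intervalIntegral.integral_nonneg hab' fun x _ => mul_self_nonneg _
  -- expansion of q's norm
  have hqq : ∫ x in a..b, q.eval x * q.eval x = ∑ n ∈ s, (c n) ^ 2 * D n := by
    conv_lhs => rw [hc]
    rw [pip_expand]
    apply Finset.sum_congr rfl
    intro n hn
    have flip : ∫ x in a..b, (Rod a b n).eval x
        * (∑ m ∈ s, C (c m) * Rod a b m).eval x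
        = ∫ x in a..b, (∑ m ∈ s, C (c m) * Rod a b m).eval x * (Rod a b n).eval x := by
      apply intervalIntegral.integral_congr; intro x _; ring
    rw [flip, pip_expand, Finset.sum_eq_single n]
    · ring
    · intro m hm hmn
      rw [rod_rod_zero a b m n hmn]
      ring
    · intro hn'; exact absurd hn hn'
  -- derivative of q
  have hc' : q.derivative = ∑ n ∈ s, C (c n) * derivative (Rod a b n) := by
    rw [hc, derivative_sum]
    apply Finset.sum_congr rfl
    intro n _
    rw [derivative_C_mul]
  -- N q' ≤ (sum |c_n| sqrt (Nd n)) * sqrt (N q')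
  set Nq' : ℝ := ∫ x in a..b, q.derivative.eval x * q.derivative.eval x with hNq'
  have hNq'nn : 0 ≤ Nq' :=
    intervalIntegral.integral_nonneg hab' fun x _ => mul_self_nonneg _
  have step1 : Nq' ≤ (∑ n ∈ s, |c n| * Real.sqrt (Nd n)) * Real.sqrt Nq' := by
    have h1 : Nq' = ∑ n ∈ s, c n
        * ∫ x in a..b, (derivative (Rod a b n)).eval x * q.derivative.eval x := by
      rw [hNq']
      conv_lhs => rw [hc']
      rw [pip_expand]
      simp only [← hc']
    calc Nq' = ∑ n ∈ s, c n
          * ∫ x in a..b, (derivative (Rod a b n)).eval x * q.derivative.eval x := h1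
      _ ≤ (∑ n ∈ s, |c n| * Real.sqrt (Nd n)) * Real.sqrt Nq' := ?_
    rw [Finset.sum_mul]
    apply Finset.sum_le_sum
    intro n _
    calc c n * ∫ x in a..b, (derivative (Rod a b n)).eval x * q.derivative.eval x
        ≤ |c n * ∫ x in a..b, (derivative (Rod a b n)).eval x * q.derivative.eval x| :=
          le_abs_self _
      _ = |c n| * |∫ x in a..b, (derivative (Rod a b n)).eval x * q.derivative.eval x| :=
          abs_mul _ _
      _ ≤ |c n| * (Real.sqrt (Nd n) * Real.sqrt Nq') := by
          apply mul_le_mul_of_nonneg_left _ (abs_nonneg _)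
          exact integral_abs_cs a b hab' _ _
            (((derivative (Rod a b n)).continuous.mul
              (derivative (Rod a b n)).continuous).intervalIntegrable a b)
            ((q.derivative.continuous.mul q.derivative.continuous).intervalIntegrable a b)
            (((derivative (Rod a b n)).continuous.mul
              q.derivative.continuous).intervalIntegrable a b)
      _ = |c n| * Real.sqrt (Nd n) * Real.sqrt Nq' := by ring
  -- Cauchy-Schwarz on the finite sum
  have step2 : (∑ n ∈ s, |c n| * Real.sqrt (Nd n)) ^ 2
      ≤ (∑ n ∈ s, (c n) ^ 2 * D n) * ∑ n ∈ s, Nd n / D n := by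
    have hpt : ∀ n ∈ s, |c n| * Real.sqrt (Nd n)
        = (|c n| * Real.sqrt (D n)) * (Real.sqrt (Nd n) / Real.sqrt (D n)) := by
      intro n _
      have hDn := hDpos n
      have hsD : Real.sqrt (D n) ≠ 0 := by
        exact Real.sqrt_ne_zero'.mpr hDn
      field_simp
    rw [Finset.sum_congr rfl hpt]
    calc (∑ n ∈ s, (|c n| * Real.sqrt (D n)) * (Real.sqrt (Nd n) / Real.sqrt (D n))) ^ 2
        ≤ (∑ n ∈ s, (|c n| * Real.sqrt (D n)) ^ 2)
          * ∑ n ∈ s, (Real.sqrt (Nd n) / Real.sqrt (D n)) ^ 2 :=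
          Finset.sum_mul_sq_le_sq_mul_sq s _ _
      _ = (∑ n ∈ s, (c n) ^ 2 * D n) * ∑ n ∈ s, Nd n / D n := by
          congr 1
          · apply Finset.sum_congr rfl
            intro n _
            rw [mul_pow, sq_abs, Real.sq_sqrt (hDpos n).le]
          · apply Finset.sum_congr rfl
            intro n _
            rw [div_pow, Real.sq_sqrt (hNdnn n), Real.sq_sqrt (hDpos n).le]
  -- bound the ratios
  have step3 : ∑ n ∈ s, Nd n / D n ≤ ((p : ℝ) + 1) * (4 * ((p : ℝ) + 1) ^ 3 / (b - a) ^ 2) := by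
    have hcard : (s.card : ℝ) = (p : ℝ) + 1 := by
      rw [hs, Finset.card_range]; push_cast; ring
    have hb := Finset.sum_le_card_nsmul s (fun n => Nd n / D n)
      (4 * ((p : ℝ) + 1) ^ 3 / (b - a) ^ 2) ?_
    · rw [nsmul_eq_mul, hcard] at hb
      exact hb
    · intro n hn
      rw [hs, Finset.mem_range] at hn
      show Nd n / D n ≤ _
      rw [div_le_iff₀ (hDpos n)]
      exact rod_ratio a b hab p n (by omega)
  -- combine
  rcases eq_or_lt_of_le hNq'nn with h0 | hpos
  · rw [← h0]
    have h1 : (0 : ℝ) ≤ 4 * ((p : ℝ) + 1) ^ 4 / (b - a) ^ 2 := by positivity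
    have h2 : (0 : ℝ) ≤ ∫ x in a..b, q.eval x * q.eval x :=
      intervalIntegral.integral_nonneg hab' fun x _ => mul_self_nonneg _
    exact mul_nonneg h1 h2
  · have hsqrt : Real.sqrt Nq' ≤ ∑ n ∈ s, |c n| * Real.sqrt (Nd n) := by
      have hs' : 0 < Real.sqrt Nq' := Real.sqrt_pos.mpr hpos
      have h2 : Real.sqrt Nq' * Real.sqrt Nq'
          ≤ (∑ n ∈ s, |c n| * Real.sqrt (Nd n)) * Real.sqrt Nq' := by
        rw [Real.mul_self_sqrt hNq'nn]
        exact step1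
      exact le_of_mul_le_mul_right h2 hs'
    have h4 : Nq' ≤ (∑ n ∈ s, |c n| * Real.sqrt (Nd n)) ^ 2 := by
      have := pow_le_pow_left₀ (Real.sqrt_nonneg _) hsqrt 2
      rwa [Real.sq_sqrt hNq'nn] at this
    calc Nq' ≤ (∑ n ∈ s, |c n| * Real.sqrt (Nd n)) ^ 2 := h4
      _ ≤ (∑ n ∈ s, (c n) ^ 2 * D n) * ∑ n ∈ s, Nd n / D n := step2
      _ ≤ (∑ n ∈ s, (c n) ^ 2 * D n)
          * (((p : ℝ) + 1) * (4 * ((p : ℝ) + 1) ^ 3 / (b - a) ^ 2)) := by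
          apply mul_le_mul_of_nonneg_left step3
          apply Finset.sum_nonneg
          intro n _
          exact mul_nonneg (sq_nonneg _) (hDpos n).le
      _ = 4 * ((p : ℝ) + 1) ^ 4 / (b - a) ^ 2 * ∑ n ∈ s, (c n) ^ 2 * D n := by ring
      _ = 4 * ((p : ℝ) + 1) ^ 4 / (b - a) ^ 2 * ∫ x in a..b, q.eval x * q.eval x := by
          rw [hqq]

/-- General one-dimensional bound on the convection term `T₂` for a Lipschitz
coefficient: there is `C > 0` such that for every interval `(a, b)`, every `f`
Lipschitz on `[a, b]` with constant `L`, every polynomial `q` of degree at most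
`p`, and every L²(a,b)-orthogonal projection `P` of a continuous `u` onto
polynomials of degree at most `p`,
`|∫_a^b f q' (u - P)| ≤ C L (p+1)^2 ‖q‖_{L²(a,b)} ‖u - P‖_{L²(a,b)}`. -/
theorem general_T2_bound_one_dimensional :
    ∃ C : ℝ, 0 < C ∧ ∀ (a b : ℝ), a < b → ∀ (f : ℝ → ℝ) (L : ℝ),
      (∀ x ∈ Set.Icc a b, ∀ y ∈ Set.Icc a b, |f x - f y| ≤ L * |x - y|) →
      ∀ (p : ℕ) (q : Polynomial ℝ), q.natDegree ≤ p →
      ∀ u : ℝ → ℝ, ContinuousOn u (Set.Icc a b) →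
      ∀ P : Polynomial ℝ, P.natDegree ≤ p →
      (∀ r : Polynomial ℝ, r.natDegree ≤ p →
        ∫ x in a..b, (u x - P.eval x) * r.eval x = 0) →
      |∫ x in a..b, f x * q.derivative.eval x * (u x - P.eval x)| ≤
        C * L * ((p : ℝ) + 1) ^ 2 *
          Real.sqrt (∫ x in a..b, (q.eval x) ^ 2) *
          Real.sqrt (∫ x in a..b, (u x - P.eval x) ^ 2) := by
  refine ⟨2, by norm_num, ?_⟩
  intro a b hab f L hLip p q hq u hu P hP horth
  have hab' : a ≤ b := hab.le
  have hba : (0 : ℝ) < b - a := by linarith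
  have ha : a ∈ Set.Icc a b := Set.left_mem_Icc.mpr hab'
  -- continuity of f on [a,b]
  have hfc : ContinuousOn f (Set.Icc a b) := by
    have : LipschitzOnWith (Real.toNNReal L) f (Set.Icc a b) := by
      apply LipschitzOnWith.of_dist_le_mul
      intro x hx y hy
      rw [Real.dist_eq, Real.dist_eq]
      calc |f x - f y| ≤ L * |x - y| := hLip x hx y hy
        _ ≤ Real.toNNReal L * |x - y| :=
          mul_le_mul_of_nonneg_right (Real.le_coe_toNNReal L) (abs_nonneg _)
    exact this.continuousOn
  have hL : 0 ≤ L := by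
    have h := hLip b (Set.right_mem_Icc.mpr hab') a ha
    have h2 : |b - a| = b - a := abs_of_pos hba
    rw [h2] at h
    nlinarith [abs_nonneg (f b - f a)]
  set η : ℝ → ℝ := fun x => u x - P.eval x with hη
  have hηcont : ContinuousOn η (Set.Icc a b) := hu.sub P.continuous.continuousOn
  have hq' : q.derivative.natDegree ≤ p :=
    le_trans (Polynomial.natDegree_derivative_le q) (by omega)
  have horth1 : ∫ x in a..b, η x * q.derivative.eval x = 0 := horth q.derivative hq'
  -- interval integrability helpers
  have hIcc : Set.uIcc a b = Set.Icc a b := Set.uIcc_of_le hab'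
  have hint1 : IntervalIntegrable (fun x => (f x - f a) * q.derivative.eval x * η x)
      volume a b := by
    apply ContinuousOn.intervalIntegrable
    rw [hIcc]
    exact ((hfc.sub continuousOn_const).mul q.derivative.continuous.continuousOn).mul hηcont
  have hint2 : IntervalIntegrable (fun x => f a * (η x * q.derivative.eval x))
      volume a b := by
    apply ContinuousOn.intervalIntegrable
    rw [hIcc]
    exact continuousOn_const.mul (hηcont.mul q.derivative.continuous.continuousOn)
  have hintabs : IntervalIntegrable (fun x => |(f x - f a) * q.derivative.eval x * η x|)
      volume a b := by
    apply ContinuousOn.intervalIntegrable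
    rw [hIcc]
    exact (((hfc.sub continuousOn_const).mul
      q.derivative.continuous.continuousOn).mul hηcont).abs
  have hintqe : IntervalIntegrable (fun x => |q.derivative.eval x| * |η x|) volume a b := by
    apply ContinuousOn.intervalIntegrable
    rw [hIcc]
    exact (q.derivative.continuous.continuousOn.abs).mul hηcont.abs
  -- subtract the constant f a using orthogonality
  have hsplit : ∫ x in a..b, f x * q.derivative.eval x * η x
      = ∫ x in a..b, (f x - f a) * q.derivative.eval x * η x := by
    have hpt : ∀ x, f x * q.derivative.eval x * η x
        = (f x - f a) * q.derivative.eval x * η x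
          + f a * (η x * q.derivative.eval x) := by
      intro x; ring
    rw [intervalIntegral.integral_congr (fun x _ => hpt x),
      intervalIntegral.integral_add hint1 hint2,
      intervalIntegral.integral_const_mul, horth1]
    ring
  -- pointwise bound
  have hbound : ∀ x ∈ Set.Icc a b, |(f x - f a) * q.derivative.eval x * η x|
      ≤ L * (b - a) * (|q.derivative.eval x| * |η x|) := by
    intro x hx
    rw [abs_mul, abs_mul]
    have h1 : |f x - f a| ≤ L * (b - a) := by
      calc |f x - f a| ≤ L * |x - a| := hLip x hx a ha
        _ ≤ L * (b - a) := by
            apply mul_le_mul_of_nonneg_left _ hL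
            rw [abs_of_nonneg (by linarith [hx.1] : (0:ℝ) ≤ x - a)]
            linarith [hx.2]
    calc |f x - f a| * |q.derivative.eval x| * |η x|
        ≤ L * (b - a) * |q.derivative.eval x| * |η x| := by
          apply mul_le_mul_of_nonneg_right _ (abs_nonneg _)
          exact mul_le_mul_of_nonneg_right h1 (abs_nonneg _)
      _ = L * (b - a) * (|q.derivative.eval x| * |η x|) := by ring
  -- CS for |q'| and |η|
  have hcs : ∫ x in a..b, |q.derivative.eval x| * |η x|
      ≤ Real.sqrt (∫ x in a..b, q.derivative.eval x * q.derivative.eval x)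
        * Real.sqrt (∫ x in a..b, η x * η x) := by
    have h := integral_abs_cs a b hab' (fun x => |q.derivative.eval x|) (fun x => |η x|)
      (by
        apply ContinuousOn.intervalIntegrable
        rw [hIcc]
        exact q.derivative.continuous.continuousOn.abs.mul
          q.derivative.continuous.continuousOn.abs)
      (by
        apply ContinuousOn.intervalIntegrable
        rw [hIcc]
        exact hηcont.abs.mul hηcont.abs)
      hintqe
    have e1 : ∫ x in a..b, |q.derivative.eval x| * |q.derivative.eval x|
        = ∫ x in a..b, q.derivative.eval x * q.derivative.eval x :=
      intervalIntegral.integral_congr fun x _ => abs_mul_abs_self _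
    have e2 : ∫ x in a..b, |η x| * |η x| = ∫ x in a..b, η x * η x :=
      intervalIntegral.integral_congr fun x _ => abs_mul_abs_self _
    rw [e1, e2] at h
    exact le_trans (le_abs_self _) h
  -- Markov in sqrt form
  have hmark : Real.sqrt (∫ x in a..b, q.derivative.eval x * q.derivative.eval x)
      ≤ 2 * ((p : ℝ) + 1) ^ 2 / (b - a)
        * Real.sqrt (∫ x in a..b, q.eval x * q.eval x) := by
    have h := markov a b hab p q hq
    have hsq : 4 * ((p : ℝ) + 1) ^ 4 / (b - a) ^ 2
        = (2 * ((p : ℝ) + 1) ^ 2 / (b - a)) ^ 2 := by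
      field_simp
      ring
    calc Real.sqrt (∫ x in a..b, q.derivative.eval x * q.derivative.eval x)
        ≤ Real.sqrt (4 * ((p : ℝ) + 1) ^ 4 / (b - a) ^ 2
            * ∫ x in a..b, q.eval x * q.eval x) := Real.sqrt_le_sqrt h
      _ = 2 * ((p : ℝ) + 1) ^ 2 / (b - a)
            * Real.sqrt (∫ x in a..b, q.eval x * q.eval x) := by
          rw [hsq, Real.sqrt_mul (sq_nonneg _),
            Real.sqrt_sq (by positivity : (0:ℝ) ≤ 2 * ((p : ℝ) + 1) ^ 2 / (b - a))]
  -- assemble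
  have hBnn : (0:ℝ) ≤ Real.sqrt (∫ x in a..b, η x * η x) := Real.sqrt_nonneg _
  have main : |∫ x in a..b, f x * q.derivative.eval x * η x|
      ≤ L * (b - a) * (2 * ((p : ℝ) + 1) ^ 2 / (b - a)
          * Real.sqrt (∫ x in a..b, q.eval x * q.eval x)
          * Real.sqrt (∫ x in a..b, η x * η x)) := by
    rw [hsplit]
    calc |∫ x in a..b, (f x - f a) * q.derivative.eval x * η x|
        ≤ ∫ x in a..b, |(f x - f a) * q.derivative.eval x * η x| :=
          intervalIntegral.abs_integral_le_integral_abs hab'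
      _ ≤ ∫ x in a..b, L * (b - a) * (|q.derivative.eval x| * |η x|) := by
          apply intervalIntegral.integral_mono_on hab' hintabs (hintqe.const_mul _) hbound
      _ = L * (b - a) * ∫ x in a..b, |q.derivative.eval x| * |η x| :=
          intervalIntegral.integral_const_mul _ _
      _ ≤ L * (b - a) * (Real.sqrt (∫ x in a..b, q.derivative.eval x * q.derivative.eval x)
            * Real.sqrt (∫ x in a..b, η x * η x)) := by
          apply mul_le_mul_of_nonneg_left hcs (by positivity)
      _ ≤ L * (b - a) * (2 * ((p : ℝ) + 1) ^ 2 / (b - a)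
            * Real.sqrt (∫ x in a..b, q.eval x * q.eval x)
            * Real.sqrt (∫ x in a..b, η x * η x)) := by
          apply mul_le_mul_of_nonneg_left _ (by positivity)
          exact mul_le_mul_of_nonneg_right hmark hBnn
  have efinal : L * (b - a) * (2 * ((p : ℝ) + 1) ^ 2 / (b - a)
        * Real.sqrt (∫ x in a..b, q.eval x * q.eval x)
        * Real.sqrt (∫ x in a..b, η x * η x))
      = 2 * L * ((p : ℝ) + 1) ^ 2 * Real.sqrt (∫ x in a..b, q.eval x * q.eval x)
        * Real.sqrt (∫ x in a..b, η x * η x) := by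
    field_simp
  have eq1 : ∫ x in a..b, q.eval x * q.eval x = ∫ x in a..b, (q.eval x) ^ 2 :=
    intervalIntegral.integral_congr fun x _ => (sq (q.eval x)).symm
  have eq2 : ∫ x in a..b, η x * η x = ∫ x in a..b, (u x - P.eval x) ^ 2 :=
    intervalIntegral.integral_congr fun x _ => (sq (η x)).symm
  rw [efinal, eq1, eq2] at main
  exact main
end

section
/- Let N ≥ 1 and let 0 = x₀ < x₁ < ⋯ < x_N = 1 be a partition of [0,1]. Let b : ℝ → ℝ be continuously differentiable on [0,1] with b(x) > 0 for all x ∈ [0,1], let c : ℝ → ℝ be continuous on [0,1], and for each i = 0, …, N-1 let v_i : ℝ → ℝ be continuously differentiable on [x_i, x_{i+1}]. Then the one-dimensional upwind discontinuous Galerkin bilinear form evaluated on the piecewise function v = (v_i) satisfies the identity Σ_{i=0}^{N-1} ∫_{x_i}^{x_{i+1}} ( b(x) v_i'(x) + c(x) v_i(x) ) v_i(x) dx + Σ_{i=1}^{N-1} b(x_i) ( v_i(x_i) - v_{i-1}(x_i) ) v_i(x_i) + b(0) v₀(0)² = Σ_{i=0}^{N-1} ∫_{x_i}^{x_{i+1}}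 ( c(x) - b'(x)/2 ) v_i(x)² dx + (1/2) b(0) v₀(0)² + (1/2) b(1) v_{N-1}(1)² + Σ_{i=1}^{N-1} (1/2) b(x_i) ( v_i(x_i) - v_{i-1}(x_i) )². -/
lemma dg_elem (a a' : ℝ) (hlt : a < a') (hsub : Set.Icc a a' ⊆ Set.Icc (0:ℝ) 1)
    (b c w : ℝ → ℝ)
    (hb : ContDiffOn ℝ 1 b (Set.Icc (0:ℝ) 1))
    (hc : ContinuousOn c (Set.Icc (0:ℝ) 1))
    (hw : ContDiffOn ℝ 1 w (Set.Icc a a')) :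
    ∫ t in a..a', (b t * derivWithin w (Set.Icc a a') t + c t * w t) * w t
      = (∫ t in a..a', (c t - derivWithin b (Set.Icc (0:ℝ) 1) t / 2) * (w t) ^ 2)
        + (b a' * (w a') ^ 2 - b a * (w a) ^ 2) / 2 := by
  have huIcc : Set.uIcc a a' = Set.Icc a a' := Set.uIcc_of_le hlt.le
  have ha0 : (0:ℝ) ≤ a := (hsub (Set.left_mem_Icc.2 hlt.le)).1
  have ha1 : a' ≤ 1 := (hsub (Set.right_mem_Icc.2 hlt.le)).2
  set B' := derivWithin b (Set.Icc (0:ℝ) 1) with hB'def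
  set W' := derivWithin w (Set.Icc a a') with hW'def
  have hud01 : UniqueDiffOn ℝ (Set.Icc (0:ℝ) 1) := uniqueDiffOn_Icc one_pos
  have hudaa : UniqueDiffOn ℝ (Set.Icc a a') := uniqueDiffOn_Icc hlt
  have hbc : ContinuousOn b (Set.Icc a a') := hb.continuousOn.mono hsub
  have hB'c : ContinuousOn B' (Set.Icc a a') :=
    (hb.continuousOn_derivWithin hud01 le_rfl).mono hsub
  have hcc : ContinuousOn c (Set.Icc a a') := hc.mono hsub
  have hwc : ContinuousOn w (Set.Icc a a') := hw.continuousOn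
  have hW'c : ContinuousOn W' (Set.Icc a a') := hw.continuousOn_derivWithin hudaa le_rfl
  have hg : IntervalIntegrable (fun t => (b t * W' t + c t * w t) * w t) MeasureTheory.volume a a' := by
    apply ContinuousOn.intervalIntegrable; rw [huIcc]
    exact ((hbc.mul hW'c).add (hcc.mul hwc)).mul hwc
  have hh : IntervalIntegrable (fun t => (c t - B' t / 2) * (w t) ^ 2) MeasureTheory.volume a a' := by
    apply ContinuousOn.intervalIntegrable; rw [huIcc]
    exact (hcc.sub (hB'c.div_const 2)).mul (hwc.pow 2)
  have hf' : IntervalIntegrable (fun t => b t * (w t * W' t) + B' t / 2 * (w t) ^ 2) MeasureTheory.volume a a' := by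
    apply ContinuousOn.intervalIntegrable; rw [huIcc]
    exact (hbc.mul (hwc.mul hW'c)).add ((hB'c.div_const 2).mul (hwc.pow 2))
  have hFTC : ∫ t in a..a', (b t * (w t * W' t) + B' t / 2 * (w t) ^ 2)
      = b a' * (w a') ^ 2 / 2 - b a * (w a) ^ 2 / 2 := by
    have hFc : ContinuousOn (fun t => b t * (w t) ^ 2 / 2) (Set.Icc a a') :=
      (hbc.mul (hwc.pow 2)).div_const 2
    apply intervalIntegral.integral_eq_sub_of_hasDeriv_right_of_le hlt.le hFc _ hf'
    intro t ht
    have ht01 : t ∈ Set.Ioo (0:ℝ) 1 := ⟨lt_of_le_of_lt ha0 ht.1, lt_of_lt_of_le ht.2 ha1⟩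
    have hmem01 : Set.Icc (0:ℝ) 1 ∈ nhds t := Icc_mem_nhds ht01.1 ht01.2
    have hmemaa : Set.Icc a a' ∈ nhds t := Icc_mem_nhds ht.1 ht.2
    have hbd : HasDerivAt b (B' t) t := by
      have := ((hb.differentiableOn one_ne_zero) t ⟨ha0.trans ht.1.le, ht.2.le.trans ha1⟩).differentiableAt hmem01
      rw [hB'def, derivWithin_of_mem_nhds hmem01]
      exact this.hasDerivAt
    have hwd : HasDerivAt w (W' t) t := by
      have := ((hw.differentiableOn one_ne_zero) t ⟨ht.1.le, ht.2.le⟩).differentiableAt hmemaa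
      rw [hW'def, derivWithin_of_mem_nhds hmemaa]
      exact this.hasDerivAt
    have := ((hbd.mul (hwd.pow 2)).div_const 2).hasDerivWithinAt (s := Set.Ioi t)
    convert this using 1
    · funext s; simp only [Pi.mul_apply, Pi.pow_apply]
    · simp only [Pi.pow_apply]; norm_num; ring
  have key : (∫ t in a..a', (b t * W' t + c t * w t) * w t)
      - ∫ t in a..a', (c t - B' t / 2) * (w t) ^ 2
      = ∫ t in a..a', (b t * (w t * W' t) + B' t / 2 * (w t) ^ 2) := by
    rw [← intervalIntegral.integral_sub hg hh]
    apply intervalIntegral.integral_congr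
    intro t _
    ring
  have := key.trans hFTC
  linarith

lemma dg_alg (β L R : ℕ → ℝ) (N : ℕ) (hN : 1 ≤ N) :
    (∑ i ∈ Finset.range N, (β (i+1) * R i ^ 2 - β i * L i ^ 2) / 2)
      + (∑ i ∈ Finset.Ico 1 N, β i * (L i - R (i-1)) * L i) + β 0 * L 0 ^ 2
    = (1/2) * β 0 * L 0 ^ 2 + (1/2) * β N * R (N-1) ^ 2
      + ∑ i ∈ Finset.Ico 1 N, (1/2) * β i * (L i - R (i-1)) ^ 2 := by
  induction N, hN using Nat.le_induction with
  | base => simp; ring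
  | succ n hn ih =>
    rw [Finset.sum_range_succ, Finset.sum_Ico_succ_top (by omega), Finset.sum_Ico_succ_top (by omega)]
    rw [show n + 1 - 1 = n from by omega] at *
    linarith [ih]

/-- One-dimensional coercivity identity `B_n(v, v) = |||v|||²_dG` for the
upwind dG bilinear form, with strictly positive convection coefficient `b`:
for a partition `0 = x₀ < x₁ < ⋯ < x_N = 1` of `[0, 1]` and piecewise `C¹`
functions `v_i` on the elements `[x_i, x_{i+1}]`, the bilinear form evaluated
at `(v, v)` equals the squared dG norm of `v`. -/
theorem upwind_dG_coercivity_identity_1d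
    (N : ℕ) (hN : 1 ≤ N) (x : ℕ → ℝ)
    (hx0 : x 0 = 0) (hxN : x N = 1)
    (hxmono : ∀ i < N, x i < x (i + 1))
    (b c : ℝ → ℝ)
    (hb : ContDiffOn ℝ 1 b (Set.Icc (0 : ℝ) 1))
    (hbpos : ∀ t ∈ Set.Icc (0 : ℝ) 1, 0 < b t)
    (hc : ContinuousOn c (Set.Icc (0 : ℝ) 1))
    (v : ℕ → ℝ → ℝ)
    (hv : ∀ i < N, ContDiffOn ℝ 1 (v i) (Set.Icc (x i) (x (i + 1)))) :
    (∑ i ∈ Finset.range N, ∫ t in x i..x (i + 1),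
        (b t * derivWithin (v i) (Set.Icc (x i) (x (i + 1))) t + c t * v i t) * v i t)
      + (∑ i ∈ Finset.Ico 1 N,
          b (x i) * (v i (x i) - v (i - 1) (x i)) * v i (x i))
      + b 0 * (v 0 0) ^ 2
    = (∑ i ∈ Finset.range N, ∫ t in x i..x (i + 1),
        (c t - derivWithin b (Set.Icc (0 : ℝ) 1) t / 2) * (v i t) ^ 2)
      + (1 / 2) * b 0 * (v 0 0) ^ 2
      + (1 / 2) * b 1 * (v (N - 1) 1) ^ 2
      + (∑ i ∈ Finset.Ico 1 N,
          (1 / 2) * b (x i) * (v i (x i) - v (i - 1) (x i)) ^ 2) := by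
  -- monotonicity of the partition
  have hle : ∀ j, j ≤ N → ∀ i, i ≤ j → x i ≤ x j := by
    intro j
    induction j with
    | zero => intro _ i hi; rw [Nat.le_zero.mp hi]
    | succ n ihn =>
      intro hj i hi
      rcases eq_or_lt_of_le hi with h | h
      · rw [h]
      · exact le_trans (ihn (by omega) i (by omega)) (hxmono n (by omega)).le
  have hsub : ∀ i, i < N → Set.Icc (x i) (x (i+1)) ⊆ Set.Icc (0:ℝ) 1 := by
    intro i hi
    apply Set.Icc_subset_Icc
    · rw [← hx0]; exact hle i (by omega) 0 (by omega)
    · rw [← hxN]; exact hle N le_rfl (i+1) (by omega)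
  -- per-element integration by parts
  have hsum : (∑ i ∈ Finset.range N, ∫ t in x i..x (i + 1),
        (b t * derivWithin (v i) (Set.Icc (x i) (x (i + 1))) t + c t * v i t) * v i t)
      = (∑ i ∈ Finset.range N, ∫ t in x i..x (i + 1),
          (c t - derivWithin b (Set.Icc (0 : ℝ) 1) t / 2) * (v i t) ^ 2)
        + ∑ i ∈ Finset.range N,
            (b (x (i+1)) * (v i (x (i+1))) ^ 2 - b (x i) * (v i (x i)) ^ 2) / 2 := by
    rw [← Finset.sum_add_distrib]
    apply Finset.sum_congr rfl
    intro i hi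
    have hi' := Finset.mem_range.mp hi
    exact dg_elem (x i) (x (i+1)) (hxmono i hi') (hsub i hi') b c (v i) hb hc (hv i hi')
  rw [hsum]
  have halg := dg_alg (fun i => b (x i)) (fun i => v i (x i)) (fun i => v i (x (i+1))) N hN
  rw [show N - 1 + 1 = N from by omega, hxN, hx0] at halg
  have hJ : (∑ i ∈ Finset.Ico 1 N, b (x i) * (v i (x i) - v (i-1) (x (i-1+1))) * v i (x i))
      = ∑ i ∈ Finset.Ico 1 N, b (x i) * (v i (x i) - v (i-1) (x i)) * v i (x i) := by
    apply Finset.sum_congr rfl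
    intro i hi
    have h1 : 1 ≤ i := (Finset.mem_Ico.mp hi).1
    rw [show i - 1 + 1 = i from by omega]
  have hK : (∑ i ∈ Finset.Ico 1 N, (1/2) * b (x i) * (v i (x i) - v (i-1) (x (i-1+1))) ^ 2)
      = ∑ i ∈ Finset.Ico 1 N, (1/2) * b (x i) * (v i (x i) - v (i-1) (x i)) ^ 2 := by
    apply Finset.sum_congr rfl
    intro i hi
    have h1 : 1 ≤ i := (Finset.mem_Ico.mp hi).1
    rw [show i - 1 + 1 = i from by omega]
  rw [hJ, hK] at halg
  linarith [halg]
end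

section
/- Let N ≥ 1 and let 0 = x₀ < x₁ < ⋯ < x_N = 1 be a partition of [0,1]. Let b : ℝ → ℝ be continuously differentiable on [0,1] with b(x) > 0 for all x ∈ [0,1], let c : ℝ → ℝ be continuous on [0,1], and suppose there exists c_s > 0 with c(x) - b'(x)/2 ≥ c_s for all x ∈ [0,1]. Then for all functions v_i : ℝ → ℝ (i = 0, …, N-1) continuously differentiable on [x_i, x_{i+1}], one has Σ_{i=0}^{N-1} ∫_{x_i}^{x_{i+1}} ( b(x) v_i'(x) + c(x) v_i(x) ) v_i(x) dx + Σ_{i=1}^{N-1} b(x_i) ( v_i(x_i) - v_{i-1}(x_i) ) v_i(x_i) + b(0) v₀(0)² ≥ c_s Σ_{i=0}^{N-1} ∫_{x_i}^{x_{i+1}} v_i(x)² dx. -/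
open Set intervalIntegral MeasureTheory

lemma boundary_aux (p L R : ℕ → ℝ) :
    ∀ N, 1 ≤ N → (∀ i, i ≤ N → 0 < p i) →
      p N * R (N - 1) ^ 2 / 2 ≤
        (∑ i ∈ Finset.range N, (p (i + 1) * R i ^ 2 / 2 - p i * L i ^ 2 / 2))
        + (∑ i ∈ Finset.Ico 1 N, p i * (L i - R (i - 1)) * L i) + p 0 * L 0 ^ 2 := by
  intro N
  induction N with
  | zero => omega
  | succ n ih =>
    intro _ hp
    rcases Nat.eq_or_lt_of_le (Nat.one_le_iff_ne_zero.mpr (Nat.succ_ne_zero n)) with h1 | h1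
    · -- n + 1 = 1
      have hn : n = 0 := by omega
      subst hn
      have := hp 0 (by omega)
      norm_num [Finset.sum_range_one]
      nlinarith [sq_nonneg (L 0)]
    · have hn1 : 1 ≤ n := by omega
      have ihn := ih hn1 (fun i hi => hp i (by omega))
      rw [Finset.sum_range_succ, Finset.sum_Ico_succ_top hn1]
      have hpn := hp n (by omega)
      have hnn : n + 1 - 1 = n := rfl
      rw [hnn]
      nlinarith [mul_nonneg hpn.le (sq_nonneg (L n - R (n - 1)))]

lemma element_estimate (a d : ℝ) (had : a < d) (hS : Set.Icc a d ⊆ Set.Icc (0:ℝ) 1)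
    (b c : ℝ → ℝ) (hb : ContDiffOn ℝ 1 b (Set.Icc (0:ℝ) 1))
    (hc : ContinuousOn c (Set.Icc (0:ℝ) 1))
    (cs : ℝ)
    (hwp : ∀ t ∈ Set.Icc (0:ℝ) 1, cs ≤ c t - derivWithin b (Set.Icc (0:ℝ) 1) t / 2)
    (w : ℝ → ℝ) (hw : ContDiffOn ℝ 1 w (Set.Icc a d)) :
    cs * (∫ t in a..d, w t ^ 2) + (b d * w d ^ 2 / 2 - b a * w a ^ 2 / 2)
      ≤ ∫ t in a..d, (b t * derivWithin w (Set.Icc a d) t + c t * w t) * w t := by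
  set B' : ℝ → ℝ := derivWithin b (Set.Icc (0:ℝ) 1) with hB'
  set V' : ℝ → ℝ := derivWithin w (Set.Icc a d) with hV'
  have hud : UniqueDiffOn ℝ (Set.Icc a d) := uniqueDiffOn_Icc had
  have hud01 : UniqueDiffOn ℝ (Set.Icc (0:ℝ) 1) := uniqueDiffOn_Icc one_pos
  have hbd : DifferentiableOn ℝ b (Set.Icc (0:ℝ) 1) := hb.differentiableOn one_ne_zero
  have hwd : DifferentiableOn ℝ w (Set.Icc a d) := hw.differentiableOn one_ne_zero
  have hbc : ContinuousOn b (Set.Icc a d) := hb.continuousOn.mono hS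
  have hwc : ContinuousOn w (Set.Icc a d) := hw.continuousOn
  have hB'c : ContinuousOn B' (Set.Icc a d) :=
    (hb.continuousOn_derivWithin hud01 le_rfl).mono hS
  have hV'c : ContinuousOn V' (Set.Icc a d) :=
    hw.continuousOn_derivWithin hud le_rfl
  have hcc : ContinuousOn c (Set.Icc a d) := hc.mono hS
  -- the auxiliary function g = b w² / 2 and its derivative
  set g' : ℝ → ℝ := fun t => (B' t * w t ^ 2 + b t * (2 * w t ^ 1 * V' t)) / 2 with hg'
  have hg'c : ContinuousOn g' (Set.Icc a d) := by
    apply ContinuousOn.div_const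
    exact (hB'c.mul (hwc.pow 2)).add (hbc.mul ((continuousOn_const.mul (hwc.pow 1)).mul hV'c))
  have hIoosub : Set.Ioo a d ⊆ Set.Icc (0:ℝ) 1 := fun t ht => hS (Set.Ioo_subset_Icc_self ht)
  have hgderiv : ∀ t ∈ Set.Ioo a d, HasDerivAt (fun t => b t * w t ^ 2 / 2) (g' t) t := by
    intro t ht
    have hmem : Set.Icc a d ∈ nhds t := Icc_mem_nhds ht.1 ht.2
    have hb' : HasDerivAt b (B' t) t := by
      have := (hbd t (hIoosub ht)).hasDerivWithinAt
      exact (this.mono hS).hasDerivAt hmem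
    have hw' : HasDerivAt w (V' t) t :=
      ((hwd t (Set.Ioo_subset_Icc_self ht)).hasDerivWithinAt).hasDerivAt hmem
    exact (hb'.mul (hw'.pow 2)).div_const 2
  have hint1 : IntervalIntegrable g' volume a d := by
    apply ContinuousOn.intervalIntegrable
    rwa [Set.uIcc_of_le had.le]
  have hint2 : IntervalIntegrable (fun t => (c t - B' t / 2) * w t ^ 2) volume a d := by
    apply ContinuousOn.intervalIntegrable
    rw [Set.uIcc_of_le had.le]
    exact ((hcc.sub (hB'c.div_const 2)).mul (hwc.pow 2))
  have hint3 : IntervalIntegrable (fun t => cs * w t ^ 2) volume a d := by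
    apply ContinuousOn.intervalIntegrable
    rw [Set.uIcc_of_le had.le]
    exact continuousOn_const.mul (hwc.pow 2)
  -- split the integral
  have hsplit : (∫ t in a..d, (b t * V' t + c t * w t) * w t)
      = (∫ t in a..d, g' t) + ∫ t in a..d, (c t - B' t / 2) * w t ^ 2 := by
    rw [← intervalIntegral.integral_add hint1 hint2]
    apply intervalIntegral.integral_congr
    intro t ht
    simp only [hg']
    ring
  have hftc : (∫ t in a..d, g' t) = b d * w d ^ 2 / 2 - b a * w a ^ 2 / 2 := by
    exact intervalIntegral.integral_eq_sub_of_hasDerivAt_of_le had.le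
      ((hbc.mul (hwc.pow 2)).div_const 2) hgderiv hint1
  have hmono : (∫ t in a..d, cs * w t ^ 2) ≤ ∫ t in a..d, (c t - B' t / 2) * w t ^ 2 := by
    apply intervalIntegral.integral_mono_on had.le hint3 hint2
    intro t ht
    exact mul_le_mul_of_nonneg_right (hwp t (hS ht)) (sq_nonneg _)
  have hconst : (∫ t in a..d, cs * w t ^ 2) = cs * ∫ t in a..d, w t ^ 2 :=
    intervalIntegral.integral_const_mul cs _
  rw [hsplit, hftc]
  linarith [hmono, hconst ▸ hmono]

/-- One-dimensional coercivity of the upwind dG bilinear form under the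
well-posedness assumption `c - b'/2 ≥ c_s > 0`: for a partition
`0 = x₀ < x₁ < ⋯ < x_N = 1` of `[0, 1]` and piecewise `C¹` functions `v_i` on
the elements `[x_i, x_{i+1}]`, the bilinear form at `(v, v)` dominates
`c_s ‖v‖²_{L²}`. -/
theorem upwind_dG_coercivity_1d
    (N : ℕ) (hN : 1 ≤ N) (x : ℕ → ℝ)
    (hx0 : x 0 = 0) (hxN : x N = 1)
    (hxmono : ∀ i < N, x i < x (i + 1))
    (b c : ℝ → ℝ)
    (hb : ContDiffOn ℝ 1 b (Set.Icc (0 : ℝ) 1))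
    (hbpos : ∀ t ∈ Set.Icc (0 : ℝ) 1, 0 < b t)
    (hc : ContinuousOn c (Set.Icc (0 : ℝ) 1))
    (cs : ℝ) (hcs : 0 < cs)
    (hwp : ∀ t ∈ Set.Icc (0 : ℝ) 1,
      cs ≤ c t - derivWithin b (Set.Icc (0 : ℝ) 1) t / 2)
    (v : ℕ → ℝ → ℝ)
    (hv : ∀ i < N, ContDiffOn ℝ 1 (v i) (Set.Icc (x i) (x (i + 1)))) :
    cs * ∑ i ∈ Finset.range N, (∫ t in x i..x (i + 1), (v i t) ^ 2) ≤
      (∑ i ∈ Finset.range N, ∫ t in x i..x (i + 1),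
          (b t * derivWithin (v i) (Set.Icc (x i) (x (i + 1))) t + c t * v i t) * v i t)
        + (∑ i ∈ Finset.Ico 1 N,
            b (x i) * (v i (x i) - v (i - 1) (x i)) * v i (x i))
        + b 0 * (v 0 0) ^ 2 := by
  -- monotonicity of the partition
  have hmono : ∀ j, j ≤ N → ∀ i, i ≤ j → x i ≤ x j := by
    intro j
    induction j with
    | zero => intro _ i hi; rw [Nat.le_zero.mp hi]
    | succ n ihn =>
      intro hn i hi
      rcases Nat.lt_or_ge i (n + 1) with h | h
      · exact le_trans (ihn (by omega) i (by omega)) (hxmono n (by omega)).le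
      · have : i = n + 1 := by omega
        rw [this]
  have hmem : ∀ i, i ≤ N → x i ∈ Set.Icc (0:ℝ) 1 := by
    intro i hi
    constructor
    · rw [← hx0]; exact hmono i hi 0 (Nat.zero_le i)
    · rw [← hxN]; exact hmono N le_rfl i hi
  have hsub : ∀ i, i < N → Set.Icc (x i) (x (i + 1)) ⊆ Set.Icc (0:ℝ) 1 := by
    intro i hi t ht
    exact ⟨le_trans (hmem i (by omega)).1 ht.1, le_trans ht.2 (hmem (i + 1) (by omega)).2⟩
  have key : ∀ i ∈ Finset.range N,
      cs * (∫ t in x i..x (i + 1), v i t ^ 2)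
        + (b (x (i + 1)) * v i (x (i + 1)) ^ 2 / 2 - b (x i) * v i (x i) ^ 2 / 2)
      ≤ ∫ t in x i..x (i + 1),
          (b t * derivWithin (v i) (Set.Icc (x i) (x (i + 1))) t + c t * v i t) * v i t := by
    intro i hi
    have hi' := Finset.mem_range.mp hi
    exact element_estimate (x i) (x (i + 1)) (hxmono i hi') (hsub i hi') b c hb hc cs hwp
      (v i) (hv i hi')
  have hsum := Finset.sum_le_sum key
  rw [Finset.sum_add_distrib, ← Finset.mul_sum] at hsum
  have hp : ∀ i, i ≤ N → 0 < b (x i) := fun i hi => hbpos (x i) (hmem i hi)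
  have bnd := boundary_aux (fun i => b (x i)) (fun i => v i (x i)) (fun i => v i (x (i + 1)))
    N hN hp
  have hpN : 0 < b (x N) := hp N le_rfl
  have hJ : (∑ i ∈ Finset.Ico 1 N,
        b (x i) * (v i (x i) - v (i - 1) (x (i - 1 + 1))) * v i (x i))
      = ∑ i ∈ Finset.Ico 1 N, b (x i) * (v i (x i) - v (i - 1) (x i)) * v i (x i) := by
    apply Finset.sum_congr rfl
    intro i hi
    have h1 : i - 1 + 1 = i := Nat.succ_pred_eq_of_pos (Finset.mem_Ico.mp hi).1
    rw [h1]
  rw [hJ] at bnd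
  have h0 : b 0 * v 0 0 ^ 2 = b (x 0) * v 0 (x 0) ^ 2 := by rw [hx0]
  rw [h0]
  nlinarith [sq_nonneg (v (N - 1) (x (N - 1 + 1)))]
end
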